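/- arXiv:1809.06961 — 6 statements merged into one kernel-verified Lean document; each statement's English description precedes it below -/
import Mathlib

section
/- Suppose 0 < β_U < 2. Then there is no pair of C² functions (φ_L, φ_U) with φ_L: [0,∞) → (0,1) solving -φ_L'' + β_L φ_L' = φ_L - φ_L², φ_U: (-∞,0] → (0,1) solving -φ_U'' + β_U φ_U' = φ_U - φ_U², satisfying φ_L(0) = φ_U(0) = α ∈ (0,1) and a_U φ_U'(0) = a_L φ_L'(0). -/
open Real Filter

/-- A positive stationary solution of the Fisher-KPP problem on a two-branch river
network: `phiL` on the lower branch, `phiU` on the upper branch, with continuity and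
Kirchhoff conditions at the junction `x = 0`. -/
def IsTwoBranchStatSol (bL bU aL aU a : ℝ) (phiL phiU : ℝ → ℝ) : Prop :=
  ContDiff ℝ 2 phiL ∧ ContDiff ℝ 2 phiU ∧
  (∀ x, 0 < x → -deriv (deriv phiL) x + bL * deriv phiL x = phiL x - phiL x ^ 2) ∧
  (∀ x, 0 < x → 0 < phiL x ∧ phiL x < 1) ∧
  (∀ x, x < 0 → -deriv (deriv phiU) x + bU * deriv phiU x = phiU x - phiU x ^ 2) ∧
  (∀ x, x < 0 → 0 < phiU x ∧ phiU x < 1) ∧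
  phiL 0 = a ∧ phiU 0 = a ∧ aU * deriv phiU 0 = aL * deriv phiL 0

section Aux

open Set


private lemma basics {φ : ℝ → ℝ} (hC : ContDiff ℝ 2 φ) :
    Differentiable ℝ φ ∧ Differentiable ℝ (deriv φ) ∧ Continuous (deriv φ) := by
  have h := contDiff_succ_iff_deriv.mp (show ContDiff ℝ (1+1) φ by exact_mod_cast hC)
  exact ⟨h.1, h.2.2.differentiable one_ne_zero, h.2.2.continuous⟩

private lemma expMul_hasDerivAt (c x : ℝ) :
    HasDerivAt (fun y : ℝ => Real.exp (c * y)) (c * Real.exp (c * x)) x := by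
  have h : HasDerivAt (fun y : ℝ => c * y) c x := by
    simpa using (hasDerivAt_id x).const_mul c
  simpa [mul_comm] using h.exp

private lemma key_backward {F : ℝ → ℝ} (hF : Differentiable ℝ F) {b : ℝ}
    (hd : ∀ x < b, deriv F x ≤ 0) : ∀ x ≤ b, F b ≤ F x := by
  intro x hx
  have h : AntitoneOn F (Set.Iic b) :=
    antitoneOn_of_deriv_nonpos (convex_Iic b) hF.continuous.continuousOn
      hF.differentiableOn (by rw [interior_Iic]; exact fun y hy => hd y hy)
  exact h (Set.mem_Iic.mpr hx) (Set.mem_Iic.mpr le_rfl) hx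

set_option maxHeartbeats 1000000 in
/-- Upper branch: if `0 < β < 2` then any solution on `(-∞,0)` staying in `(0,1)`
has nonpositive derivative at `0`. -/
private lemma upper_deriv_nonpos (β : ℝ) (hβ : 0 < β) (hβ2 : β < 2) (φ : ℝ → ℝ)
    (hC : ContDiff ℝ 2 φ)
    (hode : ∀ x, x < 0 → -deriv (deriv φ) x + β * deriv φ x = φ x - φ x ^ 2)
    (hpos : ∀ x, x < 0 → 0 < φ x ∧ φ x < 1) :
    deriv φ 0 ≤ 0 := by
  by_contra hq
  push_neg at hq
  obtain ⟨hd1, hd2, hc1⟩ := basics hC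
  -- g = e^{-βx} φ' is strictly decreasing on (-∞,0]
  set g : ℝ → ℝ := fun x => Real.exp ((-β) * x) * deriv φ x with hg_def
  clear_value g
  have hgd : ∀ x, HasDerivAt g
      (Real.exp ((-β) * x) * (deriv (deriv φ) x - β * deriv φ x)) x := by
    intro x
    rw [hg_def]
    have h := (expMul_hasDerivAt (-β) x).fun_mul (hd2 x).hasDerivAt
    refine h.congr_deriv ?_
    ring
  have hganti : StrictAntiOn g (Set.Iic 0) := by
    apply strictAntiOn_of_deriv_neg (convex_Iic 0)
    · rw [hg_def]
      exact (((Real.continuous_exp.comp (continuous_const.mul continuous_id)).mul hc1)).continuousOn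
    · rw [interior_Iic]
      intro x hx
      rw [(hgd x).deriv]
      have h := hode x hx
      have hp := hpos x hx
      have hD : deriv (deriv φ) x - β * deriv φ x < 0 := by nlinarith [hp.1, hp.2]
      exact mul_neg_of_pos_of_neg (Real.exp_pos _) hD
  -- φ' > 0 on (-∞, 0)
  have hφ' : ∀ x, x < 0 → 0 < deriv φ x := by
    intro x hx
    have h1 : g 0 < g x := hganti (Set.mem_Iic.mpr hx.le) (Set.mem_Iic.mpr le_rfl) hx
    have hg0 : g 0 = deriv φ 0 := by rw [hg_def]; simp
    have hgx : g x = Real.exp ((-β) * x) * deriv φ x := by rw [hg_def]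
    have h2 : 0 < Real.exp ((-β) * x) * deriv φ x := by
      rw [hg0] at h1; rw [← hgx]; exact lt_trans hq h1
    by_contra hcon
    push_neg at hcon
    nlinarith [mul_nonpos_of_nonneg_of_nonpos (Real.exp_pos ((-β) * x)).le hcon]
  -- φ is monotone (backward comparisons)
  have hmonoφ : ∀ b ≤ (-1:ℝ), ∀ x ≤ b, φ x ≤ φ b := by
    intro b hb x hx
    have h := key_backward (F := fun y => -φ y) hd1.neg (b := b) ?_ x hx
    · have h' : -φ b ≤ -φ x := h
      linarith
    · intro y hy
      rw [deriv.fun_neg]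
      have := hφ' y (by linarith)
      linarith
  set δ : ℝ := 1 - β ^ 2 / 4 with hδ_def
  clear_value δ
  have hδ : 0 < δ := by rw [hδ_def]; nlinarith
  by_cases hcase : ∃ x2, x2 ≤ (-1:ℝ) ∧ φ x2 < δ / 2
  · -- case (ii) : φ gets small backward; concavity of w = e^{-βx/2} φ kills it
    obtain ⟨x2, hx2, hφx2⟩ := hcase
    have hx2neg : x2 < 0 := by linarith
    have hsmall : ∀ x ≤ x2, φ x < δ / 2 := by
      intro x hx
      exact lt_of_le_of_lt (hmonoφ x2 hx2 x hx) hφx2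
    set w : ℝ → ℝ := fun x => Real.exp ((-(β/2)) * x) * φ x with hw_def
    clear_value w
    set w1 : ℝ → ℝ := fun x =>
      Real.exp ((-(β/2)) * x) * (deriv φ x - β/2 * φ x) with hw1_def
    clear_value w1
    have hwpos : ∀ x, x < 0 → 0 < w x := by
      intro x hx
      rw [hw_def]
      exact mul_pos (Real.exp_pos _) (hpos x hx).1
    have hwd : ∀ x, HasDerivAt w (w1 x) x := by
      intro x
      simp only [hw_def, hw1_def]
      have h := (expMul_hasDerivAt (-(β/2)) x).fun_mul (hd1 x).hasDerivAt
      refine h.congr_deriv ?_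
      ring
    have hwdiff : Differentiable ℝ w := fun x => (hwd x).differentiableAt
    have hw1d : ∀ x, HasDerivAt w1
        (Real.exp ((-(β/2)) * x) *
          (deriv (deriv φ) x - β * deriv φ x + β ^ 2 / 4 * φ x)) x := by
      intro x
      simp only [hw1_def]
      have h := (expMul_hasDerivAt (-(β/2)) x).fun_mul
        ((hd2 x).hasDerivAt.fun_sub ((hd1 x).hasDerivAt.const_mul (β/2)))
      refine h.congr_deriv ?_
      ring
    have hw1diff : Differentiable ℝ w1 := fun x => (hw1d x).differentiableAt
    have hw1deriv : ∀ x, x < 0 → deriv w1 x = w x * (φ x - δ) := by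
      intro x hx
      rw [(hw1d x).deriv]
      have h := hode x hx
      simp only [hw_def, hδ_def]
      linear_combination (-(Real.exp ((-(β/2)) * x))) * h
    -- (a) w1 ≤ 0 on (-∞, x2]
    have ha : ∀ x ≤ x2, w1 x ≤ 0 := by
      intro x3 hx3
      by_contra hw3
      push_neg at hw3
      have hge : ∀ x ≤ x3, w1 x3 ≤ w1 x := by
        apply key_backward hw1diff
        intro x hx
        have hx0 : x < 0 := by linarith
        rw [hw1deriv x hx0]
        have h1 := hwpos x hx0
        have h2 := hsmall x (by linarith)
        have h3 : φ x - δ ≤ 0 := by linarith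
        exact mul_nonpos_of_nonneg_of_nonpos h1.le h3
      set k : ℝ → ℝ := fun x => w1 x3 * x - w x with hk_def
      clear_value k
      have hkd : ∀ x, HasDerivAt k (w1 x3 - w1 x) x := by
        intro x
        rw [hk_def]
        have h := ((hasDerivAt_id x).const_mul (w1 x3)).fun_sub (hwd x)
        refine h.congr_deriv ?_
        ring
      have hkb : ∀ x ≤ x3, k x3 ≤ k x := by
        apply key_backward (fun x => (hkd x).differentiableAt)
        intro x hx
        rw [(hkd x).deriv]
        have := hge x hx.le
        linarith
      have hwx3 : 0 < w x3 := hwpos x3 (by linarith)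
      have hquot : 0 < w x3 / w1 x3 := div_pos hwx3 hw3
      have h1 := hkb (x3 - w x3 / w1 x3 - 1) (by linarith)
      simp only [hk_def] at h1
      have h2 : w1 x3 * (w x3 / w1 x3) = w x3 := mul_div_cancel₀ _ (ne_of_gt hw3)
      have h2' : w1 x3 * (x3 - w x3 / w1 x3 - 1)
          = w1 x3 * x3 - w1 x3 * (w x3 / w1 x3) - w1 x3 := by ring
      have h3 : 0 < w (x3 - w x3 / w1 x3 - 1) := hwpos _ (by linarith)
      rw [h2', h2] at h1
      linarith
    -- (b) w ≥ w x2 > 0 backward, so deriv w1 ≤ -c0, contradiction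
    have hW : ∀ x ≤ x2, w x2 ≤ w x := by
      apply key_backward hwdiff
      intro x hx
      rw [(hwd x).deriv]
      exact ha x hx.le
    have hWpos : 0 < w x2 := hwpos x2 hx2neg
    set c0 : ℝ := δ / 2 * w x2 with hc0_def
    clear_value c0
    have hc0 : 0 < c0 := by rw [hc0_def]; exact mul_pos (by linarith) hWpos
    set p : ℝ → ℝ := fun x => w1 x + c0 * x with hp_def
    clear_value p
    have hpd : ∀ x, HasDerivAt p (deriv w1 x + c0) x := by
      intro x
      rw [hp_def]
      exact ((hw1diff x).hasDerivAt).add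
        (by simpa using (hasDerivAt_id x).const_mul c0)
    have hpb : ∀ x ≤ x2, p x2 ≤ p x := by
      apply key_backward (fun x => (hpd x).differentiableAt)
      intro x hx
      rw [(hpd x).deriv]
      have hx0 : x < 0 := by linarith
      rw [hw1deriv x hx0]
      have h1 := hW x hx.le
      have h2 := hsmall x hx.le
      have h3 := hwpos x hx0
      have h4 : w x * (φ x - δ) ≤ w x * (-(δ/2)) := by nlinarith
      have h5 : w x * (-(δ/2)) ≤ w x2 * (-(δ/2)) := by nlinarith
      rw [hc0_def]
      nlinarith
    have hw1x2 : w1 x2 ≤ 0 := ha x2 le_rfl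
    have hquot : 0 ≤ (1 - w1 x2) / c0 := div_nonneg (by linarith) hc0.le
    have h1 := hpb (x2 - (1 - w1 x2) / c0) (by linarith)
    simp only [hp_def] at h1
    have h2 : c0 * ((1 - w1 x2) / c0) = 1 - w1 x2 := mul_div_cancel₀ _ (ne_of_gt hc0)
    have h2' : c0 * (x2 - (1 - w1 x2) / c0) = c0 * x2 - c0 * ((1 - w1 x2) / c0) := by
      ring
    rw [h2', h2] at h1
    have h3 : w1 (x2 - (1 - w1 x2) / c0) ≤ 0 := ha _ (by linarith)
    linarith
  · -- case (i) : φ ≥ δ/2 backward; quantitative growth of φ' kills it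
    push_neg at hcase
    have hM1 : φ (-1) < 1 := (hpos (-1) (by norm_num)).2
    have hMle : ∀ x ≤ (-1:ℝ), φ x ≤ φ (-1) := fun x hx => hmonoφ (-1) le_rfl x hx
    set c1 : ℝ := δ / 2 * (1 - φ (-1)) with hc1_def
    clear_value c1
    have hc1 : 0 < c1 := by
      rw [hc1_def]; exact mul_pos (by linarith) (by linarith)
    have hfge : ∀ x ≤ (-1:ℝ), c1 ≤ φ x - φ x ^ 2 := by
      intro x hx
      have h1 := hcase x hx
      have h2 := hMle x hx
      have h3 : 0 ≤ (φ x - δ / 2) * (1 - φ (-1)) :=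
        mul_nonneg (by linarith) (by linarith)
      have h4 : 0 ≤ φ x * (φ (-1) - φ x) :=
        mul_nonneg (by linarith) (by linarith)
      rw [hc1_def]
      nlinarith
    set G : ℝ → ℝ := fun x => Real.exp ((-β) * x) * (deriv φ x - c1 / β) with hG_def
    clear_value G
    have hGd : ∀ x, HasDerivAt G
        (Real.exp ((-β) * x) * (deriv (deriv φ) x - β * deriv φ x + c1)) x := by
      intro x
      rw [hG_def]
      have h := (expMul_hasDerivAt (-β) x).fun_mul
        ((hd2 x).hasDerivAt.fun_sub (hasDerivAt_const x (c1 / β)))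
      refine h.congr_deriv ?_
      field_simp
      ring
    have hGb : ∀ x ≤ (-1:ℝ), G (-1) ≤ G x := by
      apply key_backward (fun x => (hGd x).differentiableAt)
      intro x hx
      rw [(hGd x).deriv]
      have h := hode x (by linarith)
      have h2 := hfge x hx.le
      have h3 : deriv (deriv φ) x - β * deriv φ x + c1 ≤ 0 := by linarith
      exact mul_nonpos_of_nonneg_of_nonpos (Real.exp_pos _).le h3
    set K0 : ℝ := G (-1) with hK0_def
    clear_value K0
    set t : ℝ := c1 / (β * (|K0| + 1)) with ht_def
    clear_value t
    have htpos : 0 < t := by rw [ht_def]; exact div_pos hc1 (by positivity)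
    set x4 : ℝ := min (-1 : ℝ) (Real.log t / β) with hx4_def
    clear_value x4
    have hx4le : x4 ≤ -1 := by rw [hx4_def]; exact min_le_left _ _
    have hx4neg : x4 < 0 := by linarith
    have hφ'ge : ∀ x ≤ x4, t ≤ deriv φ x := by
      intro x hx
      have hx1 : x ≤ -1 := le_trans hx hx4le
      have h1 : K0 ≤ Real.exp (-(β * x)) * (deriv φ x - c1 / β) := by
        have h := hGb x hx1
        rw [hG_def] at h
        simpa using h
      have he : 0 < Real.exp (β * x) := Real.exp_pos _
      have hee : Real.exp (β * x) * Real.exp (-(β * x)) = 1 := by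
        rw [← Real.exp_add]
        norm_num
      have hebound : Real.exp (β * x) ≤ t := by
        have hb2 : β * x4 ≤ Real.log t := by
          have hmin : x4 ≤ Real.log t / β := by rw [hx4_def]; exact min_le_right _ _
          have := mul_le_mul_of_nonneg_left hmin hβ.le
          calc β * x4 ≤ β * (Real.log t / β) := this
            _ = Real.log t := by field_simp
        have hb1 : β * x ≤ β * x4 := mul_le_mul_of_nonneg_left hx hβ.le
        calc Real.exp (β * x) ≤ Real.exp (Real.log t) :=
              Real.exp_le_exp.mpr (by linarith)
          _ = t := Real.exp_log htpos
      have h2 : K0 * Real.exp (β * x) ≤ deriv φ x - c1 / β := by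
        have h := mul_le_mul_of_nonneg_left h1 he.le
        rw [← mul_assoc, hee, one_mul, mul_comm (Real.exp (β * x)) K0] at h
        exact h
      have h4 : -|K0| * t ≤ K0 * Real.exp (β * x) := by
        nlinarith [abs_nonneg K0, neg_abs_le K0,
          mul_nonneg (by linarith [neg_abs_le K0] : (0:ℝ) ≤ K0 + |K0|) he.le,
          mul_nonneg (abs_nonneg K0) (by linarith : (0:ℝ) ≤ t - Real.exp (β * x))]
      have hkey : c1 / β = t * (|K0| + 1) := by
        rw [ht_def]
        field_simp
      nlinarith [h2, h4, abs_nonneg K0]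
    -- linear growth backward forces φ negative
    set r : ℝ → ℝ := fun x => t * x - φ x with hr_def
    clear_value r
    have hrd : ∀ x, HasDerivAt r (t - deriv φ x) x := by
      intro x
      rw [hr_def]
      have h := ((hasDerivAt_id x).const_mul t).fun_sub (hd1 x).hasDerivAt
      refine h.congr_deriv ?_
      ring
    have hrb : ∀ x ≤ x4, r x4 ≤ r x := by
      apply key_backward (fun x => (hrd x).differentiableAt)
      intro x hx
      rw [(hrd x).deriv]
      have := hφ'ge x hx.le
      linarith
    have hφx4 : 0 < φ x4 := (hpos x4 hx4neg).1
    have hquot : 0 < φ x4 / t := div_pos hφx4 htpos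
    have h1 := hrb (x4 - φ x4 / t - 1) (by linarith)
    simp only [hr_def] at h1
    have h2 : t * (φ x4 / t) = φ x4 := mul_div_cancel₀ _ (ne_of_gt htpos)
    have h2' : t * (x4 - φ x4 / t - 1) = t * x4 - t * (φ x4 / t) - t := by ring
    rw [h2', h2] at h1
    have h3 : 0 < φ (x4 - φ x4 / t - 1) := (hpos _ (by linarith)).1
    linarith


private lemma key_forward {F : ℝ → ℝ} (hF : Differentiable ℝ F) {b : ℝ}
    (hd : ∀ x, b < x → deriv F x ≤ 0) : ∀ x, b ≤ x → F x ≤ F b := by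
  intro x hx
  have h : AntitoneOn F (Set.Ici b) :=
    antitoneOn_of_deriv_nonpos (convex_Ici b) hF.continuous.continuousOn
      hF.differentiableOn (by rw [interior_Ici]; exact fun y hy => hd y hy)
  exact h (Set.mem_Ici.mpr le_rfl) (Set.mem_Ici.mpr hx) hx

/-- Lower branch: a solution on `(0,∞)` staying in `(0,1)` cannot have
`deriv φ 0 ≤ 0`. -/
private lemma lower_impossible (β : ℝ) (hβ : 0 < β) (φ : ℝ → ℝ) (hC : ContDiff ℝ 2 φ)
    (hode : ∀ x, 0 < x → -deriv (deriv φ) x + β * deriv φ x = φ x - φ x ^ 2)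
    (hpos : ∀ x, 0 < x → 0 < φ x ∧ φ x < 1)
    (hq : deriv φ 0 ≤ 0) : False := by
  obtain ⟨hd1, hd2, hc1⟩ := basics hC
  set g : ℝ → ℝ := fun x => Real.exp ((-β) * x) * deriv φ x with hg_def
  have hgd : ∀ x, HasDerivAt g
      (Real.exp ((-β) * x) * (deriv (deriv φ) x - β * deriv φ x)) x := by
    intro x
    have h := (expMul_hasDerivAt (-β) x).fun_mul (hd2 x).hasDerivAt
    refine h.congr_deriv ?_
    ring
  -- g is strictly decreasing on [0, ∞)
  have hganti : StrictAntiOn g (Set.Ici 0) := by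
    apply strictAntiOn_of_deriv_neg (convex_Ici 0)
    · exact (((Real.continuous_exp.comp (continuous_const.mul continuous_id)).mul hc1)).continuousOn
    · rw [interior_Ici]
      intro x hx
      rw [(hgd x).deriv]
      have h := hode x hx
      have hp := hpos x hx
      have he := Real.exp_pos ((-β) * x)
      have hD : deriv (deriv φ) x - β * deriv φ x < 0 := by nlinarith [hp.1, hp.2]
      exact mul_neg_of_pos_of_neg he hD
  have h10 : g 1 < g 0 := hganti (Set.mem_Ici.mpr le_rfl) (Set.mem_Ici.mpr zero_le_one) zero_lt_one
  have hg0 : g 0 = deriv φ 0 := by simp [hg_def]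
  have hg1 : g 1 < 0 := by rw [hg0] at h10; linarith
  -- for x ≥ 1, deriv φ x ≤ g 1
  have hder : ∀ x, 1 ≤ x → deriv φ x ≤ g 1 := by
    intro x hx
    have hgx : g x ≤ g 1 := by
      rcases eq_or_lt_of_le hx with h | h
      · rw [← h]
      · exact (hganti (Set.mem_Ici.mpr zero_le_one) (Set.mem_Ici.mpr (by linarith)) h).le
    have he : 0 < Real.exp ((-β) * x) := Real.exp_pos _
    have hgx' : Real.exp ((-β) * x) * deriv φ x ≤ g 1 := hgx
    have hd0 : deriv φ x < 0 := by
      by_contra hcon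
      push_neg at hcon
      nlinarith [mul_nonneg he.le hcon]
    have he1 : Real.exp ((-β) * x) ≤ 1 := by
      rw [← Real.exp_zero]
      exact Real.exp_le_exp.mpr (by nlinarith)
    nlinarith [mul_nonneg (neg_nonneg.mpr hd0.le) (sub_nonneg.mpr he1)]
  set m : ℝ := -(g 1) with hm_def
  have hm : 0 < m := by linarith
  -- h(x) = φ x + m x is antitone on [1, ∞)
  set h : ℝ → ℝ := fun x => φ x + m * x with hh_def
  have hhdiff : Differentiable ℝ h := hd1.add ((differentiable_id.const_mul m))
  have hhder : ∀ x, (1:ℝ) < x → deriv h x ≤ 0 := by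
    intro x hx
    have hx' : HasDerivAt h (deriv φ x + m) x :=
      (hd1 x).hasDerivAt.add (by simpa using (hasDerivAt_id x).const_mul m)
    rw [hx'.deriv]
    have := hder x hx.le
    linarith
  have hkf := key_forward hhdiff hhder
  set X : ℝ := φ 1 / m + 2 with hX_def
  have hphione : 0 < φ 1 := (hpos 1 one_pos).1
  have hdm : 0 < φ 1 / m := div_pos hphione hm
  have hX1 : (1:ℝ) ≤ X := by rw [hX_def]; linarith
  have h1 := hkf X hX1
  have h2 : m * X = φ 1 + 2 * m := by
    rw [hX_def]
    field_simp
  have h3 : 0 < φ X := (hpos X (by linarith)).1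
  simp only [hh_def] at h1
  rw [h2] at h1
  linarith


end Aux

/-- Case (i): if `0 < bU < 2` there is no positive stationary solution. -/
theorem two_branch_no_solution (bL bU aL aU a : ℝ)
    (hbL : 0 < bL) (hbU : 0 < bU) (haL : 0 < aL) (haU : 0 < aU)
    (hcons : aL * bL = aU * bU) (hbU2 : bU < 2) (ha : a ∈ Set.Ioo (0 : ℝ) 1) :
    ¬ ∃ phiL phiU : ℝ → ℝ, IsTwoBranchStatSol bL bU aL aU a phiL phiU := by
  rintro ⟨phiL, phiU, hCL, hCU, hodeL, hposL, hodeU, hposU, hL0, hU0, hK⟩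
  have hqU : deriv phiU 0 ≤ 0 := upper_deriv_nonpos bU hbU hbU2 phiU hCU hodeU hposU
  have hqL : deriv phiL 0 ≤ 0 := by
    have h1 : aU * deriv phiU 0 ≤ 0 := mul_nonpos_of_nonneg_of_nonpos haU.le hqU
    rw [hK] at h1
    by_contra hcon
    push_neg at hcon
    nlinarith [mul_pos haL hcon]
  exact lower_impossible bL hbL phiL hCL hodeL hposL hqL
end

section
/- Let β_U > 2 and let φ: (-∞,0] → (0,1) be a solution of -φ'' + β_U φ' = φ - φ² with φ(-∞) = 0 and φ' > 0. Then either there exists c > 0 with φ(x) = (c+o(1)) e^{½(β_U + √(β_U²-4))x} as x → -∞, or there exists c > 0 with φ(x) = (c+o(1)) e^{½(β_U - √(β_U²-4))x} as x → -∞. -/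
open Real Filter

private lemma monoOn_of_hasDeriv {f f' : ℝ → ℝ} {a : ℝ} (ha : a ≤ 0)
    (hf : ∀ x, x ≤ (0:ℝ) → HasDerivAt f (f' x) x)
    (h0 : ∀ x, x ≤ a → 0 ≤ f' x) :
    ∀ ⦃x y : ℝ⦄, x ≤ y → y ≤ a → f x ≤ f y := by
  intro x y hxy hya
  have key : MonotoneOn f (Set.Iic a) := by
    apply monotoneOn_of_deriv_nonneg (convex_Iic a)
    · exact fun z hz => (hf z (le_trans hz ha)).continuousAt.continuousWithinAt
    · intro z hz
      rw [interior_Iic] at hz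
      exact (hf z (le_trans hz.le ha)).differentiableAt.differentiableWithinAt
    · intro z hz
      rw [interior_Iic] at hz
      rw [(hf z (le_trans hz.le ha)).deriv]
      exact h0 z hz.le
  exact key (Set.mem_Iic.2 (le_trans hxy hya)) (Set.mem_Iic.2 hya) hxy

private lemma antiOn_of_hasDeriv {f f' : ℝ → ℝ} {a : ℝ} (ha : a ≤ 0)
    (hf : ∀ x, x ≤ (0:ℝ) → HasDerivAt f (f' x) x)
    (h0 : ∀ x, x ≤ a → f' x ≤ 0) :
    ∀ ⦃x y : ℝ⦄, x ≤ y → y ≤ a → f y ≤ f x := by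
  intro x y hxy hya
  have := monoOn_of_hasDeriv ha (f := fun z => -f z) (f' := fun z => -f' z)
    (fun z hz => (hf z hz).neg) (fun z hz => neg_nonneg.2 (h0 z hz)) hxy hya
  have h2 : -f x ≤ -f y := this
  linarith

private lemma exists_tendsto_atBot_of_monoOn {f : ℝ → ℝ} {a m : ℝ}
    (hmono : ∀ ⦃x y : ℝ⦄, x ≤ y → y ≤ a → f x ≤ f y)
    (hbd : ∀ x, x ≤ a → m ≤ f x) :
    ∃ c, Filter.Tendsto f Filter.atBot (nhds c) := by
  set S := f '' Set.Iic a with hS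
  have hne : S.Nonempty := ⟨f a, a, Set.mem_Iic.2 le_rfl, rfl⟩
  have hbdd : BddBelow S := ⟨m, by rintro _ ⟨x, hx, rfl⟩; exact hbd x hx⟩
  refine ⟨sInf S, tendsto_order.2 ⟨?_, ?_⟩⟩
  · intro b hb
    filter_upwards [eventually_le_atBot a] with x hx
    exact lt_of_lt_of_le hb (csInf_le hbdd ⟨x, Set.mem_Iic.2 hx, rfl⟩)
  · intro b hb
    obtain ⟨_, ⟨y, hy, rfl⟩, hfy⟩ := exists_lt_of_csInf_lt hne hb
    filter_upwards [eventually_le_atBot y] with x hx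
    exact lt_of_le_of_lt (hmono hx hy) hfy

private lemma hasDerivAt_exp_mul (c x : ℝ) :
    HasDerivAt (fun y => Real.exp (c * y)) (c * Real.exp (c * x)) x := by
  simpa [mul_comm] using ((hasDerivAt_id x).const_mul c).exp

private lemma hasDerivAt_fun_mul_exp {f : ℝ → ℝ} {f' c x : ℝ} (hf : HasDerivAt f f' x) :
    HasDerivAt (fun y => f y * Real.exp (c * y)) ((f' + c * f x) * Real.exp (c * x)) x := by
  have := hf.mul (hasDerivAt_exp_mul c x)
  refine this.congr_deriv ?_
  ring

private lemma tendsto_cexp_atBot (K c : ℝ) (hc : 0 < c) :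
    Filter.Tendsto (fun x : ℝ => K * Real.exp (c * x)) Filter.atBot (nhds 0) := by
  have h1 : Filter.Tendsto (fun x : ℝ => c * x) Filter.atBot Filter.atBot :=
    Filter.Tendsto.const_mul_atBot hc Filter.tendsto_id
  have h2 : Filter.Tendsto (fun x : ℝ => Real.exp (c * x)) Filter.atBot (nhds 0) :=
    Real.tendsto_exp_atBot.comp h1
  simpa using h2.const_mul K

/-- Case v ≥ kp everywhere: fast decay `φ ~ c e^{kp x}`. -/
private lemma case_high (bU q kp km : ℝ) (φ dφ ddφ : ℝ → ℝ)
    (hq0 : 0 < q) (hkm0 : 0 < km)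
    (hsum : kp + km = bU) (hprod : kp * km = 1) (hdq : kp - km = q)
    (hφ : ∀ x, HasDerivAt φ (dφ x) x) (hdφ : ∀ x, HasDerivAt dφ (ddφ x) x)
    (hdd : ∀ x, x ≤ (0:ℝ) → ddφ x = bU * dφ x - φ x + φ x ^ 2)
    (hrange : ∀ x ≤ (0:ℝ), 0 < φ x ∧ φ x < 1)
    (hI : ∀ x, x ≤ (0:ℝ) → kp * φ x ≤ dφ x) :
    ∃ c > (0:ℝ), Filter.Tendsto (fun x => φ x * Real.exp ((-kp) * x)) Filter.atBot (nhds c) := by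
  have hpos : ∀ x, x ≤ (0:ℝ) → 0 < φ x := fun x hx => (hrange x hx).1
  have hkp0 : 0 < kp := by linarith
  set w := fun x => φ x * Real.exp ((-kp) * x) with hwdef
  have hw' : ∀ x, x ≤ (0:ℝ) →
      HasDerivAt w ((dφ x - kp * φ x) * Real.exp ((-kp) * x)) x := by
    intro x _
    have := hasDerivAt_fun_mul_exp (f := φ) (f' := dφ x) (c := -kp) (x := x) (hφ x)
    convert this using 1
    ring
  have hwpos : ∀ x, x ≤ (0:ℝ) → 0 < w x := fun x hx =>
    mul_pos (hpos x hx) (Real.exp_pos _)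
  have hwmono : ∀ ⦃x y : ℝ⦄, x ≤ y → y ≤ (0:ℝ) → w x ≤ w y :=
    monoOn_of_hasDeriv le_rfl hw'
      (fun x hx => mul_nonneg (sub_nonneg.2 (hI x hx)) (Real.exp_pos _).le)
  have hw0 : w 0 = φ 0 := by simp [hwdef]
  have hwle : ∀ x, x ≤ (0:ℝ) → w x ≤ φ 0 := fun x hx => hw0 ▸ hwmono hx le_rfl
  -- identity: φ t ^ 2 * exp ((-km)*t) = w t ^ 2 * exp ((kp + q) * t)
  have hid : ∀ t : ℝ, φ t ^ 2 * Real.exp ((-km) * t) = w t ^ 2 * Real.exp ((kp + q) * t) := by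
    intro t
    have h1 : w t ^ 2 = φ t ^ 2 * (Real.exp ((-kp) * t) * Real.exp ((-kp) * t)) := by
      rw [hwdef]; ring
    have harg : (-km) * t = (-kp * t) + ((-kp * t) + (kp + q) * t) := by
      linear_combination t * hdq
    rw [h1, harg, Real.exp_add, Real.exp_add]
    ring
  -- G and its derivative
  set G := fun x => (dφ x - kp * φ x) * Real.exp ((-km) * x) with hGdef
  have hG' : ∀ x, x ≤ (0:ℝ) → HasDerivAt G (φ x ^ 2 * Real.exp ((-km) * x)) x := by
    intro x hx
    have h1 : HasDerivAt (fun y => dφ y - kp * φ y) (ddφ x - kp * dφ x) x :=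
      (hdφ x).sub ((hφ x).const_mul kp)
    have h2 := hasDerivAt_fun_mul_exp (c := -km) h1
    convert h2 using 1
    have h3 : φ x ^ 2 = ddφ x - kp * dφ x + -km * (dφ x - kp * φ x) := by
      rw [hdd x hx]; linear_combination (dφ x) * hsum - (φ x) * hprod
    rw [← h3]
  -- Step: G x ≤ w x ^ 2 * exp ((kp+q)*x) / (kp+q) for all x ≤ 0
  have hkpq : 0 < kp + q := by linarith
  have hGH : ∀ x, x ≤ (0:ℝ) → G x ≤ w x ^ 2 * Real.exp ((kp + q) * x) / (kp + q) := by
    by_contra hcon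
    push_neg at hcon
    obtain ⟨x₁, hx₁, hlt⟩ := hcon
    set δ := G x₁ - w x₁ ^ 2 * Real.exp ((kp + q) * x₁) / (kp + q) with hδdef
    have hδ0 : 0 < δ := by simp [hδdef]; linarith
    -- Q is antitone on Iic x₁
    have hQ' : ∀ x, x ≤ (0:ℝ) → HasDerivAt
        (fun t => G t - w x₁ ^ 2 * Real.exp ((kp + q) * t) / (kp + q))
        (φ x ^ 2 * Real.exp ((-km) * x) - w x₁ ^ 2 * Real.exp ((kp + q) * x)) x := by
      intro x hx
      have h2 : HasDerivAt (fun t => w x₁ ^ 2 * Real.exp ((kp + q) * t) / (kp + q))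
          (w x₁ ^ 2 * Real.exp ((kp + q) * x)) x := by
        have := ((hasDerivAt_exp_mul (kp + q) x).const_mul (w x₁ ^ 2 / (kp + q)))
        have e : (fun t => w x₁ ^ 2 * Real.exp ((kp + q) * t) / (kp + q))
            = fun y => w x₁ ^ 2 / (kp + q) * Real.exp ((kp + q) * y) := by funext z; ring
        rw [e]
        refine this.congr_deriv ?_
        linear_combination (w x₁ ^ 2 * Real.exp ((kp + q) * x)) * (mul_inv_cancel₀ hkpq.ne')
      exact (hG' x hx).sub h2
    have hQanti := antiOn_of_hasDeriv hx₁ hQ' (fun x hx => by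
      have h4 := hid x
      have h5 : w x ≤ w x₁ := hwmono hx hx₁
      have h6 : 0 < w x := hwpos x (hx.trans hx₁)
      have h7 : (0:ℝ) < Real.exp ((kp + q) * x) := Real.exp_pos _
      rw [h4]
      have h8 : w x ^ 2 ≤ w x₁ ^ 2 := by nlinarith
      nlinarith [mul_le_mul_of_nonneg_right h8 h7.le])
    -- hence G y ≥ δ for all y ≤ x₁
    have hGδ : ∀ y, y ≤ x₁ → δ ≤ G y := by
      intro y hy
      have h8 := hQanti hy le_rfl
      have h9 : (0:ℝ) < w x₁ ^ 2 * Real.exp ((kp + q) * y) / (kp + q) := by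
        have := hwpos x₁ hx₁
        positivity
      simp only [hδdef]
      nlinarith [h8, h9]
    -- then w would blow up: S := w + (δ/q) exp(-q t) is monotone on Iic x₁
    have hS' : ∀ x, x ≤ (0:ℝ) → HasDerivAt
        (fun t => w t + (δ / q) * Real.exp ((-q) * t))
        ((dφ x - kp * φ x) * Real.exp ((-kp) * x) - δ * Real.exp ((-q) * x)) x := by
      intro x hx
      have h2 : HasDerivAt (fun t => (δ / q) * Real.exp ((-q) * t))
          (-(δ * Real.exp ((-q) * x))) x := by
        have := (hasDerivAt_exp_mul (-q) x).const_mul (δ / q)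
        refine this.congr_deriv ?_
        linear_combination (-(δ * Real.exp ((-q) * x))) * (mul_inv_cancel₀ hq0.ne')
      have h3 := (hw' x hx).add h2
      exact h3.congr_deriv (by ring)
    have hSmono := monoOn_of_hasDeriv hx₁ hS' (fun x hx => by
      have h8 := hGδ x hx
      -- (dφ - kp φ) e^{-kp x} = G x * e^{-q x} ≥ δ e^{-q x}
      have h9 : (dφ x - kp * φ x) * Real.exp ((-kp) * x)
          = G x * Real.exp ((-q) * x) := by
        simp only [hGdef]
        rw [mul_assoc, ← Real.exp_add]
        congr 2
        linear_combination (-x) * hdq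
      rw [h9]
      have h10 : (0:ℝ) < Real.exp ((-q) * x) := Real.exp_pos _
      nlinarith)
    exfalso
    have hblow : ∀ y, y ≤ x₁ → (δ / q) * Real.exp ((-q) * y) ≤ w x₁ + (δ / q) * Real.exp ((-q) * x₁) := by
      intro y hy
      have := hSmono hy le_rfl
      have h6 : 0 < w y := hwpos y (hy.trans hx₁)
      linarith
    -- but (δ/q) exp(-q y) → ∞ as y → -∞
    have htop : Filter.Tendsto (fun y : ℝ => (δ / q) * Real.exp ((-q) * y)) Filter.atBot Filter.atTop := by
      apply Filter.Tendsto.const_mul_atTop (by positivity : (0:ℝ) < δ / q)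
      apply Real.tendsto_exp_atTop.comp
      have h2 : Filter.Tendsto (fun y : ℝ => q * (-y)) Filter.atBot Filter.atTop :=
        Filter.Tendsto.const_mul_atTop hq0 tendsto_neg_atBot_atTop
      refine h2.congr (fun y => by ring)
    obtain ⟨y, hy1, hy2⟩ := ((htop.eventually_ge_atTop
        (w x₁ + (δ / q) * Real.exp ((-q) * x₁) + 1)).and (eventually_le_atBot x₁)).exists
    have := hblow y hy2
    linarith
  -- now conclude: w' ≤ A w e^{kp x}, A = 1/(kp+q)
  have hφ0lt : φ 0 < 1 := (hrange 0 le_rfl).2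
  have hR' : ∀ x, x ≤ (0:ℝ) → HasDerivAt
      (fun t => Real.log (w t) - (1 / (kp + q) / kp) * Real.exp (kp * t))
      ((dφ x - kp * φ x) * Real.exp ((-kp) * x) / w x - (1 / (kp + q)) * Real.exp (kp * x)) x := by
    intro x hx
    have h1 := (hw' x hx).log (ne_of_gt (hwpos x hx))
    have h2 := (hasDerivAt_exp_mul kp x).const_mul (1 / (kp + q) / kp)
    have h3 := h1.sub h2
    refine h3.congr_deriv ?_
    linear_combination (-(1 / (kp + q) * Real.exp (kp * x))) * (mul_inv_cancel₀ hkp0.ne')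
  have hRanti := antiOn_of_hasDeriv le_rfl hR' (fun x hx => by
    have h9 : (dφ x - kp * φ x) * Real.exp ((-kp) * x) = G x * Real.exp ((-q) * x) := by
      simp only [hGdef]
      rw [mul_assoc, ← Real.exp_add]
      congr 2
      linear_combination (-x) * hdq
    have h10 := hGH x hx
    have h11 : Real.exp ((kp + q) * x) * Real.exp ((-q) * x) = Real.exp (kp * x) := by
      rw [← Real.exp_add]; congr 1; ring
    have h12 : 0 < w x := hwpos x hx
    have h13 : w x ≤ φ 0 := hwle x hx
    have hqe : (0:ℝ) < Real.exp ((-q) * x) := Real.exp_pos _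
    have hke : (0:ℝ) < Real.exp (kp * x) := Real.exp_pos _
    have hw'le : (dφ x - kp * φ x) * Real.exp ((-kp) * x)
        ≤ (1 / (kp + q)) * w x * Real.exp (kp * x) := by
      rw [h9]
      calc G x * Real.exp ((-q) * x)
          ≤ (w x ^ 2 * Real.exp ((kp + q) * x) / (kp + q)) * Real.exp ((-q) * x) :=
            mul_le_mul_of_nonneg_right h10 hqe.le
        _ = (w x ^ 2 / (kp + q)) * (Real.exp ((kp + q) * x) * Real.exp ((-q) * x)) := by ring
        _ = (w x ^ 2 / (kp + q)) * Real.exp (kp * x) := by rw [h11]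
        _ ≤ (1 / (kp + q)) * w x * Real.exp (kp * x) := by
            have h14 : w x ^ 2 ≤ w x := by nlinarith
            have h15 := mul_le_mul_of_nonneg_right
              (mul_le_mul_of_nonneg_right h14 hke.le) (by positivity : (0:ℝ) ≤ 1/(kp+q))
            calc (w x ^ 2 / (kp + q)) * Real.exp (kp * x)
                = w x ^ 2 * Real.exp (kp * x) * (1/(kp+q)) := by ring
              _ ≤ w x * Real.exp (kp * x) * (1/(kp+q)) := h15
              _ = (1 / (kp + q)) * w x * Real.exp (kp * x) := by ring
    rw [sub_nonpos, div_le_iff₀ h12]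
    nlinarith
    )
  have hm' : ∀ x, x ≤ (0:ℝ) → Real.exp (Real.log (φ 0) - 1 / (kp + q) / kp) ≤ w x := by
    intro x hx
    have h1 := hRanti hx le_rfl
    have h2 : (0:ℝ) < Real.exp (kp * x) := Real.exp_pos _
    have h3 : Real.exp (kp * 0) = 1 := by norm_num
    have h4 : Real.log (φ 0) - 1 / (kp + q) / kp ≤ Real.log (w x) := by
      rw [hw0] at h1
      have h5 : (0:ℝ) < 1 / (kp + q) / kp := by positivity
      nlinarith [h1, h2, h3, mul_pos h5 h2]
    calc Real.exp (Real.log (φ 0) - 1 / (kp + q) / kp) ≤ Real.exp (Real.log (w x)) :=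
          Real.exp_le_exp.2 h4
      _ = w x := Real.exp_log (hwpos x hx)
  obtain ⟨c, hc⟩ := exists_tendsto_atBot_of_monoOn hwmono hm'
  refine ⟨c, ?_, hc⟩
  have h6 : Real.exp (Real.log (φ 0) - 1 / (kp + q) / kp) ≤ c :=
    ge_of_tendsto hc (by filter_upwards [eventually_le_atBot (0:ℝ)] with x hx using hm' x hx)
  exact lt_of_lt_of_le (Real.exp_pos _) h6


private lemma riccati (bU kp km : ℝ) (φ dφ ddφ : ℝ → ℝ)
    (hsum : kp + km = bU) (hprod : kp * km = 1)
    (hφ : ∀ x, HasDerivAt φ (dφ x) x) (hdφ : ∀ x, HasDerivAt dφ (ddφ x) x)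
    (hdd : ∀ x, x ≤ (0:ℝ) → ddφ x = bU * dφ x - φ x + φ x ^ 2)
    (hpos : ∀ x, x ≤ (0:ℝ) → 0 < φ x) {x : ℝ} (hx : x ≤ 0) :
    HasDerivAt (fun y => dφ y / φ y)
      ((kp - dφ x / φ x) * (dφ x / φ x - km) + φ x) x := by
  have hne : φ x ≠ 0 := ne_of_gt (hpos x hx)
  have h := (hdφ x).div (hφ x) hne
  refine h.congr_deriv ?_
  rw [hdd x hx]
  have hφ2 : φ x ^ 2 ≠ 0 := pow_ne_zero 2 hne
  have hi : φ x * (φ x)⁻¹ = 1 := mul_inv_cancel₀ hne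
  rw [div_eq_iff hφ2]
  linear_combination (dφ x ^ 2 * (1 + φ x * (φ x)⁻¹) - (kp + km) * dφ x * φ x) * hi
    + φ x ^ 2 * hprod - dφ x * φ x * hsum

private lemma hasDerivAt_E (bU c₁ c₂ : ℝ) (φ dφ ddφ : ℝ → ℝ)
    (hsum : c₁ + c₂ = bU) (hprod : c₁ * c₂ = 1)
    (hφ : ∀ x, HasDerivAt φ (dφ x) x) (hdφ : ∀ x, HasDerivAt dφ (ddφ x) x)
    (hdd : ∀ x, x ≤ (0:ℝ) → ddφ x = bU * dφ x - φ x + φ x ^ 2)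
    {x : ℝ} (hx : x ≤ 0) :
    HasDerivAt (fun y => (dφ y - c₁ * φ y) * Real.exp ((-c₂) * y))
      (φ x ^ 2 * Real.exp ((-c₂) * x)) x := by
  have h1 : HasDerivAt (fun y => dφ y - c₁ * φ y) (ddφ x - c₁ * dφ x) x :=
    (hdφ x).sub ((hφ x).const_mul c₁)
  have h2 := hasDerivAt_fun_mul_exp (c := -c₂) h1
  convert h2 using 1
  have h3 : φ x ^ 2 = ddφ x - c₁ * dφ x + -c₂ * (dφ x - c₁ * φ x) := by
    rw [hdd x hx]; linear_combination (dφ x) * hsum - (φ x) * hprod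
  rw [← h3]

private lemma E_neg_propagate (bU c₁ c₂ : ℝ) (φ dφ ddφ : ℝ → ℝ)
    (hsum : c₁ + c₂ = bU) (hprod : c₁ * c₂ = 1)
    (hφ : ∀ x, HasDerivAt φ (dφ x) x) (hdφ : ∀ x, HasDerivAt dφ (ddφ x) x)
    (hdd : ∀ x, x ≤ (0:ℝ) → ddφ x = bU * dφ x - φ x + φ x ^ 2)
    {x₀ : ℝ} (hx₀ : x₀ ≤ 0) (hneg : dφ x₀ < c₁ * φ x₀) :
    ∀ x, x ≤ x₀ → dφ x < c₁ * φ x := by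
  intro x hx
  have hm := monoOn_of_hasDeriv hx₀
    (fun z hz => hasDerivAt_E bU c₁ c₂ φ dφ ddφ hsum hprod hφ hdφ hdd hz)
    (fun z _ => by positivity) hx le_rfl
  have h1 : (dφ x₀ - c₁ * φ x₀) * Real.exp ((-c₂) * x₀) < 0 :=
    mul_neg_of_neg_of_pos (by linarith) (Real.exp_pos _)
  have h2 : (0:ℝ) < Real.exp ((-c₂) * x) := Real.exp_pos _
  by_contra hcon
  push_neg at hcon
  have h3 : 0 ≤ (dφ x - c₁ * φ x) * Real.exp ((-c₂) * x) :=
    mul_nonneg (by linarith) h2.le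
  linarith [lt_of_le_of_lt hm h1]

/-- Case B(i): `km ≤ v` everywhere, `v < kp` somewhere: slow decay. -/
private lemma case_mid (bU q kp km : ℝ) (φ dφ ddφ : ℝ → ℝ)
    (hq0 : 0 < q) (hkm0 : 0 < km)
    (hsum : kp + km = bU) (hprod : kp * km = 1) (hdq : kp - km = q)
    (hφ : ∀ x, HasDerivAt φ (dφ x) x) (hdφ : ∀ x, HasDerivAt dφ (ddφ x) x)
    (hdd : ∀ x, x ≤ (0:ℝ) → ddφ x = bU * dφ x - φ x + φ x ^ 2)
    (hrange : ∀ x ≤ (0:ℝ), 0 < φ x ∧ φ x < 1)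
    (hB : ∀ x, x ≤ (0:ℝ) → km * φ x ≤ dφ x)
    {x₀ : ℝ} (hx₀ : x₀ ≤ 0) (hlt : dφ x₀ < kp * φ x₀) :
    ∃ c > (0:ℝ), Filter.Tendsto (fun x => φ x * Real.exp ((-km) * x)) Filter.atBot (nhds c) := by
  have hpos : ∀ x, x ≤ (0:ℝ) → 0 < φ x := fun x hx => (hrange x hx).1
  have hkp0 : 0 < kp := by linarith
  set v := fun y => dφ y / φ y with hvdef
  have hv : ∀ x, x ≤ (0:ℝ) → HasDerivAt v ((kp - v x) * (v x - km) + φ x) x :=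
    fun x hx => riccati bU kp km φ dφ ddφ hsum hprod hφ hdφ hdd hpos hx
  have hvge : ∀ x, x ≤ (0:ℝ) → km ≤ v x := fun x hx => by
    rw [hvdef]
    exact (le_div_iff₀ (hpos x hx)).2 (by linarith [hB x hx])
  have hprop := E_neg_propagate bU kp km φ dφ ddφ hsum hprod hφ hdφ hdd hx₀ hlt
  have hvlt : ∀ x, x ≤ x₀ → v x < kp := fun x hx => by
    rw [hvdef]
    exact (div_lt_iff₀ (hpos x (hx.trans hx₀))).2 (by linarith [hprop x hx])
  have hloggen : ∀ (k : ℝ) (x : ℝ), x ≤ (0:ℝ) →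
      HasDerivAt (fun t => Real.log (φ t) - k * t) (v x - k) x := by
    intro k x hx
    have := ((hφ x).log (ne_of_gt (hpos x hx))).sub ((hasDerivAt_id x).const_mul k)
    exact this.congr_deriv (by simp [hvdef])
  -- Step 2 : v gets below km + q/2 at some point of Iic x₀
  have hstep2 : ∃ x₁, x₁ ≤ x₀ ∧ v x₁ - km < q / 2 := by
    by_contra hcon
    push_neg at hcon
    have hτ' : ∀ x, x ≤ (0:ℝ) → HasDerivAt (fun t => (kp - v t) * Real.exp ((q/2) * t))
        ((-((kp - v x) * (v x - km) + φ x) + (q/2) * (kp - v x)) * Real.exp ((q/2) * x)) x :=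
      fun x hx => hasDerivAt_fun_mul_exp ((hv x hx).const_sub kp)
    have hτanti := antiOn_of_hasDeriv hx₀ hτ' (fun x hx => by
      have h1 := hcon x hx
      have h2 := hvlt x hx
      have h3 := hpos x (hx.trans hx₀)
      have h4 : (-((kp - v x) * (v x - km) + φ x) + (q/2) * (kp - v x)) ≤ 0 := by nlinarith
      exact mul_nonpos_of_nonpos_of_nonneg h4 (Real.exp_pos _).le)
    have hP : 0 < (kp - v x₀) * Real.exp ((q/2) * x₀) :=
      mul_pos (by linarith [hvlt x₀ le_rfl]) (Real.exp_pos _)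
    have htend := tendsto_cexp_atBot q (q/2) (by positivity)
    obtain ⟨y, hy1, hy2⟩ :=
      ((htend.eventually_lt_const hP).and (eventually_le_atBot x₀)).exists
    have h4 := hτanti hy2 le_rfl
    have h5 : kp - v y ≤ q := by
      have := hvge y (hy2.trans hx₀); linarith
    have h6 : (kp - v y) * Real.exp ((q/2) * y) ≤ q * Real.exp ((q/2) * y) :=
      mul_le_mul_of_nonneg_right h5 (Real.exp_pos _).le
    linarith
  obtain ⟨x₁, hx₁, hρhalf⟩ := hstep2
  -- Step 3 : ρ = v - km is monotone on Iic x₀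
  have hρ' : ∀ x, x ≤ (0:ℝ) → HasDerivAt (fun t => v t - km)
      ((kp - v x) * (v x - km) + φ x) x := fun x hx => (hv x hx).sub_const km
  have hρmono := monoOn_of_hasDeriv hx₀ hρ' (fun x hx => by
    have h1 := hvge x (hx.trans hx₀)
    have h2 := hvlt x hx
    have h3 := hpos x (hx.trans hx₀)
    nlinarith)
  -- Step 4 : T = (v - km) e^{-(q/2) t} is monotone on Iic x₁
  have hT' : ∀ x, x ≤ (0:ℝ) → HasDerivAt (fun t => (v t - km) * Real.exp ((-(q/2)) * t))
      ((((kp - v x) * (v x - km) + φ x) + (-(q/2)) * (v x - km)) * Real.exp ((-(q/2)) * x)) x :=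
    fun x hx => hasDerivAt_fun_mul_exp ((hv x hx).sub_const km)
  have hTmono := monoOn_of_hasDeriv (hx₁.trans hx₀) hT' (fun x hx => by
    have h1 := hvge x ((hx.trans hx₁).trans hx₀)
    have h2 : v x - km ≤ v x₁ - km := hρmono hx hx₁
    have h3 := hpos x ((hx.trans hx₁).trans hx₀)
    have h4 := hvlt x (hx.trans hx₁)
    apply mul_nonneg _ (Real.exp_pos _).le
    nlinarith)
  set B₀ := (v x₁ - km) * Real.exp ((-(q/2)) * x₁) with hB₀def
  have hB₀0 : 0 ≤ B₀ :=
    mul_nonneg (by linarith [hvge x₁ (hx₁.trans hx₀)]) (Real.exp_pos _).le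
  have hρbound : ∀ x, x ≤ x₁ → v x - km ≤ B₀ * Real.exp ((q/2) * x) := by
    intro x hx
    have h1 := hTmono hx le_rfl
    have h3 := mul_le_mul_of_nonneg_right h1 (Real.exp_pos ((q/2)*x)).le
    have h4 : Real.exp ((-(q/2)) * x) * Real.exp ((q/2) * x) = 1 := by
      rw [← Real.exp_add, show (-(q/2)) * x + (q/2) * x = 0 by ring, Real.exp_zero]
    calc v x - km = ((v x - km) * Real.exp ((-(q/2)) * x)) * Real.exp ((q/2) * x) := by
          rw [mul_assoc, h4, mul_one]
      _ ≤ B₀ * Real.exp ((q/2) * x) := h3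
  -- Step 5 : lower bound for u
  have hR' : ∀ x, x ≤ (0:ℝ) → HasDerivAt
      (fun t => Real.log (φ t) - km * t - (2 * B₀ / q) * Real.exp ((q/2) * t))
      ((v x - km) - B₀ * Real.exp ((q/2) * x)) x := by
    intro x hx
    have h2 := (hasDerivAt_exp_mul (q/2) x).const_mul (2 * B₀ / q)
    have h3 := (hloggen km x hx).sub h2
    refine h3.congr_deriv ?_
    linear_combination (-(B₀ * Real.exp ((q/2) * x))) * (mul_inv_cancel₀ hq0.ne')
  have hRanti := antiOn_of_hasDeriv (hx₁.trans hx₀) hR'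
    (fun x hx => by linarith [hρbound x hx])
  have hm' : ∀ x, x ≤ x₁ →
      Real.exp (Real.log (φ x₁) - km * x₁ - 2 * B₀ / q) ≤ φ x * Real.exp ((-km) * x) := by
    intro x hx
    have h1 := hRanti hx le_rfl
    have hex1 : Real.exp ((q/2) * x₁) ≤ 1 := by
      rw [Real.exp_le_one_iff]
      nlinarith [hx₁.trans hx₀]
    have hex2 : (0:ℝ) < Real.exp ((q/2) * x) := Real.exp_pos _
    have hBq : 0 ≤ 2 * B₀ / q := by positivity
    have h4 : Real.log (φ x₁) - km * x₁ - 2 * B₀ / q ≤ Real.log (φ x) - km * x := by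
      nlinarith [mul_le_mul_of_nonneg_left hex1 hBq, mul_nonneg hBq hex2.le]
    have h5 : Real.exp (Real.log (φ x) - km * x) = φ x * Real.exp ((-km) * x) := by
      rw [Real.exp_sub, Real.exp_log (hpos x (hx.trans (hx₁.trans hx₀))), neg_mul,
        Real.exp_neg, div_eq_mul_inv]
    calc Real.exp (Real.log (φ x₁) - km * x₁ - 2 * B₀ / q)
        ≤ Real.exp (Real.log (φ x) - km * x) := Real.exp_le_exp.2 h4
      _ = φ x * Real.exp ((-km) * x) := h5
  have hu' : ∀ x, x ≤ (0:ℝ) → HasDerivAt (fun t => φ t * Real.exp ((-km) * t))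
      ((dφ x - km * φ x) * Real.exp ((-km) * x)) x := by
    intro x _
    have := hasDerivAt_fun_mul_exp (f := φ) (f' := dφ x) (c := -km) (x := x) (hφ x)
    convert this using 1
    ring
  have humono := monoOn_of_hasDeriv (hx₁.trans hx₀) hu' (fun x hx =>
    mul_nonneg (sub_nonneg.2 (hB x (hx.trans (hx₁.trans hx₀)))) (Real.exp_pos _).le)
  obtain ⟨c, hc⟩ := exists_tendsto_atBot_of_monoOn humono hm'
  refine ⟨c, ?_, hc⟩
  have h6 : Real.exp (Real.log (φ x₁) - km * x₁ - 2 * B₀ / q) ≤ c :=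
    ge_of_tendsto hc (by filter_upwards [eventually_le_atBot x₁] with x hx using hm' x hx)
  exact lt_of_lt_of_le (Real.exp_pos _) h6


/-- Case A: `v < km` somewhere (hence to the left of it): slow decay. -/
private lemma case_low (bU q kp km : ℝ) (φ dφ ddφ : ℝ → ℝ)
    (hq0 : 0 < q) (hkm0 : 0 < km)
    (hsum : kp + km = bU) (hprod : kp * km = 1) (hdq : kp - km = q)
    (hφ : ∀ x, HasDerivAt φ (dφ x) x) (hdφ : ∀ x, HasDerivAt dφ (ddφ x) x)
    (hdd : ∀ x, x ≤ (0:ℝ) → ddφ x = bU * dφ x - φ x + φ x ^ 2)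
    (hrange : ∀ x ≤ (0:ℝ), 0 < φ x ∧ φ x < 1)
    (hlim : Filter.Tendsto φ Filter.atBot (nhds 0))
    {x₀ : ℝ} (hx₀ : x₀ ≤ 0) (hneg : dφ x₀ < km * φ x₀) :
    ∃ c > (0:ℝ), Filter.Tendsto (fun x => φ x * Real.exp ((-km) * x)) Filter.atBot (nhds c) := by
  have hpos : ∀ x, x ≤ (0:ℝ) → 0 < φ x := fun x hx => (hrange x hx).1
  have hkp0 : 0 < kp := by linarith
  set v := fun y => dφ y / φ y with hvdef
  have hv : ∀ x, x ≤ (0:ℝ) → HasDerivAt v ((kp - v x) * (v x - km) + φ x) x :=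
    fun x hx => riccati bU kp km φ dφ ddφ hsum hprod hφ hdφ hdd hpos hx
  have hprop := E_neg_propagate bU km kp φ dφ ddφ (by linarith) (by nlinarith [hprod])
    hφ hdφ hdd hx₀ hneg
  have hσpos : ∀ x, x ≤ x₀ → 0 < km - v x := fun x hx => by
    have h1 := hprop x hx
    have h2 := hpos x (hx.trans hx₀)
    have : v x < km := by rw [hvdef]; exact (div_lt_iff₀ h2).2 (by linarith)
    linarith
  have hloggen : ∀ (k : ℝ) (x : ℝ), x ≤ (0:ℝ) →
      HasDerivAt (fun t => Real.log (φ t) - k * t) (v x - k) x := by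
    intro k x hx
    have := ((hφ x).log (ne_of_gt (hpos x hx))).sub ((hasDerivAt_id x).const_mul k)
    exact this.congr_deriv (by simp [hvdef])
  -- (A1) : σ = km - v becomes eventually ≤ ε
  have hA1 : ∀ ε : ℝ, 0 < ε → ∃ x₂, x₂ ≤ x₀ ∧ ∀ x, x ≤ x₂ → km - v x ≤ ε := by
    intro ε hε
    have hev : ∀ᶠ x in Filter.atBot, φ x < q * ε / 2 :=
      hlim.eventually_lt_const (by positivity)
    obtain ⟨y, hy⟩ := Filter.eventually_atBot.1 (hev.and (eventually_le_atBot x₀))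
    have hyx₀ : y ≤ x₀ := (hy y le_rfl).2
    have hT' : ∀ x, x ≤ (0:ℝ) → HasDerivAt (fun t => (km - v t - ε/2) * Real.exp ((-q) * t))
        ((-((kp - v x) * (v x - km) + φ x) + (-q) * (km - v x - ε/2)) * Real.exp ((-q) * x)) x :=
      fun x hx => hasDerivAt_fun_mul_exp (((hv x hx).const_sub km).sub_const (ε/2))
    have hTmono := monoOn_of_hasDeriv (hyx₀.trans hx₀) hT' (fun x hx => by
      have h1 := (hy x hx).1
      have h2 := hσpos x (hx.trans hyx₀)
      have h3 := hpos x ((hx.trans hyx₀).trans hx₀)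
      apply mul_nonneg _ (Real.exp_pos _).le
      nlinarith [sq_nonneg (km - v x)])
    have htend := tendsto_cexp_atBot ((km - v y - ε/2) * Real.exp ((-q) * y)) q hq0
    obtain ⟨x₂, hx₂⟩ := Filter.eventually_atBot.1
      ((htend.eventually_lt_const (show (0:ℝ) < ε/2 by positivity)).and (eventually_le_atBot y))
    refine ⟨x₂, ((hx₂ x₂ le_rfl).2).trans hyx₀, ?_⟩
    intro x hx
    have h4 := hTmono ((hx₂ x hx).2) le_rfl
    have h5 := (hx₂ x hx).1
    have h6 : Real.exp ((-q) * x) * Real.exp (q * x) = 1 := by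
      rw [← Real.exp_add, show (-q) * x + q * x = 0 by ring, Real.exp_zero]
    have h7 := mul_le_mul_of_nonneg_right h4 (Real.exp_pos (q * x)).le
    have h8 : ((km - v x - ε/2) * Real.exp ((-q) * x)) * Real.exp (q * x) = km - v x - ε/2 := by
      rw [mul_assoc, h6, mul_one]
    rw [h8] at h7
    linarith
  -- (A2) : φ x ≤ C e^{(km/2) x} on Iic x₂
  obtain ⟨x₂, hx₂x₀, hσhalf⟩ := hA1 (km/2) (by positivity)
  have hx₂0 : x₂ ≤ 0 := hx₂x₀.trans hx₀
  have hmono2 := monoOn_of_hasDeriv hx₂0 (hloggen (km/2))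
    (fun x hx => by linarith [hσhalf x hx])
  set C := φ x₂ * Real.exp ((-(km/2)) * x₂) with hCdef
  have hC0 : 0 < C := mul_pos (hpos x₂ hx₂0) (Real.exp_pos _)
  have hφb : ∀ x, x ≤ x₂ → φ x ≤ C * Real.exp ((km/2) * x) := by
    intro x hx
    have h1 := hmono2 hx le_rfl
    have hp := hpos x (hx.trans hx₂0)
    calc φ x = Real.exp (Real.log (φ x)) := (Real.exp_log hp).symm
      _ ≤ Real.exp (Real.log (φ x₂) + ((-(km/2)) * x₂ + (km/2) * x)) :=
          Real.exp_le_exp.2 (by linarith)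
      _ = C * Real.exp ((km/2) * x) := by
          rw [Real.exp_add, Real.exp_add, Real.exp_log (hpos x₂ hx₂0), hCdef]
          ring
  -- (A3) : exponential decay of σ
  set ν' := min q (km/2) / 2 with hν'def
  have hν'0 : 0 < ν' := by rw [hν'def]; positivity
  have hν'q : ν' < q := by
    rw [hν'def]
    have := min_le_left q (km/2)
    linarith
  have hν'ν : ν' < km/2 := by
    rw [hν'def]
    have := min_le_right q (km/2)
    linarith
  set a := C * Real.exp ((km/2 - ν') * x₂) / (q - ν') with hadef
  have ha0 : 0 ≤ a := by
    rw [hadef]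
    have h1 : 0 < q - ν' := by linarith
    positivity
  have hT3' : ∀ x, x ≤ (0:ℝ) → HasDerivAt
      (fun t => (km - v t - a * Real.exp (ν' * t)) * Real.exp ((-q) * t))
      ((-((kp - v x) * (v x - km) + φ x) - a * (ν' * Real.exp (ν' * x))
          + (-q) * (km - v x - a * Real.exp (ν' * x))) * Real.exp ((-q) * x)) x := by
    intro x hx
    have h1 : HasDerivAt (fun t => km - v t - a * Real.exp (ν' * t))
        (-((kp - v x) * (v x - km) + φ x) - a * (ν' * Real.exp (ν' * x))) x :=
      ((hv x hx).const_sub km).sub ((hasDerivAt_exp_mul ν' x).const_mul a)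
    exact hasDerivAt_fun_mul_exp h1
  have hT3mono := monoOn_of_hasDeriv hx₂0 hT3' (fun x hx => by
    apply mul_nonneg _ (Real.exp_pos _).le
    have h1 := hφb x hx
    have h2 : C * Real.exp ((km/2) * x) ≤ a * (q - ν') * Real.exp (ν' * x) := by
      have h3 : a * (q - ν') = C * Real.exp ((km/2 - ν') * x₂) := by
        rw [hadef, div_mul_cancel₀ _ (ne_of_gt (by linarith : (0:ℝ) < q - ν'))]
      have h4 : Real.exp ((km/2) * x) = Real.exp ((km/2 - ν') * x) * Real.exp (ν' * x) := by
        rw [← Real.exp_add]; congr 1; ring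
      have h5 : Real.exp ((km/2 - ν') * x) ≤ Real.exp ((km/2 - ν') * x₂) :=
        Real.exp_le_exp.2 (mul_le_mul_of_nonneg_left hx (by linarith))
      rw [h3, h4]
      calc C * (Real.exp ((km/2 - ν') * x) * Real.exp (ν' * x))
          ≤ C * (Real.exp ((km/2 - ν') * x₂) * Real.exp (ν' * x)) := by
            exact mul_le_mul_of_nonneg_left
              (mul_le_mul_of_nonneg_right h5 (Real.exp_pos _).le) hC0.le
        _ = C * Real.exp ((km/2 - ν') * x₂) * Real.exp (ν' * x) := by ring
    have h6 := hσpos x (hx.trans hx₂x₀)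
    have h7 := hpos x (hx.trans hx₂0)
    nlinarith [sq_nonneg (km - v x)])
  set K₂ := (km - v x₂ - a * Real.exp (ν' * x₂)) * Real.exp ((-q) * x₂) with hK₂def
  set D := a + max K₂ 0 * Real.exp ((q - ν') * x₂) with hDdef
  have hD0 : 0 ≤ D := by
    rw [hDdef]
    exact add_nonneg ha0 (mul_nonneg (le_max_right _ _) (Real.exp_pos _).le)
  have hσD : ∀ x, x ≤ x₂ → km - v x ≤ D * Real.exp (ν' * x) := by
    intro x hx
    have h1 := hT3mono hx le_rfl
    have h2 := mul_le_mul_of_nonneg_right h1 (Real.exp_pos (q * x)).le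
    have h3 : ((km - v x - a * Real.exp (ν' * x)) * Real.exp ((-q) * x)) * Real.exp (q * x)
        = km - v x - a * Real.exp (ν' * x) := by
      rw [mul_assoc, ← Real.exp_add, show (-q) * x + q * x = 0 by ring, Real.exp_zero, mul_one]
    rw [h3] at h2
    rw [← hK₂def] at h2
    have h4 : K₂ * Real.exp (q * x) ≤ max K₂ 0 * Real.exp ((q - ν') * x₂) * Real.exp (ν' * x) := by
      have h5 : K₂ * Real.exp (q * x) ≤ max K₂ 0 * Real.exp (q * x) :=
        mul_le_mul_of_nonneg_right (le_max_left _ _) (Real.exp_pos _).le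
      have h6 : Real.exp (q * x) = Real.exp ((q - ν') * x) * Real.exp (ν' * x) := by
        rw [← Real.exp_add]; congr 1; ring
      have h7 : Real.exp ((q - ν') * x) ≤ Real.exp ((q - ν') * x₂) :=
        Real.exp_le_exp.2 (mul_le_mul_of_nonneg_left hx (by linarith))
      calc K₂ * Real.exp (q * x) ≤ max K₂ 0 * Real.exp (q * x) := h5
        _ = max K₂ 0 * (Real.exp ((q - ν') * x) * Real.exp (ν' * x)) := by rw [h6]
        _ ≤ max K₂ 0 * (Real.exp ((q - ν') * x₂) * Real.exp (ν' * x)) := by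
            exact mul_le_mul_of_nonneg_left
              (mul_le_mul_of_nonneg_right h7 (Real.exp_pos _).le) (le_max_right _ _)
        _ = max K₂ 0 * Real.exp ((q - ν') * x₂) * Real.exp (ν' * x) := by ring
    have h8 : D * Real.exp (ν' * x)
        = a * Real.exp (ν' * x) + max K₂ 0 * Real.exp ((q - ν') * x₂) * Real.exp (ν' * x) := by
      rw [hDdef]; ring
    rw [h8]
    linarith
  -- (A4) : upper bound for u on Iic x₂, then conclude
  have hR3' : ∀ x, x ≤ (0:ℝ) → HasDerivAt
      (fun t => Real.log (φ t) - km * t + (D / ν') * Real.exp (ν' * t))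
      ((v x - km) + D * Real.exp (ν' * x)) x := by
    intro x hx
    have h1 := (hloggen km x hx).add ((hasDerivAt_exp_mul ν' x).const_mul (D / ν'))
    refine h1.congr_deriv ?_
    linear_combination (D * Real.exp (ν' * x)) * (mul_inv_cancel₀ hν'0.ne')
  have hR3mono := monoOn_of_hasDeriv hx₂0 hR3' (fun x hx => by linarith [hσD x hx])
  set M := Real.exp (Real.log (φ x₂) - km * x₂ + D / ν') with hMdef
  have hM : ∀ x, x ≤ x₂ → φ x * Real.exp ((-km) * x) ≤ M := by
    intro x hx
    have h1 := hR3mono hx le_rfl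
    have h2 : (0:ℝ) < Real.exp (ν' * x) := Real.exp_pos _
    have h3 : Real.exp (ν' * x₂) ≤ 1 := by
      rw [Real.exp_le_one_iff]
      nlinarith
    have hDν : 0 ≤ D / ν' := div_nonneg hD0 hν'0.le
    have h4 : Real.log (φ x) - km * x ≤ Real.log (φ x₂) - km * x₂ + D / ν' := by
      nlinarith [mul_le_mul_of_nonneg_left h3 hDν, mul_nonneg hDν h2.le]
    have h5 : φ x * Real.exp ((-km) * x) = Real.exp (Real.log (φ x) - km * x) := by
      rw [Real.exp_sub, Real.exp_log (hpos x (hx.trans hx₂0)), neg_mul,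
        Real.exp_neg, div_eq_mul_inv]
    rw [h5, hMdef]
    exact Real.exp_le_exp.2 h4
  have hu' : ∀ x, x ≤ (0:ℝ) → HasDerivAt (fun t => φ t * Real.exp ((-km) * t))
      ((dφ x - km * φ x) * Real.exp ((-km) * x)) x := by
    intro x _
    have := hasDerivAt_fun_mul_exp (f := φ) (f' := dφ x) (c := -km) (x := x) (hφ x)
    convert this using 1
    ring
  have huanti := antiOn_of_hasDeriv hx₂0 hu' (fun x hx =>
    mul_nonpos_of_nonpos_of_nonneg (by linarith [hprop x (hx.trans hx₂x₀)]) (Real.exp_pos _).le)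
  obtain ⟨c', hc'⟩ := exists_tendsto_atBot_of_monoOn
    (f := fun x => -(φ x * Real.exp ((-km) * x))) (a := x₂) (m := -M)
    (fun x y hxy hya => by
      have := huanti hxy hya
      show -(φ x * Real.exp ((-km) * x)) ≤ -(φ y * Real.exp ((-km) * y))
      linarith)
    (fun x hx => by
      have := hM x hx
      show -M ≤ -(φ x * Real.exp ((-km) * x))
      linarith)
  refine ⟨-c', ?_, ?_⟩
  · have h1 : c' ≤ -(φ x₂ * Real.exp ((-km) * x₂)) := by
      apply le_of_tendsto hc'
      filter_upwards [eventually_le_atBot x₂] with x hx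
      have := huanti hx le_rfl
      linarith
    have h2 : 0 < φ x₂ * Real.exp ((-km) * x₂) := mul_pos (hpos x₂ hx₂0) (Real.exp_pos _)
    linarith
  · have h3 := hc'.neg
    simp only [neg_neg] at h3
    exact h3


/-- Decay dichotomy at `-∞` for positive monotone solutions of
`-φ'' + bU φ' = φ - φ²` decaying to 0, when `bU > 2`. -/
theorem kpp_decay_dichotomy (bU : ℝ) (hbU : 2 < bU) (φ : ℝ → ℝ)
    (hC : ContDiff ℝ 2 φ)
    (hode : ∀ x ≤ (0 : ℝ), -deriv (deriv φ) x + bU * deriv φ x = φ x - φ x ^ 2)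
    (hrange : ∀ x ≤ (0 : ℝ), 0 < φ x ∧ φ x < 1)
    (hlim : Tendsto φ atBot (nhds 0))
    (hmono : ∀ x ≤ (0 : ℝ), 0 < deriv φ x) :
    (∃ c > (0 : ℝ),
      Tendsto (fun x => φ x / Real.exp ((bU + Real.sqrt (bU ^ 2 - 4)) / 2 * x))
        atBot (nhds c)) ∨
    (∃ c > (0 : ℝ),
      Tendsto (fun x => φ x / Real.exp ((bU - Real.sqrt (bU ^ 2 - 4)) / 2 * x))
        atBot (nhds c)) := by
  have hb4 : (4:ℝ) < bU ^ 2 := by nlinarith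
  set q := Real.sqrt (bU ^ 2 - 4) with hqdef
  have hq2 : q ^ 2 = bU ^ 2 - 4 := Real.sq_sqrt (by linarith)
  have hq0 : 0 < q := Real.sqrt_pos.2 (by linarith)
  have hqb : q < bU := by nlinarith
  set kp := (bU + q) / 2 with hkpdef
  set km := (bU - q) / 2 with hkmdef
  have hkm0 : 0 < km := by rw [hkmdef]; linarith
  have hsum : kp + km = bU := by rw [hkpdef, hkmdef]; ring
  have hprod : kp * km = 1 := by
    rw [hkpdef, hkmdef]
    linear_combination (-(1:ℝ)/4) * hq2
  have hdq : kp - km = q := by rw [hkpdef, hkmdef]; ring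
  -- derivatives
  set dφ := deriv φ with hdφdef
  set ddφ := deriv dφ with hddφdef
  have hφdiff : Differentiable ℝ φ := hC.differentiable (by norm_num)
  have hφd : ∀ x, HasDerivAt φ (dφ x) x := fun x => (hφdiff x).hasDerivAt
  have hdφdiff : Differentiable ℝ dφ := by
    rw [hdφdef]
    have h2 : ContDiff ℝ ((1:WithTop ℕ∞) + 1) φ := by norm_num at hC ⊢; exact hC
    exact ((contDiff_succ_iff_deriv.mp h2).2.2).differentiable one_ne_zero
  have hdφd : ∀ x, HasDerivAt dφ (ddφ x) x := fun x => (hdφdiff x).hasDerivAt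
  have hdd : ∀ x, x ≤ (0:ℝ) → ddφ x = bU * dφ x - φ x + φ x ^ 2 := by
    intro x hx
    have := hode x hx
    linarith
  have heqm : (fun x => φ x / Real.exp (km * x)) = fun x => φ x * Real.exp ((-km) * x) := by
    funext z
    rw [neg_mul, Real.exp_neg, div_eq_mul_inv]
  have heqp : (fun x => φ x / Real.exp (kp * x)) = fun x => φ x * Real.exp ((-kp) * x) := by
    funext z
    rw [neg_mul, Real.exp_neg, div_eq_mul_inv]
  rcases em (∃ x₀, x₀ ≤ (0:ℝ) ∧ dφ x₀ < km * φ x₀) with ⟨x₀, hx₀, hneg⟩ | hA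
  · right
    obtain ⟨c, hc0, hc⟩ := case_low bU q kp km φ dφ ddφ hq0 hkm0 hsum hprod hdq
      hφd hdφd hdd hrange hlim hx₀ hneg
    exact ⟨c, hc0, heqm ▸ hc⟩
  · push_neg at hA
    rcases em (∃ x₀, x₀ ≤ (0:ℝ) ∧ dφ x₀ < kp * φ x₀) with ⟨x₀, hx₀, hlt⟩ | hI
    · right
      obtain ⟨c, hc0, hc⟩ := case_mid bU q kp km φ dφ ddφ hq0 hkm0 hsum hprod hdq
        hφd hdφd hdd hrange hA hx₀ hlt
      exact ⟨c, hc0, heqm ▸ hc⟩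
    · push_neg at hI
      left
      obtain ⟨c, hc0, hc⟩ := case_high bU q kp km φ dφ ddφ hq0 hkm0 hsum hprod hdq
        hφd hdφd hdd hrange hI
      exact ⟨c, hc0, heqp ▸ hc⟩
end

section
/- Let β = 2 and let φ: (-∞,0] → (0,1) be a solution of -φ'' + 2φ' = φ - φ² with φ(-∞) = 0 and φ' > 0. Then either there exists c > 0 with φ(x) = (c+o(1)) e^x as x → -∞, or there exists c > 0 with φ(x) = (c+o(1)) |x| e^x as x → -∞. -/
open Real Filter

private lemma mono_limit_aux (f : ℝ → ℝ) (hf : MonotoneOn f (Set.Iic 0))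
    (hb : BddBelow (f '' Set.Iic 0)) :
    Tendsto f atBot (nhds (sInf (f '' Set.Iic 0))) := by
  set L := sInf (f '' Set.Iic 0) with hL
  have hne : (f '' Set.Iic 0).Nonempty := ⟨f 0, ⟨0, Set.self_mem_Iic, rfl⟩⟩
  rw [Metric.tendsto_nhds]
  intro ε hε
  obtain ⟨z, hz, hzlt⟩ := exists_lt_of_csInf_lt hne (by linarith : L < L + ε)
  obtain ⟨y, hy, rfl⟩ := hz
  refine eventually_atBot.2 ⟨y, fun x hx => ?_⟩
  have hx0 : x ∈ Set.Iic (0:ℝ) := le_trans hx hy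
  have h1 : f x ≤ f y := hf hx0 hy hx
  have h2 : L ≤ f x := csInf_le hb ⟨x, hx0, rfl⟩
  rw [Real.dist_eq, abs_lt]
  constructor <;> linarith

set_option maxHeartbeats 4000000 in
/-- Critical-speed decay dichotomy at `-∞`: for `β = 2`, positive monotone solutions
of `-φ'' + 2φ' = φ - φ²` decaying to 0 behave like `c eˣ` or like `c |x| eˣ`. -/
theorem kpp_decay_dichotomy_critical (φ : ℝ → ℝ)
    (hC : ContDiff ℝ 2 φ)
    (hode : ∀ x ≤ (0 : ℝ), -deriv (deriv φ) x + 2 * deriv φ x = φ x - φ x ^ 2)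
    (hrange : ∀ x ≤ (0 : ℝ), 0 < φ x ∧ φ x < 1)
    (hlim : Tendsto φ atBot (nhds 0))
    (hmono : ∀ x ≤ (0 : ℝ), 0 < deriv φ x) :
    (∃ c > (0 : ℝ), Tendsto (fun x => φ x / Real.exp x) atBot (nhds c)) ∨
    (∃ c > (0 : ℝ), Tendsto (fun x => φ x / (|x| * Real.exp x)) atBot (nhds c)) := by
  have hφd : Differentiable ℝ φ := hC.differentiable (by norm_num)
  have hφ'd : Differentiable ℝ (deriv φ) := by
    have h1 : ContDiff ℝ (1+1) φ := by norm_num at hC ⊢; exact hC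
    exact ((contDiff_succ_iff_deriv.mp h1).2.2).differentiable (by norm_num)
  have hexp : ∀ x : ℝ, HasDerivAt (fun t => Real.exp (-t)) (-Real.exp (-x)) x := by
    intro x
    have h1 : HasDerivAt (fun t : ℝ => -t) (-1) x := by exact (hasDerivAt_id' x).neg
    exact ((Real.hasDerivAt_exp (-x)).comp x h1).congr_deriv (by ring)
  have hexp4 : ∀ x : ℝ, HasDerivAt (fun t : ℝ => Real.exp (t/4)) (Real.exp (x/4) * (1/4)) x := by
    intro x
    have h1 : HasDerivAt (fun t : ℝ => t/4) (1/4) x := by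
      simpa using (hasDerivAt_id x).div_const 4
    exact (Real.hasDerivAt_exp (x/4)).comp x h1
  have hexp2 : ∀ x : ℝ, HasDerivAt (fun t : ℝ => Real.exp (t/2)) (Real.exp (x/2) * (1/2)) x := by
    intro x
    have h1 : HasDerivAt (fun t : ℝ => t/2) (1/2) x := by
      simpa using (hasDerivAt_id x).div_const 2
    exact (Real.hasDerivAt_exp (x/2)).comp x h1
  set ψ : ℝ → ℝ := fun t => φ t * Real.exp (-t) with hψdef
  set h : ℝ → ℝ := fun t => (deriv φ t - φ t) * Real.exp (-t) with hhdef
  have hψ' : ∀ x : ℝ, HasDerivAt ψ (h x) x := by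
    intro x
    have h1 := ((hφd x).hasDerivAt).mul (hexp x)
    have h2 : HasDerivAt ψ (deriv φ x * Real.exp (-x) + φ x * -Real.exp (-x)) x := h1
    convert h2 using 1
    rw [hhdef]; ring
  have hψpos : ∀ x ≤ (0:ℝ), 0 < ψ x := fun x hx => mul_pos (hrange x hx).1 (Real.exp_pos _)
  have hhdiff : Differentiable ℝ h := by
    apply (hφ'd.sub hφd).mul
    exact Real.differentiable_exp.comp differentiable_neg
  have hh' : ∀ x ≤ (0:ℝ), HasDerivAt h ((φ x)^2 * Real.exp (-x)) x := by
    intro x hx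
    have h1 := (((hφ'd x).hasDerivAt).sub ((hφd x).hasDerivAt)).mul (hexp x)
    have h2 : HasDerivAt h ((deriv (deriv φ) x - deriv φ x) * Real.exp (-x)
        + (deriv φ x - φ x) * -Real.exp (-x)) x := h1
    convert h2 using 1
    have H := hode x hx
    linear_combination Real.exp (-x) * H
  have hpψ : ∀ t : ℝ, (φ t)^2 * Real.exp (-t) = (ψ t)^2 * Real.exp t := by
    intro t
    have e2 : Real.exp (-t) ^ 2 * Real.exp t = Real.exp (-t) := by
      rw [sq, ← Real.exp_add, ← Real.exp_add]; ring_nf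
    rw [hψdef]
    simp only [mul_pow]
    linear_combination (-(φ t^2)) * e2
  set v : ℝ → ℝ := fun t => (deriv φ t - φ t) / φ t with hvdef
  have hvm1 : ∀ x ≤ (0:ℝ), -1 < v x := by
    intro x hx
    have h1 := (hrange x hx).1
    have h2 := hmono x hx
    rw [hvdef]
    show -1 < (deriv φ x - φ x) / φ x
    rw [lt_div_iff₀ h1]
    linarith
  have hv' : ∀ x ≤ (0:ℝ), HasDerivAt v (φ x - (v x)^2) x := by
    intro x hx
    have hne := ne_of_gt (hrange x hx).1
    have h1 := (((hφ'd x).hasDerivAt).sub ((hφd x).hasDerivAt)).div ((hφd x).hasDerivAt) hne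
    refine h1.congr_deriv (Eq.symm ?_)
    have H := hode x hx
    rw [hvdef]
    simp only [Pi.sub_apply]
    field_simp
    linear_combination (φ x) * H
  have hvψ : ∀ x ≤ (0:ℝ), h x = v x * ψ x := by
    intro x hx
    have hne := ne_of_gt (hrange x hx).1
    rw [hhdef, hvdef, hψdef]
    field_simp
  -- region where φ is small
  obtain ⟨a₀, ha₀⟩ : ∃ a₀, ∀ x ≤ a₀, φ x < 1/32 := by
    have := hlim.eventually (gt_mem_nhds (by norm_num : (0:ℝ) < 1/32))
    exact eventually_atBot.mp this
  set a := min a₀ 0 with hadef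
  have ha0 : a ≤ 0 := min_le_right _ _
  have hasmall : ∀ x ≤ a, φ x < 1/32 := fun x hx => ha₀ x (le_trans hx (min_le_left _ _))
  have hdiv32 : ∀ t : ℝ, HasDerivAt (fun t : ℝ => t/32) (1/32) t := by
    intro t; simpa using (hasDerivAt_id t).div_const 32
  -- Step 1: there is a point where v ≥ -1/4
  have hC1 : ¬ (∀ t ≤ a, v t < -(1/4)) := by
    intro hall
    have hanti : AntitoneOn (fun t => v t + t/32) (Set.Iic a) := by
      apply antitoneOn_of_deriv_nonpos (convex_Iic a)
      · intro t ht
        exact ((hv' t (le_trans ht ha0)).add (hdiv32 t)).continuousAt.continuousWithinAt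
      · intro t ht
        rw [interior_Iic] at ht
        exact ((hv' t (le_trans ht.out.le ha0)).add
          (hdiv32 t)).differentiableAt.differentiableWithinAt
      · intro t ht
        rw [interior_Iic] at ht
        have ht0 : t ≤ 0 := le_trans ht.out.le ha0
        rw [show deriv (fun t => v t + t/32) t = _ from (((hv' t ht0).add (hdiv32 t))).deriv]
        have h1 := hall t ht.out.le
        have h2 := hasmall t ht.out.le
        nlinarith [h1, h2]
    have hmem1 : (a - 64 : ℝ) ∈ Set.Iic a := by simp only [Set.mem_Iic]; linarith
    have hmem2 : a ∈ Set.Iic a := Set.self_mem_Iic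
    have h3 := hanti hmem1 hmem2 (by linarith)
    have h4 := hvm1 a ha0
    have h5 := hall (a - 64) (by linarith)
    simp only at h3
    linarith
  push_neg at hC1
  obtain ⟨t₀, ht₀a, hvt₀⟩ := hC1
  have ht₀0 : t₀ ≤ 0 := le_trans ht₀a ha0
  -- Step 2: backward invariance of v ≥ -1/4
  have hvge : ∀ x ≤ t₀, -(1/4) ≤ v x := by
    intro x hx
    by_contra hlt
    push_neg at hlt
    have hxlt : x < t₀ := by
      rcases eq_or_lt_of_le hx with hcase | hcase
      · exfalso; rw [hcase] at hlt; linarith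
      · exact hcase
    set S := {t : ℝ | t ∈ Set.Icc x t₀ ∧ -(1/4) ≤ v t} with hSdef
    have hSne : S.Nonempty := ⟨t₀, ⟨le_of_lt hxlt, le_refl _⟩, hvt₀⟩
    have hSbdd : BddBelow S := ⟨x, fun t ht => ht.1.1⟩
    have hScl : IsClosed S := by
      have hcont : ContinuousOn v (Set.Icc x t₀) := fun t ht =>
        (hv' t (le_trans ht.2 ht₀0)).continuousAt.continuousWithinAt
      have hrw : S = Set.Icc x t₀ ∩ v ⁻¹' Set.Ici (-(1/4)) := by
        ext t; simp [hSdef, Set.mem_Icc]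
      rw [hrw]
      exact hcont.preimage_isClosed_of_isClosed isClosed_Icc isClosed_Ici
    set m := sInf S with hmdef
    have hmS : m ∈ S := hScl.csInf_mem hSne hSbdd
    have hxm : x < m := by
      rcases eq_or_lt_of_le hmS.1.1 with hcase | hcase
      · exfalso; rw [hcase] at hlt; linarith [hmS.2]
      · exact hcase
    have hbefore : ∀ t, x ≤ t → t < m → v t < -(1/4) := by
      intro t h1 h2
      by_contra hge
      push_neg at hge
      have htS : t ∈ S := ⟨⟨h1, le_trans h2.le hmS.1.2⟩, hge⟩
      exact absurd (csInf_le hSbdd htS) (not_le.mpr h2)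
    have hanti : StrictAntiOn v (Set.Icc x m) := by
      apply strictAntiOn_of_deriv_neg (convex_Icc x m)
      · intro t ht
        exact (hv' t (le_trans (le_trans ht.2 hmS.1.2) ht₀0)).continuousAt.continuousWithinAt
      · intro t ht
        rw [interior_Icc] at ht
        have ht0 : t ≤ 0 := le_trans (le_trans ht.2.le hmS.1.2) ht₀0
        rw [(hv' t ht0).deriv]
        have h1 := hbefore t ht.1.le ht.2
        have h2 := hasmall t (le_trans (le_trans ht.2.le hmS.1.2) ht₀a)
        nlinarith [h1, h2]
    have h6 := hanti ⟨le_refl x, hxm.le⟩ ⟨hxm.le, le_refl m⟩ hxm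
    linarith [hmS.2]
  -- Step 3: ψ has controlled growth backwards
  have hψbound : ∀ t ≤ t₀, ψ t * Real.exp (t/4) ≤ ψ t₀ * Real.exp (t₀/4) := by
    have hmon : MonotoneOn (fun t => ψ t * Real.exp (t/4)) (Set.Iic t₀) := by
      apply monotoneOn_of_deriv_nonneg (convex_Iic t₀)
      · intro t ht
        exact ((hψ' t).mul (hexp4 t)).continuousAt.continuousWithinAt
      · intro t ht
        exact ((hψ' t).mul (hexp4 t)).differentiableAt.differentiableWithinAt
      · intro t ht
        rw [interior_Iic] at ht
        have ht0 : t ≤ 0 := le_trans ht.out.le ht₀0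
        rw [show deriv (fun t => ψ t * Real.exp (t/4)) t = _ from ((hψ' t).mul (hexp4 t)).deriv]
        have h1 := hvge t ht.out.le
        have h2 := hψpos t ht0
        have h3 := hvψ t ht0
        have h4 := Real.exp_pos (t/4)
        have key : 0 ≤ ψ t * Real.exp (t/4) * (v t + 1/4) :=
          mul_nonneg (mul_nonneg h2.le h4.le) (by linarith)
        rw [h3]
        nlinarith [key]
    exact fun t ht => hmon (Set.mem_Iic.mpr ht) Set.self_mem_Iic ht
  -- Step 4: h is bounded below
  set Cst := (ψ t₀)^2 * Real.exp (t₀/2) with hCstdef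
  have hhlow : ∀ x ≤ t₀, h t₀ - 2*Cst*Real.exp (t₀/2) ≤ h x := by
    have hanti : AntitoneOn (fun t => h t - 2*Cst*Real.exp (t/2)) (Set.Iic t₀) := by
      apply antitoneOn_of_deriv_nonpos (convex_Iic t₀)
      · intro t ht
        exact ((hh' t (le_trans ht ht₀0)).sub ((hexp2 t).const_mul (2*Cst))).continuousAt.continuousWithinAt
      · intro t ht
        rw [interior_Iic] at ht
        exact ((hh' t (le_trans ht.out.le ht₀0)).sub
          ((hexp2 t).const_mul (2*Cst))).differentiableAt.differentiableWithinAt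
      · intro t ht
        rw [interior_Iic] at ht
        have ht0 : t ≤ 0 := le_trans ht.out.le ht₀0
        rw [show deriv (fun t => h t - 2*Cst*Real.exp (t/2)) t = _ from ((hh' t ht0).sub ((hexp2 t).const_mul (2*Cst))).deriv]
        have hb := hψbound t ht.out.le
        have h2 := (hψpos t ht0).le
        have h4 := (Real.exp_pos (t/4)).le
        have hsq : (ψ t * Real.exp (t/4))^2 ≤ (ψ t₀ * Real.exp (t₀/4))^2 :=
          pow_le_pow_left₀ (mul_nonneg h2 h4) hb 2
        have h5 := mul_le_mul_of_nonneg_right hsq (Real.exp_pos (t/2)).le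
        have e3 : Real.exp (t/4)^2 * Real.exp (t/2) = Real.exp t := by
          rw [sq, ← Real.exp_add, ← Real.exp_add]; ring_nf
        have e4 : Real.exp (t₀/4)^2 = Real.exp (t₀/2) := by
          rw [sq, ← Real.exp_add]; ring_nf
        have hB : Cst = (ψ t₀ * Real.exp (t₀/4))^2 := by
          rw [hCstdef, ← e4]
          exact (mul_pow (ψ t₀) (Real.exp (t₀/4)) 2).symm
        have hA : (φ t)^2 * Real.exp (-t) = (ψ t * Real.exp (t/4))^2 * Real.exp (t/2) := by
          rw [hpψ t, mul_pow (ψ t) (Real.exp (t/4)) 2, ← e3]; ring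
        rw [hA, hB]
        nlinarith [h5]
    intro x hx
    have h3 := hanti (Set.mem_Iic.mpr hx) Set.self_mem_Iic hx
    have h4 := (Real.exp_pos (x/2)).le
    have hCpos : 0 ≤ Cst := mul_nonneg (sq_nonneg _) (Real.exp_pos _).le
    nlinarith [h3, mul_nonneg hCpos h4]
  have hhmono : MonotoneOn h (Set.Iic 0) := by
    apply monotoneOn_of_deriv_nonneg (convex_Iic 0)
    · exact hhdiff.continuous.continuousOn
    · exact hhdiff.differentiableOn
    · intro t ht
      rw [interior_Iic] at ht
      rw [(hh' t ht.out.le).deriv]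
      positivity
  have hBdd : BddBelow (h '' Set.Iic 0) := by
    refine ⟨min (h t₀ - 2*Cst*Real.exp (t₀/2)) (h t₀), ?_⟩
    rintro z ⟨y, hy, rfl⟩
    rw [Set.mem_Iic] at hy
    rcases le_total y t₀ with hc | hc
    · exact le_trans (min_le_left _ _) (hhlow y hc)
    · exact le_trans (min_le_right _ _) (hhmono (Set.mem_Iic.mpr ht₀0) (Set.mem_Iic.mpr hy) hc)
  set L := sInf (h '' Set.Iic 0) with hLdef
  have hLtend : Tendsto h atBot (nhds L) := mono_limit_aux h hhmono hBdd
  have hLle : ∀ y ≤ (0:ℝ), L ≤ h y := fun y hy => csInf_le hBdd ⟨y, Set.mem_Iic.mpr hy, rfl⟩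
  have hne : (h '' Set.Iic 0).Nonempty := ⟨h 0, ⟨0, Set.self_mem_Iic, rfl⟩⟩
  have hlinL : ∀ t : ℝ, HasDerivAt (fun t : ℝ => L * t) L t := by
    intro t; simpa using (hasDerivAt_id t).const_mul L
  -- the auxiliary monotone map ψ - L t
  have hmonA : MonotoneOn (fun t => ψ t - L * t) (Set.Iic 0) := by
    apply monotoneOn_of_deriv_nonneg (convex_Iic 0)
    · intro t ht
      exact ((hψ' t).sub (hlinL t)).continuousAt.continuousWithinAt
    · intro t ht
      exact ((hψ' t).sub (hlinL t)).differentiableAt.differentiableWithinAt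
    · intro t ht
      rw [interior_Iic] at ht
      rw [show deriv (fun t => ψ t - L * t) t = _ from ((hψ' t).sub (hlinL t)).deriv]
      have := hLle t ht.out.le
      linarith
  rcases lt_trichotomy L 0 with hL | hL | hL
  · -- L < 0 : second branch
    right
    refine ⟨-L, by linarith, ?_⟩
    have hmain : Tendsto (fun x => ψ x / (-x)) atBot (nhds (-L)) := by
      rw [Metric.tendsto_nhds]
      intro ε hε
      set ε' := min (ε/2) (-L/2) with hε'def
      have hε'pos : 0 < ε' := lt_min (by linarith) (by linarith)
      have hε'le : ε' ≤ ε/2 := min_le_left _ _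
      have hε'L : ε' ≤ -L/2 := min_le_right _ _
      obtain ⟨z, hz, hzlt⟩ := exists_lt_of_csInf_lt hne (by linarith : L < L + ε')
      obtain ⟨x₁, hx₁0, rfl⟩ := hz
      have hlinLe : ∀ t : ℝ, HasDerivAt (fun t : ℝ => (L + ε') * t) (L + ε') t := by
        intro t; simpa using (hasDerivAt_id t).const_mul (L + ε')
      -- lower bound map is antitone on Iic x₁
      have hantiB : AntitoneOn (fun t => ψ t - (L + ε') * t) (Set.Iic x₁) := by
        apply antitoneOn_of_deriv_nonpos (convex_Iic x₁)
        · intro t ht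
          exact ((hψ' t).sub (hlinLe t)).continuousAt.continuousWithinAt
        · intro t ht
          exact ((hψ' t).sub (hlinLe t)).differentiableAt.differentiableWithinAt
        · intro t ht
          rw [interior_Iic] at ht
          rw [show deriv (fun t => ψ t - (L + ε') * t) t = _ from ((hψ' t).sub (hlinLe t)).deriv]
          have h1 : h t ≤ h x₁ := hhmono (Set.mem_Iic.mpr (le_trans ht.out.le hx₁0)) (Set.mem_Iic.mpr hx₁0) ht.out.le
          linarith
      set K₁ := ψ x₁ - L * x₁ with hK₁def
      set K₂ := ψ x₁ - (L + ε') * x₁ with hK₂def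
      set R := |K₁| + |K₂| with hRdef
      have hR0 : 0 ≤ R := by positivity
      refine eventually_atBot.2 ⟨min x₁ (-(2*R/ε + 1)), fun x hx => ?_⟩
      have hxx₁ : x ≤ x₁ := le_trans hx (min_le_left _ _)
      have hxs : x ≤ -(2*R/ε + 1) := le_trans hx (min_le_right _ _)
      have hspos : 0 < -x := by
        have h0 : 0 ≤ 2*R/ε := by positivity
        linarith
      have hsR : R < ε * (-x) / 2 := by
        have h1 : 2*R/ε + 1 ≤ -x := by linarith
        have h2 : ε * (2*R/ε + 1) = 2*R + ε := by field_simp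
        have h3 := mul_le_mul_of_nonneg_left h1 hε.le
        nlinarith [h2, h3]
      -- upper bound
      have hup : ψ x - L * x ≤ K₁ :=
        hmonA (Set.mem_Iic.mpr (le_trans hxx₁ hx₁0)) (Set.mem_Iic.mpr hx₁0) hxx₁
      -- lower bound
      have hlo : K₂ ≤ ψ x - (L + ε') * x :=
        hantiB (Set.mem_Iic.mpr hxx₁) Set.self_mem_Iic hxx₁
      rw [Real.dist_eq, abs_lt]
      have hK₁R : K₁ ≤ R := by
        have := abs_nonneg K₂; have := le_abs_self K₁; rw [hRdef]; linarith
      have hK₂R : -R ≤ K₂ := by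
        have := abs_nonneg K₁; have := neg_abs_le K₂; rw [hRdef]; linarith
      have hupper : ψ x / -x - -L < ε := by
        rw [sub_lt_iff_lt_add, div_lt_iff₀ hspos]
        nlinarith [hup, hsR, hK₁R, mul_pos hε hspos]
      have hlower : -ε < ψ x / -x - -L := by
        rw [lt_sub_iff_add_lt, lt_div_iff₀ hspos]
        nlinarith [hlo, hsR, hK₂R, hε'pos, hε'le,
          mul_nonneg (by linarith : (0:ℝ) ≤ ε/2 - ε') (le_of_lt hspos)]
      exact ⟨hlower, hupper⟩
    have heq : (fun x => ψ x / (-x)) =ᶠ[atBot] (fun x => φ x / (|x| * Real.exp x)) := by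
      refine eventually_atBot.2 ⟨-1, fun x hx => ?_⟩
      have hxneg : x < 0 := by linarith
      show ψ x / -x = φ x / (|x| * Real.exp x)
      simp only [hψdef]
      rw [abs_of_neg hxneg, Real.exp_neg]
      have hxne : x ≠ 0 := ne_of_lt hxneg
      field_simp
    exact hmain.congr' heq
  · -- L = 0 : first branch
    left
    have hstrict : StrictMonoOn h (Set.Iic 0) := by
      apply strictMonoOn_of_deriv_pos (convex_Iic 0)
      · exact hhdiff.continuous.continuousOn
      · intro t ht
        rw [interior_Iic] at ht
        rw [(hh' t ht.out.le).deriv]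
        have := (hrange t ht.out.le).1
        positivity
    have hpos : ∀ x ≤ (0:ℝ), 0 < h x := by
      intro x hx
      have h1 : h (x-1) < h x := hstrict (Set.mem_Iic.mpr (by linarith)) (Set.mem_Iic.mpr hx) (by linarith)
      have h2 := hLle (x-1) (by linarith)
      rw [hL] at h2
      linarith
    have hψmono : MonotoneOn ψ (Set.Iic 0) := by
      apply monotoneOn_of_deriv_nonneg (convex_Iic 0)
      · intro t ht; exact (hψ' t).continuousAt.continuousWithinAt
      · intro t ht; exact (hψ' t).differentiableAt.differentiableWithinAt
      · intro t ht
        rw [interior_Iic] at ht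
        rw [(hψ' t).deriv]
        exact (hpos t ht.out.le).le
    have hkey : ∀ x ≤ (0:ℝ), h x ≤ (ψ x)^2 * Real.exp x := by
      intro x hx
      have hlb : ∀ y ∈ Set.Iic (0:ℝ), h x - (ψ x)^2 * Real.exp x ≤ h y := by
        intro y hy
        rcases le_total y x with hc | hc
        · have hantiC : AntitoneOn (fun t => h t - (ψ x)^2 * Real.exp t) (Set.Iic x) := by
            apply antitoneOn_of_deriv_nonpos (convex_Iic x)
            · intro t ht
              exact ((hh' t (le_trans ht hx)).sub
                ((Real.hasDerivAt_exp t).const_mul ((ψ x)^2))).continuousAt.continuousWithinAt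
            · intro t ht
              rw [interior_Iic] at ht
              exact ((hh' t (le_trans ht.out.le hx)).sub
                ((Real.hasDerivAt_exp t).const_mul ((ψ x)^2))).differentiableAt.differentiableWithinAt
            · intro t ht
              rw [interior_Iic] at ht
              have ht0 : t ≤ 0 := le_trans ht.out.le hx
              rw [show deriv (fun t => h t - (ψ x)^2 * Real.exp t) t = _ from ((hh' t ht0).sub ((Real.hasDerivAt_exp t).const_mul ((ψ x)^2))).deriv]
              rw [hpψ t]
              have h1 : ψ t ≤ ψ x := hψmono (Set.mem_Iic.mpr ht0) (Set.mem_Iic.mpr hx) ht.out.le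
              have h2 := (hψpos t ht0).le
              have h3 := (Real.exp_pos t).le
              have h7 : ψ t * ψ t * Real.exp t ≤ ψ x * ψ x * Real.exp t :=
                mul_le_mul_of_nonneg_right (mul_self_le_mul_self h2 h1) h3
              nlinarith [h7]
          have h4 := hantiC (Set.mem_Iic.mpr hc) Set.self_mem_Iic hc
          simp only at h4
          have h5 := (Real.exp_pos y).le
          have h6 := sq_nonneg (ψ x)
          nlinarith [h4]
        · have h4 : h x ≤ h y := hhmono (Set.mem_Iic.mpr hx) (Set.mem_Iic.mpr hy) hc
          have h5 := (Real.exp_pos x).le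
          have h6 := sq_nonneg (ψ x)
          nlinarith [h4]
      have h7 : h x - (ψ x)^2 * Real.exp x ≤ L := by
        apply le_csInf hne
        rintro z ⟨y, hy, rfl⟩
        exact hlb y hy
      rw [hL] at h7
      linarith
    have hinvmono : MonotoneOn (fun t => (ψ t)⁻¹ + Real.exp t) (Set.Iic 0) := by
      apply monotoneOn_of_deriv_nonneg (convex_Iic 0)
      · intro t ht
        exact (((hψ' t).inv (ne_of_gt (hψpos t ht))).add (Real.hasDerivAt_exp t)).continuousAt.continuousWithinAt
      · intro t ht
        rw [interior_Iic] at ht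
        exact (((hψ' t).inv (ne_of_gt (hψpos t ht.out.le))).add
          (Real.hasDerivAt_exp t)).differentiableAt.differentiableWithinAt
      · intro t ht
        rw [interior_Iic] at ht
        have ht0 : t ≤ 0 := ht.out.le
        rw [show deriv (fun t => (ψ t)⁻¹ + Real.exp t) t = _ from (((hψ' t).inv (ne_of_gt (hψpos t ht0))).add (Real.hasDerivAt_exp t)).deriv]
        have h1 := hkey t ht0
        have h2 := hψpos t ht0
        have h3 : h t / (ψ t)^2 ≤ Real.exp t := by
          rw [div_le_iff₀ (by positivity : (0:ℝ) < (ψ t)^2)]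
          nlinarith [h1]
        have h4 : -h t / ψ t ^ 2 = -(h t / (ψ t)^2) := by ring
        rw [h4]
        linarith [h3]
    have hψlow : ∀ x ≤ (0:ℝ), ((ψ 0)⁻¹ + 1)⁻¹ ≤ ψ x := by
      intro x hx
      have h1 := hinvmono (Set.mem_Iic.mpr hx) Set.self_mem_Iic hx
      simp only [Real.exp_zero] at h1
      have h2 := hψpos x hx
      have h3 := hψpos 0 (le_refl 0)
      have h4 : (ψ x)⁻¹ ≤ (ψ 0)⁻¹ + 1 := by
        have := (Real.exp_pos x).le
        linarith [h1]
      have h5 : 0 < (ψ 0)⁻¹ + 1 := by positivity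
      rw [inv_le_iff_one_le_mul₀ h5] at *
      have h6 : ψ x * (ψ x)⁻¹ = 1 := mul_inv_cancel₀ (ne_of_gt h2)
      nlinarith [h4, h6]
    have hψBdd : BddBelow (ψ '' Set.Iic 0) := by
      refine ⟨((ψ 0)⁻¹ + 1)⁻¹, ?_⟩
      rintro z ⟨y, hy, rfl⟩
      exact hψlow y hy
    have hctend : Tendsto ψ atBot (nhds (sInf (ψ '' Set.Iic 0))) := mono_limit_aux ψ hψmono hψBdd
    have hψne : (ψ '' Set.Iic 0).Nonempty := ⟨ψ 0, ⟨0, Set.self_mem_Iic, rfl⟩⟩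
    have hcpos : 0 < sInf (ψ '' Set.Iic 0) := by
      have h1 : ((ψ 0)⁻¹ + 1)⁻¹ ≤ sInf (ψ '' Set.Iic 0) := by
        apply le_csInf hψne
        rintro z ⟨y, hy, rfl⟩
        exact hψlow y hy
      have h3 := hψpos 0 (le_refl 0)
      have h5 : 0 < ((ψ 0)⁻¹ + 1)⁻¹ := by positivity
      linarith
    refine ⟨sInf (ψ '' Set.Iic 0), hcpos, ?_⟩
    apply hctend.congr
    intro x
    show ψ x = φ x / Real.exp x
    simp only [hψdef]
    rw [Real.exp_neg]
    ring
  · -- L > 0 : impossible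
    exfalso
    set x := -(ψ 0 + 1)/L with hxdef
    have hx0 : x ≤ 0 := by
      rw [hxdef]
      apply div_nonpos_of_nonpos_of_nonneg
      · have := hψpos 0 (le_refl 0); linarith
      · linarith
    have h1 := hmonA (Set.mem_Iic.mpr hx0) Set.self_mem_Iic hx0
    simp only [mul_zero, sub_zero] at h1
    have h2 : L * x = -(ψ 0 + 1) := by
      rw [hxdef]
      field_simp
    have h3 := hψpos x hx0
    nlinarith [h1, h2, h3]
end

section
/- Let μ > 1/4. Then the system φ' = ψ, ψ' = ψ - μ(φ - φ²) has no trajectory (φ(x), ψ(x)) defined for all x ≤ 0 with 0 < φ(x) < 1 for all x < 0 and (φ(x), ψ(x)) → (0,0) as x → -∞. -/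
open Real Filter

/-- For `μ > 1/4` the origin is an unstable spiral: no trajectory of
`φ' = ψ, ψ' = ψ - μ(φ-φ²)` stays in the strip `0 < φ < 1` for all `x < 0` while
converging to `(0,0)` as `x → -∞`. -/
theorem spiral_no_positive_trajectory (μ : ℝ) (hμ : 1 / 4 < μ) :
    ¬ ∃ φ ψ : ℝ → ℝ,
      (∀ x ≤ (0 : ℝ), HasDerivAt φ (ψ x) x) ∧
      (∀ x ≤ (0 : ℝ), HasDerivAt ψ (ψ x - μ * (φ x - φ x ^ 2)) x) ∧
      (∀ x < (0 : ℝ), 0 < φ x ∧ φ x < 1) ∧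
      Tendsto φ atBot (nhds 0) ∧ Tendsto ψ atBot (nhds 0) := by
  rintro ⟨φ, ψ, hφ, hψ, hstrip, hφ0, -⟩
  have hμ0 : (0:ℝ) < μ := lt_trans (by norm_num) hμ
  set c : ℝ := (μ - 1/4)/2 with hc_def
  have hc : 0 < c := by rw [hc_def]; linarith
  set ω : ℝ := Real.sqrt c with hω_def
  have hω : 0 < ω := Real.sqrt_pos.mpr hc
  have hω2 : ω^2 = c := Real.sq_sqrt hc.le
  set ε : ℝ := c / μ with hε_def
  have hε : 0 < ε := div_pos hc hμ0
  have hμε : μ * ε = c := by rw [hε_def, mul_div_cancel₀ _ hμ0.ne']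
  -- eventually φ x < ε
  have hev : ∀ᶠ x in atBot, φ x < ε := hφ0.eventually_lt_const hε
  obtain ⟨X, hX⟩ := eventually_atBot.mp hev
  set b : ℝ := min X (-1) with hb_def
  have hb0 : b < 0 := lt_of_le_of_lt (min_le_right _ _) (by norm_num)
  have hbX : b ≤ X := min_le_left _ _
  have hπω : 0 < π / ω := div_pos Real.pi_pos hω
  set a : ℝ := b - π / ω with ha_def
  have hab : a < b := by rw [ha_def]; linarith
  have ha0 : a < 0 := hab.trans hb0
  set W : ℝ → ℝ := fun x => Real.exp (-x/2) *
      ((ψ x - φ x / 2) * Real.sin (ω * (x - a)) - φ x * ω * Real.cos (ω * (x - a)))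
    with hW_def
  have hW : ∀ x ∈ Set.Icc a b, HasDerivAt W
      (Real.exp (-x/2) * Real.sin (ω * (x - a)) * φ x * (1/4 - μ + ω^2 + μ * φ x)) x := by
    intro x hx
    have hx0 : x ≤ 0 := hx.2.trans hb0.le
    have h1 : HasDerivAt (fun y : ℝ => -y/2) (-1/2) x := by
      simpa using ((hasDerivAt_id x).neg.div_const 2)
    have hexp := h1.exp
    have h2 : HasDerivAt (fun y : ℝ => ω * (y - a)) ω x := by
      simpa using (((hasDerivAt_id x).sub_const a).const_mul ω)
    have hsin := h2.sin
    have hcos := h2.cos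
    have hφ' := hφ x hx0
    have hψ' := hψ x hx0
    have hA := (hψ'.sub (hφ'.div_const 2)).mul hsin
    have hB := (hφ'.mul_const ω).mul hcos
    have hG := hexp.mul (hA.sub hB)
    have hG' : HasDerivAt W _ x := hG
    convert hG' using 1
    simp only [Pi.sub_apply, Pi.mul_apply]
    ring
  have hderiv_nonpos : ∀ x ∈ interior (Set.Icc a b), deriv W x ≤ 0 := by
    rw [interior_Icc]
    intro x hx
    have hxIcc : x ∈ Set.Icc a b := Set.Ioo_subset_Icc_self hx
    rw [(hW x hxIcc).deriv]
    have hx0 : x < 0 := hx.2.trans hb0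
    have hφpos : 0 < φ x := (hstrip x hx0).1
    have hφlt : φ x < ε := hX x (hx.2.le.trans hbX)
    have hsin_nonneg : 0 ≤ Real.sin (ω * (x - a)) := by
      apply Real.sin_nonneg_of_nonneg_of_le_pi
      · have : 0 ≤ x - a := by linarith [hx.1]
        positivity
      · have h1 : x - a ≤ π / ω := by rw [ha_def] at hx ⊢; linarith [hx.2]
        have h2 : ω * (x - a) ≤ ω * (π / ω) := by
          exact mul_le_mul_of_nonneg_left h1 hω.le
        rwa [mul_div_cancel₀ _ hω.ne'] at h2
    have hbr : 1/4 - μ + ω^2 + μ * φ x ≤ 0 := by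
      have : μ * φ x ≤ μ * ε := mul_le_mul_of_nonneg_left hφlt.le hμ0.le
      rw [hμε] at this
      rw [hω2, hc_def]
      linarith
    have hnn : 0 ≤ Real.exp (-x/2) * Real.sin (ω * (x - a)) * φ x := by positivity
    exact mul_nonpos_of_nonneg_of_nonpos hnn hbr
  have hcont : ContinuousOn W (Set.Icc a b) := fun x hx =>
    (hW x hx).continuousAt.continuousWithinAt
  have hdiff : DifferentiableOn ℝ W (interior (Set.Icc a b)) := by
    rw [interior_Icc]
    exact fun x hx =>
      (hW x (Set.Ioo_subset_Icc_self hx)).differentiableAt.differentiableWithinAt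
  have hanti : AntitoneOn W (Set.Icc a b) :=
    antitoneOn_of_deriv_nonpos (convex_Icc a b) hcont hdiff hderiv_nonpos
  have hba : W b ≤ W a :=
    hanti (Set.left_mem_Icc.mpr hab.le) (Set.right_mem_Icc.mpr hab.le) hab.le
  have hφa : 0 < φ a := (hstrip a ha0).1
  have hφb : 0 < φ b := (hstrip b hb0).1
  have hWa : W a < 0 := by
    have : W a = -(Real.exp (-a/2) * (φ a * ω)) := by
      rw [hW_def]; simp [sub_self]
    rw [this]
    have : 0 < Real.exp (-a/2) * (φ a * ω) := by positivity
    linarith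
  have hWb : 0 < W b := by
    have hθ : ω * (b - a) = π := by
      rw [ha_def]; rw [show b - (b - π/ω) = π/ω by ring, mul_div_cancel₀ _ hω.ne']
    have : W b = Real.exp (-b/2) * (φ b * ω) := by
      rw [hW_def]; simp only [hθ, Real.sin_pi, Real.cos_pi]; ring
    rw [this]
    positivity
  linarith
end

section
/- Let μ₁ > μ₂ > 0 and suppose Ψ₁, Ψ₂: (0,1) → (0,∞) are C¹ functions satisfying Ψᵢ'(φ) = 1 - μᵢ (φ - φ²)/Ψᵢ(φ) for φ ∈ (0,1), with Ψ₁(φ) > Ψ₂(φ) for φ near 0 and Ψ₁(φ) < Ψ₂(φ) for φ near 1. Then there is exactly one φ₀ ∈ (0,1) with Ψ₁(φ₀) = Ψ₂(φ₀); moreover Ψ₁ > Ψ₂ on (0, φ₀) and Ψ₁ < Ψ₂ on (φ₀, 1). -/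
open Real Filter Topology

/-- Two phase-plane trajectory graphs `ψ = Ψᵢ(φ)` with slopes
`Ψᵢ' = 1 - μᵢ(φ-φ²)/Ψᵢ`, `μ₁ > μ₂ > 0`, with `Ψ₁ > Ψ₂` near 0 and `Ψ₁ < Ψ₂` near 1,
cross exactly once. -/
theorem trajectory_single_crossing (μ₁ μ₂ : ℝ) (hμ2 : 0 < μ₂) (hμ : μ₂ < μ₁)
    (Ψ₁ Ψ₂ : ℝ → ℝ)
    (hpos1 : ∀ φ ∈ Set.Ioo (0 : ℝ) 1, 0 < Ψ₁ φ)
    (hpos2 : ∀ φ ∈ Set.Ioo (0 : ℝ) 1, 0 < Ψ₂ φ)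
    (hd1 : ∀ φ ∈ Set.Ioo (0 : ℝ) 1, HasDerivAt Ψ₁ (1 - μ₁ * (φ - φ ^ 2) / Ψ₁ φ) φ)
    (hd2 : ∀ φ ∈ Set.Ioo (0 : ℝ) 1, HasDerivAt Ψ₂ (1 - μ₂ * (φ - φ ^ 2) / Ψ₂ φ) φ)
    (hnear0 : ∃ ε > (0 : ℝ), ∀ φ ∈ Set.Ioo (0 : ℝ) ε, Ψ₂ φ < Ψ₁ φ)
    (hnear1 : ∃ ε > (0 : ℝ), ∀ φ ∈ Set.Ioo (1 - ε) (1 : ℝ), Ψ₁ φ < Ψ₂ φ) :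
    ∃ φ₀ ∈ Set.Ioo (0 : ℝ) 1, Ψ₁ φ₀ = Ψ₂ φ₀ ∧
      (∀ φ ∈ Set.Ioo (0 : ℝ) φ₀, Ψ₂ φ < Ψ₁ φ) ∧
      (∀ φ ∈ Set.Ioo φ₀ (1 : ℝ), Ψ₁ φ < Ψ₂ φ) ∧
      (∀ φ ∈ Set.Ioo (0 : ℝ) 1, Ψ₁ φ = Ψ₂ φ → φ = φ₀) := by
  obtain ⟨ε₀, hε₀, h0⟩ := hnear0
  obtain ⟨ε₁, hε₁, h1⟩ := hnear1
  set g : ℝ → ℝ := fun φ => Ψ₁ φ - Ψ₂ φ with hgdef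
  have hgcOn : ∀ s, s ⊆ Set.Ioo (0:ℝ) 1 → ContinuousOn g s := fun s hs x hx =>
    (((hd1 x (hs hx)).continuousAt.sub (hd2 x (hs hx)).continuousAt)).continuousWithinAt
  -- IVT helpers
  have ivt : ∀ u v : ℝ, u < v → Set.Icc u v ⊆ Set.Ioo (0:ℝ) 1 → 0 < g u → g v < 0 →
      ∃ z ∈ Set.Ioo u v, g z = 0 := by
    intro u v huv hsub hu hv
    obtain ⟨z, hz, hz0⟩ := intermediate_value_Ioo' (le_of_lt huv) (hgcOn _ hsub)
      (Set.mem_Ioo.mpr ⟨hv, hu⟩)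
    exact ⟨z, hz, hz0⟩
  have ivt' : ∀ u v : ℝ, u < v → Set.Icc u v ⊆ Set.Ioo (0:ℝ) 1 → g u < 0 → 0 < g v →
      ∃ z ∈ Set.Ioo u v, g z = 0 := by
    intro u v huv hsub hu hv
    obtain ⟨z, hz, hz0⟩ := intermediate_value_Ioo (le_of_lt huv) (hgcOn _ hsub)
      (Set.mem_Ioo.mpr ⟨hu, hv⟩)
    exact ⟨z, hz, hz0⟩
  -- local sign behaviour at any zero of g
  have key : ∀ p ∈ Set.Ioo (0:ℝ) 1, g p = 0 →
      (∀ᶠ x in 𝓝[>] p, g x < 0) ∧ (∀ᶠ x in 𝓝[<] p, 0 < g x) := by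
    intro p hp hgp
    have hΨ : Ψ₁ p = Ψ₂ p := by
      have := hgp; simp only [hgdef, sub_eq_zero] at this; exact this
    have hf : 0 < p - p ^ 2 := by nlinarith [hp.1, hp.2]
    have hΨp := hpos1 p hp
    have hder : HasDerivAt g ((μ₂ - μ₁) * (p - p ^ 2) / Ψ₁ p) p := by
      have h := (hd1 p hp).sub (hd2 p hp)
      have heq : (μ₂ - μ₁) * (p - p ^ 2) / Ψ₁ p
          = 1 - μ₁ * (p - p ^ 2) / Ψ₁ p - (1 - μ₂ * (p - p ^ 2) / Ψ₂ p) := by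
        rw [← hΨ]
        ring
      rw [heq]; exact h
    have hdneg : (μ₂ - μ₁) * (p - p ^ 2) / Ψ₁ p < 0 := by
      apply div_neg_of_neg_of_pos _ hΨp
      nlinarith
    have hslope := hasDerivAt_iff_tendsto_slope.mp hder
    have hev : ∀ᶠ x in 𝓝[≠] p, slope g p x < 0 := hslope.eventually_lt_const hdneg
    constructor
    · have h1 : ∀ᶠ x in 𝓝[>] p, slope g p x < 0 :=
        hev.filter_mono (nhdsWithin_mono p (fun x hx => ne_of_gt hx))
      filter_upwards [h1, self_mem_nhdsWithin] with x hx hxp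
      rw [slope_def_field, hgp, sub_zero] at hx
      rcases div_neg_iff.mp hx with ⟨_, h⟩ | ⟨h, _⟩
      · linarith [sub_pos.mpr (Set.mem_Ioi.mp hxp)]
      · exact h
    · have h1 : ∀ᶠ x in 𝓝[<] p, slope g p x < 0 :=
        hev.filter_mono (nhdsWithin_mono p (fun x hx => ne_of_lt hx))
      filter_upwards [h1, self_mem_nhdsWithin] with x hx hxp
      rw [slope_def_field, hgp, sub_zero] at hx
      rcases div_neg_iff.mp hx with ⟨h, _⟩ | ⟨_, h⟩
      · exact h
      · linarith [sub_neg.mpr (Set.mem_Iio.mp hxp)]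
  -- uniqueness of zeros
  have uniq : ∀ p ∈ Set.Ioo (0:ℝ) 1, ∀ q ∈ Set.Ioo (0:ℝ) 1, g p = 0 → g q = 0 → p = q := by
    have main : ∀ p ∈ Set.Ioo (0:ℝ) 1, ∀ q ∈ Set.Ioo (0:ℝ) 1,
        g p = 0 → g q = 0 → p < q → False := by
      intro p hp q hq hgp hgq hpq
      obtain ⟨x, hgx, hx⟩ :=
        ((key p hp hgp).1.and (Filter.eventually_of_mem
          (Ioo_mem_nhdsGT_of_mem ⟨le_refl p, hpq⟩) (fun x hx => hx))).exists
      obtain ⟨y, hgy, hy⟩ :=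
        ((key q hq hgq).2.and (Filter.eventually_of_mem
          (Ioo_mem_nhdsLT_of_mem ⟨hx.2, le_refl q⟩) (fun x hx => hx))).exists
      have hxy : x < y := hy.1
      have hsub : Set.Icc x y ⊆ Set.Ioo (0:ℝ) 1 := fun z hz =>
        ⟨lt_of_lt_of_le (lt_trans hp.1 hx.1) hz.1, lt_of_le_of_lt hz.2 (lt_trans hy.2 hq.2)⟩
      obtain ⟨r₁, hr₁, hgr₁⟩ := ivt' x y hxy hsub hgx hgy
      set Z : Set ℝ := {z ∈ Set.Icc x y | g z = 0} with hZdef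
      have hZne : Z.Nonempty := ⟨r₁, ⟨le_of_lt hr₁.1, le_of_lt hr₁.2⟩, hgr₁⟩
      have hZcl : IsClosed Z :=
        (hgcOn _ hsub).preimage_isClosed_of_isClosed isClosed_Icc isClosed_singleton
      have hZcpt : IsCompact Z :=
        isCompact_Icc.of_isClosed_subset hZcl (fun z hz => hz.1)
      have hrZ : sSup Z ∈ Z := hZcpt.sSup_mem hZne
      set r : ℝ := sSup Z with hrdef
      have hgr : g r = 0 := hrZ.2
      have hrIcc : r ∈ Set.Icc x y := hrZ.1
      have hry : r < y := lt_of_le_of_ne hrIcc.2 (fun h => by rw [h] at hgr; linarith)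
      have hr01 : r ∈ Set.Ioo (0:ℝ) 1 := hsub hrIcc
      obtain ⟨w, hgw, hw⟩ :=
        ((key r hr01 hgr).1.and (Filter.eventually_of_mem
          (Ioo_mem_nhdsGT_of_mem ⟨le_refl r, hry⟩) (fun x hx => hx))).exists
      have hsub2 : Set.Icc w y ⊆ Set.Ioo (0:ℝ) 1 := fun z hz =>
        hsub ⟨le_trans (le_trans hrIcc.1 (le_of_lt hw.1)) hz.1, hz.2⟩
      obtain ⟨s, hs, hgs⟩ := ivt' w y hw.2 hsub2 hgw hgy
      have hsZ : s ∈ Z :=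
        ⟨⟨le_trans hrIcc.1 (le_of_lt (lt_trans hw.1 hs.1)), le_of_lt hs.2⟩, hgs⟩
      have : s ≤ r := le_csSup (hZcpt.bddAbove) hsZ
      linarith [hw.1, hs.1]
    intro p hp q hq hgp hgq
    rcases lt_trichotomy p q with h | h | h
    · exact absurd (main p hp q hq hgp hgq h) not_false
    · exact h
    · exact absurd (main q hq p hp hgq hgp h) not_false
  -- existence of a zero
  set a : ℝ := min ε₀ 1 / 3 with hadef
  set b : ℝ := 1 - min ε₁ 1 / 3 with hbdef
  have hmin0 : 0 < min ε₀ 1 := lt_min hε₀ one_pos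
  have hmin1 : 0 < min ε₁ 1 := lt_min hε₁ one_pos
  have ha01 : a ∈ Set.Ioo (0:ℝ) 1 := by
    constructor
    · positivity
    · have : min ε₀ 1 ≤ 1 := min_le_right _ _
      simp only [hadef]; linarith
  have hb01 : b ∈ Set.Ioo (0:ℝ) 1 := by
    have : min ε₁ 1 ≤ 1 := min_le_right _ _
    constructor <;> (simp only [hbdef]; linarith)
  have hab : a < b := by
    have h1 : min ε₀ 1 ≤ 1 := min_le_right _ _
    have h2 : min ε₁ 1 ≤ 1 := min_le_right _ _
    simp only [hadef, hbdef]; linarith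
  have hga : 0 < g a := by
    have := h0 a ⟨ha01.1, by
      have : min ε₀ 1 ≤ ε₀ := min_le_left _ _
      simp only [hadef]; linarith⟩
    simp only [hgdef, sub_pos]; exact this
  have hgb : g b < 0 := by
    have := h1 b ⟨by
      have : min ε₁ 1 ≤ ε₁ := min_le_left _ _
      simp only [hbdef]; linarith, hb01.2⟩
    simp only [hgdef, sub_neg]; exact this
  have hsubab : Set.Icc a b ⊆ Set.Ioo (0:ℝ) 1 := fun z hz =>
    ⟨lt_of_lt_of_le ha01.1 hz.1, lt_of_le_of_lt hz.2 hb01.2⟩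
  obtain ⟨φ₀, hφ₀ab, hgφ₀⟩ := ivt a b hab hsubab hga hgb
  have hφ₀ : φ₀ ∈ Set.Ioo (0:ℝ) 1 := hsubab ⟨le_of_lt hφ₀ab.1, le_of_lt hφ₀ab.2⟩
  refine ⟨φ₀, hφ₀, sub_eq_zero.mp hgφ₀, ?_, ?_, ?_⟩
  · -- Ψ₂ < Ψ₁ on (0, φ₀)
    intro φ hφ
    have hφ01 : φ ∈ Set.Ioo (0:ℝ) 1 := ⟨hφ.1, lt_trans hφ.2 hφ₀.2⟩
    rcases lt_trichotomy (g φ) 0 with hneg | hzero | hposφ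
    · exfalso
      set c : ℝ := min φ (min ε₀ 1) / 2 with hcdef
      have hc0 : 0 < c := by
        have h1 : 0 < min φ (min ε₀ 1) := lt_min hφ01.1 hmin0
        simp only [hcdef]; linarith
      have hcφ : c < φ := by
        have : min φ (min ε₀ 1) ≤ φ := min_le_left _ _
        simp only [hcdef]; linarith
      have hcε : c < ε₀ := by
        have h1 : min φ (min ε₀ 1) ≤ min ε₀ 1 := min_le_right _ _
        have h2 : min ε₀ 1 ≤ ε₀ := min_le_left _ _
        simp only [hcdef]; linarith
      have hgc : 0 < g c := by
        have := h0 c ⟨hc0, hcε⟩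
        simp only [hgdef, sub_pos]; exact this
      have hsubc : Set.Icc c φ ⊆ Set.Ioo (0:ℝ) 1 := fun z hz =>
        ⟨lt_of_lt_of_le hc0 hz.1, lt_of_le_of_lt hz.2 hφ01.2⟩
      obtain ⟨z, hz, hgz⟩ := ivt c φ hcφ hsubc hgc hneg
      have hz01 : z ∈ Set.Ioo (0:ℝ) 1 := hsubc ⟨le_of_lt hz.1, le_of_lt hz.2⟩
      have := uniq z hz01 φ₀ hφ₀ hgz hgφ₀
      linarith [hz.2, hφ.2]
    · exfalso
      have := uniq φ hφ01 φ₀ hφ₀ hzero hgφ₀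
      linarith [hφ.2]
    · simpa [hgdef, sub_pos] using hposφ
  · -- Ψ₁ < Ψ₂ on (φ₀, 1)
    intro φ hφ
    have hφ01 : φ ∈ Set.Ioo (0:ℝ) 1 := ⟨lt_trans hφ₀.1 hφ.1, hφ.2⟩
    rcases lt_trichotomy (g φ) 0 with hneg | hzero | hposφ
    · simpa [hgdef, sub_neg] using hneg
    · exfalso
      have := uniq φ hφ01 φ₀ hφ₀ hzero hgφ₀
      linarith [hφ.1]
    · exfalso
      set c : ℝ := (max φ (1 - min ε₁ 1) + 1) / 2 with hcdef
      have hφle : φ ≤ max φ (1 - min ε₁ 1) := le_max_left _ _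
      have hmle : 1 - min ε₁ 1 ≤ max φ (1 - min ε₁ 1) := le_max_right _ _
      have hmax1 : max φ (1 - min ε₁ 1) < 1 := max_lt hφ01.2 (by linarith)
      have hφc : φ < c := by simp only [hcdef]; linarith
      have hc1 : c < 1 := by simp only [hcdef]; linarith
      have hcε : 1 - ε₁ < c := by
        have : min ε₁ 1 ≤ ε₁ := min_le_left _ _
        simp only [hcdef]; linarith
      have hgc : g c < 0 := by
        have := h1 c ⟨hcε, hc1⟩
        simp only [hgdef, sub_neg]; exact this
      have hsubc : Set.Icc φ c ⊆ Set.Ioo (0:ℝ) 1 := fun z hz =>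
        ⟨lt_of_lt_of_le hφ01.1 hz.1, lt_of_le_of_lt hz.2 hc1⟩
      obtain ⟨z, hz, hgz⟩ := ivt φ c hφc hsubc hposφ hgc
      have hz01 : z ∈ Set.Ioo (0:ℝ) 1 := hsubc ⟨le_of_lt hz.1, le_of_lt hz.2⟩
      have := uniq z hz01 φ₀ hφ₀ hgz hgφ₀
      linarith [hz.1, hφ.1]
  · intro φ hφ hΨeq
    exact uniq φ hφ φ₀ hφ₀ (sub_eq_zero.mpr hΨeq) hgφ₀
end

section
/- Let β_U ≥ 2 > β_L > 0 with a_L β_L = a_U β_U, and let (φ₁, φ₂) and (ψ₁, ψ₂) be two solutions of the two-branch stationary junction problem, both with strictly positive components, both satisfying φ₂(x), ψ₂(x) = O(e^{k x}) as x → -∞ with k = ½(β_U + √(β_U² - 4)), and with junction values α₁ ≤ α₂ respectively. If for M* := inf{M > 0 : M(φ₁,φ₂) ≥ (ψ₁,ψ₂) componentwise} one has M* > 1, then a contradiction arises; consequently α₁ = α₂, i.e. two such 'fast-decaying' solutions must have the same junction value. -/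
open Real Filter Set

section Infra
variable {f u w : ℝ → ℝ} {b : ℝ}

lemma cd2_diff (hf : ContDiff ℝ 2 f) : Differentiable ℝ f := hf.differentiable (by norm_num)

lemma cd2_diff_deriv (hf : ContDiff ℝ 2 f) : Differentiable ℝ (deriv f) := by
  have h2 : ContDiff ℝ (1+1) f := by norm_num at hf ⊢; exact hf
  exact ((contDiff_succ_iff_deriv).mp h2).2.2.differentiable one_ne_zero

lemma cd2_cont_deriv2 (hf : ContDiff ℝ 2 f) : Continuous (deriv (deriv f)) := by
  have h2 : ContDiff ℝ (1+1) f := by norm_num at hf ⊢; exact hf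
  exact ((contDiff_succ_iff_deriv).mp h2).2.2.continuous_deriv le_rfl

/-- The ODE in rearranged form `f'' = b f' - f + f²` on a set. -/
def ODE2 (b : ℝ) (f : ℝ → ℝ) (s : Set ℝ) : Prop :=
  ∀ x ∈ s, deriv (deriv f) x = b * deriv f x - f x + f x ^ 2

lemma ODE2.mono {s t : Set ℝ} (h : ODE2 b f s) (hts : t ⊆ s) : ODE2 b f t :=
  fun x hx => h x (hts hx)

lemma ODE2.closure {s : Set ℝ} (hf : ContDiff ℝ 2 f) (h : ODE2 b f s) :
    ODE2 b f (closure s) := by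
  have : EqOn (fun x => deriv (deriv f) x) (fun x => b * deriv f x - f x + f x ^ 2) s := h
  exact this.closure (cd2_cont_deriv2 hf)
    (((cd2_diff_deriv hf).continuous.const_smul b).sub (cd2_diff hf).continuous
      |>.add ((cd2_diff hf).continuous.pow 2))

/-- Wronskian-type quantity `T = (w' u - w u') e^{-bx}` and its derivative. -/
lemma T_hasDerivAt (hu : ContDiff ℝ 2 u) (hw : ContDiff ℝ 2 w) {x : ℝ}
    (hux : deriv (deriv u) x = b * deriv u x - u x + u x ^ 2)
    (hwx : deriv (deriv w) x = b * deriv w x - w x + w x ^ 2) :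
    HasDerivAt (fun t => (deriv w t * u t - w t * deriv u t) * Real.exp (-b * t))
      (Real.exp (-b * x) * (u x * w x * (w x - u x))) x := by
  have hu1 : HasDerivAt u (deriv u x) x := (cd2_diff hu x).hasDerivAt
  have hw1 : HasDerivAt w (deriv w x) x := (cd2_diff hw x).hasDerivAt
  have hdu : HasDerivAt (deriv u) (deriv (deriv u) x) x := (cd2_diff_deriv hu x).hasDerivAt
  have hdw : HasDerivAt (deriv w) (deriv (deriv w) x) x := (cd2_diff_deriv hw x).hasDerivAt
  have hσ : HasDerivAt (fun t => deriv w t * u t - w t * deriv u t)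
      (deriv (deriv w) x * u x + deriv w x * deriv u x
        - (deriv w x * deriv u x + w x * deriv (deriv u) x)) x := (hdw.mul hu1).sub (hw1.mul hdu)
  have hexp : HasDerivAt (fun t : ℝ => Real.exp (-b * t)) (Real.exp (-b * x) * (-b)) x := by
    have h := ((hasDerivAt_id x).const_mul (-b)).exp
    have : Real.exp (-b * id x) * (-b * 1) = Real.exp (-b * x) * (-b) := by simp
    simpa [this] using h
  have := hσ.mul hexp
  refine HasDerivAt.congr_deriv this ?_
  rw [hux, hwx]; ring

lemma cont_integrand (hu : ContDiff ℝ 2 u) (hw : ContDiff ℝ 2 w) :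
    Continuous (fun t => Real.exp (-b * t) * (u t * w t * (w t - u t))) := by
  exact (Real.continuous_exp.comp (continuous_const.mul continuous_id)).mul
    (((cd2_diff hu).continuous.mul (cd2_diff hw).continuous).mul
      ((cd2_diff hw).continuous.sub (cd2_diff hu).continuous))

lemma T_integral (hu : ContDiff ℝ 2 u) (hw : ContDiff ℝ 2 w) {x₁ x₂ : ℝ} (h12 : x₁ ≤ x₂)
    (hR : ODE2 b u (Icc x₁ x₂)) (hRw : ODE2 b w (Icc x₁ x₂)) :
    (deriv w x₂ * u x₂ - w x₂ * deriv u x₂) * Real.exp (-b * x₂)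
      - (deriv w x₁ * u x₁ - w x₁ * deriv u x₁) * Real.exp (-b * x₁)
      = ∫ t in x₁..x₂, Real.exp (-b * t) * (u t * w t * (w t - u t)) := by
  refine (intervalIntegral.integral_eq_sub_of_hasDerivAt
      (f := fun t => (deriv w t * u t - w t * deriv u t) * Real.exp (-b * t))
      (f' := fun t => Real.exp (-b * t) * (u t * w t * (w t - u t))) (fun x hx => ?_) ?_).symm
  · rw [uIcc_of_le h12] at hx
    exact T_hasDerivAt hu hw (hR x hx) (hRw x hx)
  · exact (cont_integrand hu hw).intervalIntegrable _ _

/-- If `z x₀ = 0` and `z > 0` on `(a, x₀)`, then `deriv z x₀ ≤ 0`. -/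
lemma deriv_nonpos_at_zero {z : ℝ → ℝ} {a x₀ : ℝ} (ha : a < x₀)
    (hd : DifferentiableAt ℝ z x₀) (h0 : z x₀ = 0)
    (hpos : ∀ x ∈ Ioo a x₀, 0 < z x) : deriv z x₀ ≤ 0 := by
  have h1 : HasDerivWithinAt z (deriv z x₀) (Iio x₀) x₀ := hd.hasDerivAt.hasDerivWithinAt
  rw [hasDerivWithinAt_iff_tendsto_slope,
    Set.diff_singleton_eq_self (notMem_Iio.mpr le_rfl)] at h1
  refine le_of_tendsto h1 ?_
  filter_upwards [Ioo_mem_nhdsLT_of_mem (Set.right_mem_Ioc.mpr ha)] with y hy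
  have hz : 0 < z y := hpos y hy
  have : slope z x₀ y = z y / (y - x₀) := by
    rw [slope_def_field]; rw [h0]; ring_nf
  rw [this]
  exact le_of_lt (div_neg_of_pos_of_neg hz (by linarith [hy.2]))

/-- If `z x₀ = 0` and `z > 0` on `(x₀, a)`, then `deriv z x₀ ≥ 0`. -/
lemma deriv_nonneg_at_zero {z : ℝ → ℝ} {a x₀ : ℝ} (ha : x₀ < a)
    (hd : DifferentiableAt ℝ z x₀) (h0 : z x₀ = 0)
    (hpos : ∀ x ∈ Ioo x₀ a, 0 < z x) : 0 ≤ deriv z x₀ := by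
  have h1 : HasDerivWithinAt z (deriv z x₀) (Ioi x₀) x₀ := hd.hasDerivAt.hasDerivWithinAt
  rw [hasDerivWithinAt_iff_tendsto_slope,
    Set.diff_singleton_eq_self (notMem_Ioi.mpr le_rfl)] at h1
  refine ge_of_tendsto h1 ?_
  filter_upwards [Ioo_mem_nhdsGT_of_mem (Set.left_mem_Ico.mpr ha)] with y hy
  have hz : 0 < z y := hpos y hy
  have : slope z x₀ y = z y / (y - x₀) := by
    rw [slope_def_field]; rw [h0]; ring_nf
  rw [this]
  exact le_of_lt (div_pos hz (by linarith [hy.1]))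

lemma deriv_z {u w : ℝ → ℝ} (hu : ContDiff ℝ 2 u) (hw : ContDiff ℝ 2 w) (x : ℝ) :
    deriv (fun t => w t - u t) x = deriv w x - deriv u x :=
  deriv_sub (cd2_diff hw x) (cd2_diff hu x)

/-- Between two consecutive zeros of `z = w - u`, `z` cannot be positive. -/
lemma no_zero_gap (hu : ContDiff ℝ 2 u) (hw : ContDiff ℝ 2 w) {p q : ℝ} (hpq : p < q)
    (hRu : ODE2 b u (Icc p q)) (hRw : ODE2 b w (Icc p q))
    (hupos : ∀ x ∈ Icc p q, 0 < u x)
    (hzp : w p = u p) (hzq : w q = u q)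
    (hzpos : ∀ x ∈ Ioo p q, u x < w x) : False := by
  set z := fun t => w t - u t with hz
  have hdz : ∀ x, deriv z x = deriv w x - deriv u x := deriv_z hu hw
  have hzdiff : ∀ x : ℝ, DifferentiableAt ℝ z x := fun x => (cd2_diff hw x).sub (cd2_diff hu x)
  have hzppos : ∀ x ∈ Ioo p q, 0 < z x := fun x hx => sub_pos.mpr (hzpos x hx)
  have hdzp : 0 ≤ deriv z p := deriv_nonneg_at_zero hpq (hzdiff p) (by simp [hz, hzp]) hzppos
  have hdzq : deriv z q ≤ 0 := deriv_nonpos_at_zero hpq (hzdiff q) (by simp [hz, hzq]) hzppos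
  have hint := T_integral hu hw hpq.le hRu hRw
  have hpos : 0 < ∫ t in p..q, Real.exp (-b * t) * (u t * w t * (w t - u t)) := by
    refine intervalIntegral.intervalIntegral_pos_of_pos_on
      ((cont_integrand hu hw).intervalIntegrable _ _) (fun x hx => ?_) hpq
    have h1 := hupos x (Ioo_subset_Icc_self hx)
    have h2 := hzpos x hx
    have h3 : 0 < w x := h1.trans h2
    have h4 : 0 < w x - u x := sub_pos.mpr h2
    positivity
  rw [← hint] at hpos
  have hσp : deriv w p * u p - w p * deriv u p = u p * deriv z p := by
    rw [hdz, hzp]; ring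
  have hσq : deriv w q * u q - w q * deriv u q = u q * deriv z q := by
    rw [hdz, hzq]; ring
  have hup : 0 < u p := hupos p (left_mem_Icc.mpr hpq.le)
  have huq : 0 < u q := hupos q (right_mem_Icc.mpr hpq.le)
  have hTp : 0 ≤ (deriv w p * u p - w p * deriv u p) * Real.exp (-b * p) := by
    rw [hσp]; positivity
  have hTq : (deriv w q * u q - w q * deriv u q) * Real.exp (-b * q) ≤ 0 := by
    rw [hσq]
    have : u q * deriv z q ≤ 0 := mul_nonpos_of_nonneg_of_nonpos huq.le hdzq
    exact mul_nonpos_of_nonpos_of_nonneg this (Real.exp_pos _).le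
  linarith

/-- Tail contradiction at `-∞` for fast-decaying ordered solutions. -/
lemma upper_tail (hu : ContDiff ℝ 2 u) (hw : ContDiff ℝ 2 w) {C k x₀ : ℝ}
    (hC : 0 < C) (hk : b ≤ 2 * k)
    (hRu : ODE2 b u (Iic 0)) (hRw : ODE2 b w (Iic 0))
    (hupos : ∀ x ≤ (0:ℝ), 0 < u x) (hwpos : ∀ x ≤ (0:ℝ), 0 < w x)
    (hub : ∀ x ≤ (0:ℝ), u x ≤ C * Real.exp (k * x))
    (hwb : ∀ x ≤ (0:ℝ), w x ≤ C * Real.exp (k * x))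
    (hx₀ : x₀ ≤ 0) (hzx₀ : w x₀ = u x₀) (hzpos : ∀ x < x₀, u x < w x) : False := by
  set z := fun t => w t - u t with hz
  set σ := fun t => deriv w t * u t - w t * deriv u t with hσ
  set T := fun t => σ t * Real.exp (-b * t) with hT
  have hIcc : ∀ {x₁ x₂ : ℝ}, x₂ ≤ 0 → Icc x₁ x₂ ⊆ Iic 0 := by
    intro x₁ x₂ h2 t ht; exact le_trans ht.2 h2
  -- δ > 0
  have hδpos : 0 < ∫ t in (x₀ - 1)..x₀, Real.exp (-b * t) * (u t * w t * (w t - u t)) := by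
    refine intervalIntegral.intervalIntegral_pos_of_pos_on
      ((cont_integrand hu hw).intervalIntegrable _ _) (fun x hx => ?_) (by linarith)
    have hxlt : x < x₀ := hx.2
    have hxle : x ≤ 0 := hxlt.le.trans hx₀
    have h1 := hupos x hxle
    have h2 := hzpos x hxlt
    have h3 : 0 < w x := h1.trans h2
    have h4 : 0 < w x - u x := sub_pos.mpr h2
    positivity
  set δ := ∫ t in (x₀ - 1)..x₀, Real.exp (-b * t) * (u t * w t * (w t - u t)) with hδ
  -- derivative of z at x₀ is ≤ 0
  have hdzx₀ : deriv z x₀ ≤ 0 := by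
    refine deriv_nonpos_at_zero (a := x₀ - 1) (by linarith)
      ((cd2_diff hw x₀).sub (cd2_diff hu x₀)) (by simp [hz, hzx₀]) ?_
    exact fun x hx => sub_pos.mpr (hzpos x hx.2)
  -- case on sign of T x₀
  rcases le_or_gt (T x₀) 0 with hTx₀ | hTx₀
  · -- T x ≤ -δ for x ≤ x₀ - 1
    have hTbound : ∀ x ≤ x₀ - 1, T x ≤ -δ := by
      intro x hx
      have h1 : T x₀ - T x = ∫ t in x..x₀, Real.exp (-b * t) * (u t * w t * (w t - u t)) :=
        T_integral hu hw (by linarith) (hRu.mono (hIcc hx₀)) (hRw.mono (hIcc hx₀))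
      have h2 : (∫ t in x..x₀, Real.exp (-b * t) * (u t * w t * (w t - u t)))
          = (∫ t in x..(x₀-1), Real.exp (-b * t) * (u t * w t * (w t - u t))) + δ := by
        rw [hδ]
        exact (intervalIntegral.integral_add_adjacent_intervals
          ((cont_integrand hu hw).intervalIntegrable _ _)
          ((cont_integrand hu hw).intervalIntegrable _ _)).symm
      have h3 : 0 ≤ ∫ t in x..(x₀-1), Real.exp (-b * t) * (u t * w t * (w t - u t)) := by
        refine intervalIntegral.integral_nonneg hx (fun t ht => ?_)
        have htlt : t < x₀ := by have := ht.2; linarith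
        have htle : t ≤ 0 := htlt.le.trans hx₀
        have h1' := hupos t htle
        have h2' := hzpos t htlt
        have h3' : 0 < w t := h1'.trans h2'
        have h4' : 0 < w t - u t := sub_pos.mpr h2'
        positivity
      linarith
    -- ratio u/w has derivative ≥ δ/C² on (-∞, x₀ - 1]
    have hρderiv : ∀ x ≤ x₀ - 1, HasDerivAt (fun t => u t / w t)
        ((deriv u x * w x - u x * deriv w x) / (w x)^2) x := by
      intro x hx
      exact (cd2_diff hu x).hasDerivAt.div (cd2_diff hw x).hasDerivAt
        (ne_of_gt (hwpos x (by linarith)))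
    have hρlb : ∀ x ≤ x₀ - 1, δ / C^2 ≤ (deriv u x * w x - u x * deriv w x) / (w x)^2 := by
      intro x hx
      have hxle0 : x ≤ 0 := by linarith
      have hwx := hwpos x hxle0
      have hσx : σ x ≤ -δ * Real.exp (b * x) := by
        have := hTbound x hx
        rw [hT] at this
        have hexp : Real.exp (-b * x) > 0 := Real.exp_pos _
        calc σ x = σ x * Real.exp (-b * x) * Real.exp (b * x) := by
              rw [mul_assoc, ← Real.exp_add]; simp
          _ ≤ -δ * Real.exp (b * x) := by
              apply mul_le_mul_of_nonneg_right this (Real.exp_pos _).le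
      have hnum : δ * Real.exp (b * x) ≤ deriv u x * w x - u x * deriv w x := by
        have : deriv u x * w x - u x * deriv w x = -σ x := by rw [hσ]; ring
        rw [this]; linarith
      have hw2 : (w x)^2 ≤ C^2 * Real.exp (2 * k * x) := by
        have h1 := hwb x hxle0
        have h2 : Real.exp (2 * k * x) = Real.exp (k*x) * Real.exp (k*x) := by
          rw [← Real.exp_add]; ring_nf
        nlinarith [Real.exp_pos (k*x), hwx]
      have s2 : 2*k*x ≤ b*x := by nlinarith [mul_nonneg (show (0:ℝ) ≤ 2*k - b by linarith) (show (0:ℝ) ≤ -x by linarith)]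
      rw [div_le_div_iff₀ (by positivity) (by positivity)]
      have s1 : δ * (w x)^2 ≤ δ * (C^2 * Real.exp (2*k*x)) :=
        mul_le_mul_of_nonneg_left hw2 hδpos.le
      have s3 : δ * Real.exp (2*k*x) ≤ δ * Real.exp (b*x) :=
        mul_le_mul_of_nonneg_left (Real.exp_le_exp.mpr s2) hδpos.le
      have s5 : C^2 * (δ * Real.exp (2*k*x)) ≤ C^2 * (δ * Real.exp (b*x)) :=
        mul_le_mul_of_nonneg_left s3 (sq_nonneg C)
      have s6 : C^2 * (δ * Real.exp (b*x)) ≤ C^2 * (deriv u x * w x - u x * deriv w x) :=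
        mul_le_mul_of_nonneg_left hnum (sq_nonneg C)
      nlinarith [s1, s5, s6]
    -- FTC for the ratio on [x₁, x₀ - 1]
    have hratio : ∀ x₁ ≤ x₀ - 1, u (x₀-1) / w (x₀-1) - u x₁ / w x₁ ≥ (δ/C^2) * ((x₀-1) - x₁) := by
      intro x₁ hx₁
      have hftc : u (x₀-1)/w (x₀-1) - u x₁/w x₁
          = ∫ t in x₁..(x₀-1), (deriv u t * w t - u t * deriv w t) / (w t)^2 := by
        refine (intervalIntegral.integral_eq_sub_of_hasDerivAt
          (f := fun t => u t / w t)
          (f' := fun t => (deriv u t * w t - u t * deriv w t) / (w t)^2)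
          (fun t ht => ?_) ?_).symm
        · rw [uIcc_of_le hx₁] at ht
          exact hρderiv t ht.2
        · refine ContinuousOn.intervalIntegrable ?_
          rw [uIcc_of_le hx₁]
          refine ContinuousOn.div
            (((cd2_diff_deriv hu).continuous.mul (cd2_diff hw).continuous).sub
              ((cd2_diff hu).continuous.mul (cd2_diff_deriv hw).continuous)).continuousOn
            (((cd2_diff hw).continuous.pow 2).continuousOn) (fun t ht => ?_)
          exact pow_ne_zero _ (ne_of_gt (hwpos t (by have := ht.2; linarith)))
      rw [hftc]
      have : ∫ t in x₁..(x₀-1), (δ/C^2) ≤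
          ∫ t in x₁..(x₀-1), (deriv u t * w t - u t * deriv w t) / (w t)^2 := by
        refine intervalIntegral.integral_mono_on hx₁ (intervalIntegrable_const) ?_
          (fun t ht => hρlb t ht.2)
        refine ContinuousOn.intervalIntegrable ?_
        rw [uIcc_of_le hx₁]
        refine ContinuousOn.div
          (((cd2_diff_deriv hu).continuous.mul (cd2_diff hw).continuous).sub
            ((cd2_diff hu).continuous.mul (cd2_diff_deriv hw).continuous)).continuousOn
          (((cd2_diff hw).continuous.pow 2).continuousOn) (fun t ht => ?_)
        exact pow_ne_zero _ (ne_of_gt (hwpos t (by have := ht.2; linarith)))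
      rw [intervalIntegral.integral_const] at this
      have h2 : ((x₀-1) - x₁) • (δ/C^2) = (δ/C^2) * ((x₀-1)-x₁) := by
        rw [smul_eq_mul]; ring
      linarith [h2 ▸ this]
    -- choose x₁ far enough left
    set ρ₀ := u (x₀-1) / w (x₀-1) with hρ₀
    have hρ₀pos : 0 < ρ₀ :=
      div_pos (hupos _ (by linarith)) (hwpos _ (by linarith))
    have hδC : 0 < δ / C^2 := by positivity
    set x₁ := (x₀ - 1) - (ρ₀ + 1) / (δ/C^2) with hx₁def
    have hx₁le : x₁ ≤ x₀ - 1 := by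
      rw [hx₁def]
      have : 0 < (ρ₀ + 1)/(δ/C^2) := by positivity
      linarith
    have := hratio x₁ hx₁le
    have hxx : (δ/C^2) * ((x₀-1) - x₁) = ρ₀ + 1 := by
      rw [hx₁def]
      field_simp
      ring
    rw [hxx] at this
    have hρ₁pos : 0 < u x₁ / w x₁ :=
      div_pos (hupos _ (by linarith)) (hwpos _ (by linarith))
    linarith
  · -- T x₀ > 0 gives deriv z x₀ > 0, contradiction
    have hσx₀ : 0 < σ x₀ := by
      have h : 0 < σ x₀ * Real.exp (-b * x₀) := hTx₀
      by_contra h'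
      push_neg at h'
      have := mul_nonpos_of_nonpos_of_nonneg h' (Real.exp_pos (-b*x₀)).le
      linarith
    have hσeq : σ x₀ = u x₀ * deriv z x₀ := by
      show deriv w x₀ * u x₀ - w x₀ * deriv u x₀ = u x₀ * deriv (fun t => w t - u t) x₀
      rw [deriv_z hu hw, hzx₀]; ring
    rw [hσeq] at hσx₀
    have := hupos x₀ hx₀
    nlinarith

/-- Tail contradiction at `+∞` for bounded ordered solutions (lower branch). -/
lemma lower_tail {v ω : ℝ → ℝ} (hv : ContDiff ℝ 2 v) (hω : ContDiff ℝ 2 ω) {B x₀ : ℝ}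
    (hb : 0 < b)
    (hRv : ODE2 b v (Ici 0)) (hRω : ODE2 b ω (Ici 0))
    (hvpos : ∀ x ≥ (0:ℝ), 0 < v x)
    (hvle : ∀ x ≥ (0:ℝ), v x ≤ 1) (hωle : ∀ x ≥ (0:ℝ), ω x ≤ 1)
    (hdv : ∀ x ≥ (0:ℝ), |deriv v x| ≤ B) (hdω : ∀ x ≥ (0:ℝ), |deriv ω x| ≤ B)
    (hx₀ : 0 ≤ x₀) (hzx₀ : ω x₀ = v x₀) (hzpos : ∀ x > x₀, v x < ω x) : False := by
  set σ := fun t => deriv ω t * v t - ω t * deriv v t with hσdef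
  have hIcc : ∀ {x₁ x₂ : ℝ}, 0 ≤ x₁ → Icc x₁ x₂ ⊆ Ici 0 := by
    intro x₁ x₂ h1 t ht; exact le_trans h1 ht.1
  have hδpos : 0 < ∫ t in x₀..(x₀+1), Real.exp (-b * t) * (v t * ω t * (ω t - v t)) := by
    refine intervalIntegral.intervalIntegral_pos_of_pos_on
      ((cont_integrand hv hω).intervalIntegrable _ _) (fun x hx => ?_) (by linarith)
    have hxgt : x₀ < x := hx.1
    have h1 := hvpos x (hx₀.trans hxgt.le)
    have h2 := hzpos x hxgt
    have h3 : 0 < ω x := h1.trans h2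
    have h4 : 0 < ω x - v x := sub_pos.mpr h2
    positivity
  set δ := ∫ t in x₀..(x₀+1), Real.exp (-b * t) * (v t * ω t * (ω t - v t)) with hδ
  have hdzx₀ : 0 ≤ deriv (fun t => ω t - v t) x₀ := by
    refine deriv_nonneg_at_zero (a := x₀ + 1) (by linarith)
      ((cd2_diff hω x₀).sub (cd2_diff hv x₀)) (by simp [hzx₀]) ?_
    exact fun x hx => sub_pos.mpr (hzpos x hx.1)
  have hσx₀ : 0 ≤ σ x₀ := by
    have : σ x₀ = v x₀ * deriv (fun t => ω t - v t) x₀ := by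
      show deriv ω x₀ * v x₀ - ω x₀ * deriv v x₀ = _
      rw [deriv_z hv hω, hzx₀]; ring
    rw [this]
    exact mul_nonneg (hvpos x₀ hx₀).le hdzx₀
  have hTx₀ : 0 ≤ σ x₀ * Real.exp (-b * x₀) :=
    mul_nonneg hσx₀ (Real.exp_pos _).le
  -- for x ≥ x₀ + 1, σ x ≥ δ e^{bx}
  have hσlb : ∀ x ≥ x₀ + 1, δ * Real.exp (b * x) ≤ σ x := by
    intro x hx
    have h1 : σ x * Real.exp (-b * x) - σ x₀ * Real.exp (-b * x₀)
        = ∫ t in x₀..x, Real.exp (-b * t) * (v t * ω t * (ω t - v t)) :=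
      T_integral hv hω (by linarith) (hRv.mono (hIcc hx₀)) (hRω.mono (hIcc hx₀))
    have h2 : (∫ t in x₀..x, Real.exp (-b * t) * (v t * ω t * (ω t - v t)))
        = δ + ∫ t in (x₀+1)..x, Real.exp (-b * t) * (v t * ω t * (ω t - v t)) := by
      rw [hδ]
      exact (intervalIntegral.integral_add_adjacent_intervals
        ((cont_integrand hv hω).intervalIntegrable _ _)
        ((cont_integrand hv hω).intervalIntegrable _ _)).symm
    have h3 : 0 ≤ ∫ t in (x₀+1)..x, Real.exp (-b * t) * (v t * ω t * (ω t - v t)) := by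
      refine intervalIntegral.integral_nonneg hx (fun t ht => ?_)
      have htgt : x₀ < t := by have := ht.1; linarith
      have h1' := hvpos t (hx₀.trans htgt.le)
      have h2' := hzpos t htgt
      have h3' : 0 < ω t := h1'.trans h2'
      have h4' : 0 < ω t - v t := sub_pos.mpr h2'
      positivity
    have h4 : δ ≤ σ x * Real.exp (-b * x) := by linarith
    have := mul_le_mul_of_nonneg_right h4 (Real.exp_pos (b*x)).le
    calc δ * Real.exp (b*x) ≤ σ x * Real.exp (-b*x) * Real.exp (b*x) := this
      _ = σ x := by rw [mul_assoc, ← Real.exp_add]; simp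
  -- but σ is bounded
  have hB0 : 0 ≤ B := le_trans (abs_nonneg _) (hdv 0 le_rfl)
  have hσub : ∀ x ≥ x₀ + 1, σ x ≤ 2 * B := by
    intro x hx
    have hx0 : (0:ℝ) ≤ x := by linarith
    have h1 := hdv x hx0
    have h2 := hdω x hx0
    have h3 := hvpos x hx0
    have h4 := hvle x hx0
    have h5 := hωle x hx0
    have h6 : 0 < ω x := (hvpos x hx0).trans (hzpos x (by linarith))
    have habs1 : deriv ω x * v x ≤ B := by
      calc deriv ω x * v x ≤ |deriv ω x| * v x :=
            mul_le_mul_of_nonneg_right (le_abs_self _) h3.le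
        _ ≤ B * 1 := mul_le_mul h2 h4 h3.le hB0
        _ = B := mul_one B
    have habs2 : -B ≤ ω x * deriv v x := by
      calc -B = 1 * (-B) := by ring
        _ ≤ ω x * (-|deriv v x|) := by
            have : -|deriv v x| ≤ 0 := neg_nonpos_of_nonneg (abs_nonneg _)
            nlinarith [abs_nonneg (deriv v x), neg_abs_le (deriv v x)]
        _ ≤ ω x * deriv v x := mul_le_mul_of_nonneg_left (neg_abs_le _) h6.le
    show deriv ω x * v x - ω x * deriv v x ≤ 2 * B
    linarith
  -- contradiction at large x
  set X := max (x₀ + 1) (Real.log ((2*B+1)/δ) / b) with hX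
  have hX1 : x₀ + 1 ≤ X := le_max_left _ _
  have hX2 : Real.log ((2*B+1)/δ) / b ≤ X := le_max_right _ _
  have hexpX : (2*B+1)/δ ≤ Real.exp (b * X) := by
    have h1 : Real.log ((2*B+1)/δ) ≤ b * X := by
      rw [div_le_iff₀ hb] at hX2; linarith
    calc (2*B+1)/δ = Real.exp (Real.log ((2*B+1)/δ)) :=
          (Real.exp_log (by positivity)).symm
      _ ≤ Real.exp (b * X) := Real.exp_le_exp.mpr h1
  have h1 := hσlb X hX1
  have h2 := hσub X hX1
  have h3 : 2*B + 1 ≤ δ * Real.exp (b * X) := by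
    rw [div_le_iff₀ hδpos] at hexpX; linarith [mul_comm δ (Real.exp (b*X))]
  linarith

lemma pos_of_no_zero {z : ℝ → ℝ} (hc : Continuous z) {q x : ℝ}
    (hq : 0 < z q) (hno : ∀ t ∈ uIcc x q, z t ≠ 0) : 0 < z x := by
  by_contra h
  push_neg at h
  have h0 : (0:ℝ) ∈ uIcc (z x) (z q) := by
    rw [Set.mem_uIcc]
    left; exact ⟨h, hq.le⟩
  obtain ⟨t, ht, htz⟩ := intermediate_value_uIcc (hc.continuousOn (s := uIcc x q)) h0
  exact hno t ht htz

/-- Uniqueness on the upper branch: fast-decaying positive solutions agreeing at `0`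
cannot separate. (asymmetric auxiliary version) -/
lemma upper_unique_aux {u w : ℝ → ℝ} {b C k : ℝ} (hu : ContDiff ℝ 2 u) (hw : ContDiff ℝ 2 w)
    (hC : 0 < C) (hk : b ≤ 2 * k)
    (hRu : ODE2 b u (Iic 0)) (hRw : ODE2 b w (Iic 0))
    (hupos : ∀ x ≤ (0:ℝ), 0 < u x) (hwpos : ∀ x ≤ (0:ℝ), 0 < w x)
    (hub : ∀ x ≤ (0:ℝ), u x ≤ C * Real.exp (k * x))
    (hwb : ∀ x ≤ (0:ℝ), w x ≤ C * Real.exp (k * x))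
    (h00 : u 0 = w 0) {q : ℝ} (hq : q < 0) (hqlt : u q < w q) : False := by
  have hzc : Continuous (fun t => w t - u t) :=
    (cd2_diff hw).continuous.sub (cd2_diff hu).continuous
  have hzq : 0 < w q - u q := sub_pos.mpr hqlt
  set Z₁ := {x ∈ Icc q 0 | w x = u x} with hZ₁
  have hZ₁c : IsClosed Z₁ := by
    have : Z₁ = Icc q 0 ∩ (fun t => w t - u t) ⁻¹' {0} := by
      ext x; simp only [hZ₁, mem_inter_iff, mem_preimage, mem_singleton_iff, mem_setOf_eq,
        sub_eq_zero]
    rw [this]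
    exact isClosed_Icc.inter (isClosed_singleton.preimage hzc)
  have hZ₁ne : Z₁.Nonempty := ⟨0, ⟨right_mem_Icc.mpr hq.le, h00.symm⟩⟩
  have hZ₁bdd : BddBelow Z₁ := ⟨q, fun x hx => hx.1.1⟩
  set x₀ := sInf Z₁ with hx₀def
  have hx₀mem : x₀ ∈ Z₁ := hZ₁c.csInf_mem hZ₁ne hZ₁bdd
  have hx₀q : q < x₀ := by
    rcases hx₀mem with ⟨⟨h1, _⟩, h2⟩
    rcases lt_or_eq_of_le h1 with h | h
    · exact h
    · exact absurd (h ▸ h2) (by intro hh; exact absurd hh (ne_of_lt hqlt).symm)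
  have hx₀le : x₀ ≤ 0 := hx₀mem.1.2
  have hnozero₁ : ∀ x ∈ Ico q x₀, w x - u x ≠ 0 := by
    intro x hx hzx
    have : x ∈ Z₁ := ⟨⟨hx.1, hx.2.le.trans hx₀le⟩, by linarith [sub_eq_zero.mp hzx]⟩
    exact absurd (csInf_le hZ₁bdd this) (not_le.mpr hx.2)
  have hpos₁ : ∀ x ∈ Ico q x₀, 0 < w x - u x := by
    intro x hx
    refine pos_of_no_zero hzc hzq (fun t ht => ?_)
    rw [uIcc_of_ge hx.1] at ht
    exact hnozero₁ t ⟨ht.1, lt_of_le_of_lt ht.2 hx.2⟩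
  -- zeros to the left of q?
  by_cases hZ₂ : ∃ p ≤ q, w p = u p
  · -- take the largest such zero & use no_zero_gap
    set Z₂ := {x | x ≤ q ∧ w x = u x} with hZ₂def
    have hZ₂c : IsClosed Z₂ := by
      have : Z₂ = Iic q ∩ (fun t => w t - u t) ⁻¹' {0} := by
        ext x; simp only [hZ₂def, mem_inter_iff, mem_preimage, mem_singleton_iff, mem_setOf_eq,
          sub_eq_zero, mem_Iic]
      rw [this]
      exact isClosed_Iic.inter (isClosed_singleton.preimage hzc)
    have hZ₂ne : Z₂.Nonempty := by obtain ⟨p, hp1, hp2⟩ := hZ₂; exact ⟨p, hp1, hp2⟩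
    have hZ₂bdd : BddAbove Z₂ := ⟨q, fun x hx => hx.1⟩
    set p₀ := sSup Z₂ with hp₀def
    have hp₀mem : p₀ ∈ Z₂ := hZ₂c.csSup_mem hZ₂ne hZ₂bdd
    have hp₀q : p₀ < q := by
      rcases lt_or_eq_of_le hp₀mem.1 with h | h
      · exact h
      · exact absurd (h ▸ hp₀mem.2) (ne_of_lt hqlt).symm
    have hnozero₂ : ∀ x ∈ Ioc p₀ q, w x - u x ≠ 0 := by
      intro x hx hzx
      have : x ∈ Z₂ := ⟨hx.2, by linarith [sub_eq_zero.mp hzx]⟩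
      exact absurd (le_csSup hZ₂bdd this) (not_le.mpr hx.1)
    have hpos₂ : ∀ x ∈ Ioc p₀ q, 0 < w x - u x := by
      intro x hx
      refine pos_of_no_zero hzc hzq (fun t ht => ?_)
      rw [uIcc_of_le hx.2] at ht
      exact hnozero₂ t ⟨lt_of_lt_of_le hx.1 ht.1, ht.2⟩
    refine no_zero_gap hu hw (hp₀q.trans hx₀q)
      (hRu.mono ?_) (hRw.mono ?_) (fun x hx => hupos x (hx.2.trans hx₀le))
      hp₀mem.2 hx₀mem.2 (fun x hx => ?_)
    · exact fun t ht => ht.2.trans hx₀le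
    · exact fun t ht => ht.2.trans hx₀le
    · rcases le_or_gt x q with h | h
      · exact sub_pos.mp (hpos₂ x ⟨hx.1, h⟩)
      · exact sub_pos.mp (hpos₁ x ⟨h.le, hx.2⟩)
  · -- no zeros on the left: apply the tail lemma
    push_neg at hZ₂
    have hposI : ∀ x < x₀, u x < w x := by
      intro x hx
      rcases le_or_gt x q with h | h
      · refine sub_pos.mp (pos_of_no_zero hzc hzq (fun t ht => ?_))
        rw [uIcc_of_le h] at ht
        rcases lt_or_eq_of_le ht.2 with h' | h'
        · intro hzx
          rcases le_or_gt t q with h'' | h''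
          · exact hZ₂ t h'' (by linarith [sub_eq_zero.mp hzx])
          · exact hnozero₁ t ⟨h''.le, h'.trans_le (le_of_lt hx₀q)⟩ hzx
        · rw [h']; exact ne_of_gt hzq
      · exact sub_pos.mp (hpos₁ x ⟨h.le, hx⟩)
    exact upper_tail hu hw hC hk hRu hRw hupos hwpos hub hwb hx₀le hx₀mem.2 hposI

lemma upper_unique {u w : ℝ → ℝ} {b C k : ℝ} (hu : ContDiff ℝ 2 u) (hw : ContDiff ℝ 2 w)
    (hC : 0 < C) (hk : b ≤ 2 * k)
    (hRu : ODE2 b u (Iic 0)) (hRw : ODE2 b w (Iic 0))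
    (hupos : ∀ x ≤ (0:ℝ), 0 < u x) (hwpos : ∀ x ≤ (0:ℝ), 0 < w x)
    (hub : ∀ x ≤ (0:ℝ), u x ≤ C * Real.exp (k * x))
    (hwb : ∀ x ≤ (0:ℝ), w x ≤ C * Real.exp (k * x))
    (h00 : u 0 = w 0) : ∀ x ≤ (0:ℝ), u x = w x := by
  intro x hx
  rcases lt_trichotomy (u x) (w x) with h | h | h
  · rcases lt_or_eq_of_le hx with h' | h'
    · exact absurd (upper_unique_aux hu hw hC hk hRu hRw hupos hwpos hub hwb h00 h' h) id
    · exact absurd (h' ▸ h) (by rw [h00]; exact lt_irrefl _)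
  · exact h
  · rcases lt_or_eq_of_le hx with h' | h'
    · exact absurd (upper_unique_aux hw hu hC hk hRw hRu hwpos hupos hwb hub h00.symm h' h) id
    · exact absurd (h' ▸ h) (by rw [h00]; exact lt_irrefl _)

/-- Lower-branch uniqueness: auxiliary asymmetric version. -/
lemma lower_unique_aux {v ω : ℝ → ℝ} {b B : ℝ} (hv : ContDiff ℝ 2 v) (hω : ContDiff ℝ 2 ω)
    (hb : 0 < b)
    (hRv : ODE2 b v (Ici 0)) (hRω : ODE2 b ω (Ici 0))
    (hvpos : ∀ x ≥ (0:ℝ), 0 < v x) (hωpos : ∀ x ≥ (0:ℝ), 0 < ω x)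
    (hvle : ∀ x ≥ (0:ℝ), v x ≤ 1) (hωle : ∀ x ≥ (0:ℝ), ω x ≤ 1)
    (hdv : ∀ x ≥ (0:ℝ), |deriv v x| ≤ B) (hdω : ∀ x ≥ (0:ℝ), |deriv ω x| ≤ B)
    (h00 : v 0 = ω 0) {q : ℝ} (hq : 0 < q) (hqlt : v q < ω q) : False := by
  have hzc : Continuous (fun t => ω t - v t) :=
    (cd2_diff hω).continuous.sub (cd2_diff hv).continuous
  have hzq : 0 < ω q - v q := sub_pos.mpr hqlt
  set Z₁ := {x ∈ Icc 0 q | ω x = v x} with hZ₁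
  have hZ₁c : IsClosed Z₁ := by
    have : Z₁ = Icc 0 q ∩ (fun t => ω t - v t) ⁻¹' {0} := by
      ext x; simp only [hZ₁, mem_inter_iff, mem_preimage, mem_singleton_iff, mem_setOf_eq,
        sub_eq_zero]
    rw [this]
    exact isClosed_Icc.inter (isClosed_singleton.preimage hzc)
  have hZ₁ne : Z₁.Nonempty := ⟨0, ⟨left_mem_Icc.mpr hq.le, h00.symm⟩⟩
  have hZ₁bdd : BddAbove Z₁ := ⟨q, fun x hx => hx.1.2⟩
  set x₀ := sSup Z₁ with hx₀def
  have hx₀mem : x₀ ∈ Z₁ := hZ₁c.csSup_mem hZ₁ne hZ₁bdd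
  have hx₀q : x₀ < q := by
    rcases lt_or_eq_of_le hx₀mem.1.2 with h | h
    · exact h
    · exact absurd (h ▸ hx₀mem.2) (ne_of_lt hqlt).symm
  have hx₀ge : 0 ≤ x₀ := hx₀mem.1.1
  have hnozero₁ : ∀ x ∈ Ioc x₀ q, ω x - v x ≠ 0 := by
    intro x hx hzx
    have : x ∈ Z₁ := ⟨⟨hx₀ge.trans hx.1.le, hx.2⟩, by linarith [sub_eq_zero.mp hzx]⟩
    exact absurd (le_csSup hZ₁bdd this) (not_le.mpr hx.1)
  have hpos₁ : ∀ x ∈ Ioc x₀ q, 0 < ω x - v x := by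
    intro x hx
    refine pos_of_no_zero hzc hzq (fun t ht => ?_)
    rw [uIcc_of_le hx.2] at ht
    exact hnozero₁ t ⟨lt_of_lt_of_le hx.1 ht.1, ht.2⟩
  by_cases hZ₂ : ∃ p ≥ q, ω p = v p
  · set Z₂ := {x | q ≤ x ∧ ω x = v x} with hZ₂def
    have hZ₂c : IsClosed Z₂ := by
      have : Z₂ = Ici q ∩ (fun t => ω t - v t) ⁻¹' {0} := by
        ext x; simp only [hZ₂def, mem_inter_iff, mem_preimage, mem_singleton_iff, mem_setOf_eq,
          sub_eq_zero, mem_Ici]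
      rw [this]
      exact isClosed_Ici.inter (isClosed_singleton.preimage hzc)
    have hZ₂ne : Z₂.Nonempty := by obtain ⟨p, hp1, hp2⟩ := hZ₂; exact ⟨p, hp1, hp2⟩
    have hZ₂bdd : BddBelow Z₂ := ⟨q, fun x hx => hx.1⟩
    set p₀ := sInf Z₂ with hp₀def
    have hp₀mem : p₀ ∈ Z₂ := hZ₂c.csInf_mem hZ₂ne hZ₂bdd
    have hp₀q : q < p₀ := by
      rcases lt_or_eq_of_le hp₀mem.1 with h | h
      · exact h
      · exact absurd (h.symm ▸ hp₀mem.2) (ne_of_lt hqlt).symm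
    have hnozero₂ : ∀ x ∈ Ico q p₀, ω x - v x ≠ 0 := by
      intro x hx hzx
      have : x ∈ Z₂ := ⟨hx.1, by linarith [sub_eq_zero.mp hzx]⟩
      exact absurd (csInf_le hZ₂bdd this) (not_le.mpr hx.2)
    have hpos₂ : ∀ x ∈ Ico q p₀, 0 < ω x - v x := by
      intro x hx
      refine pos_of_no_zero hzc hzq (fun t ht => ?_)
      rw [uIcc_of_ge hx.1] at ht
      exact hnozero₂ t ⟨ht.1, lt_of_le_of_lt ht.2 hx.2⟩
    refine no_zero_gap hv hω (hx₀q.trans hp₀q)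
      (hRv.mono ?_) (hRω.mono ?_) (fun x hx => hvpos x (hx₀ge.trans hx.1))
      hx₀mem.2 hp₀mem.2 (fun x hx => ?_)
    · exact fun t ht => hx₀ge.trans ht.1
    · exact fun t ht => hx₀ge.trans ht.1
    · rcases le_or_gt x q with h | h
      · exact sub_pos.mp (hpos₁ x ⟨hx.1, h⟩)
      · exact sub_pos.mp (hpos₂ x ⟨h.le, hx.2⟩)
  · push_neg at hZ₂
    have hposI : ∀ x > x₀, v x < ω x := by
      intro x hx
      rcases le_or_gt x q with h | h
      · exact sub_pos.mp (hpos₁ x ⟨hx, h⟩)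
      · refine sub_pos.mp (pos_of_no_zero hzc hzq (fun t ht => ?_))
        rw [uIcc_of_ge h.le] at ht
        intro hzx
        rcases eq_or_lt_of_le ht.1 with h3 | h3
        · rw [← h3] at hzx; exact (ne_of_gt hzq) hzx
        · exact hZ₂ t h3.le (by linarith [sub_eq_zero.mp hzx])
    exact lower_tail hv hω hb hRv hRω hvpos hvle hωle hdv hdω hx₀ge hx₀mem.2 hposI

lemma lower_unique {v ω : ℝ → ℝ} {b B : ℝ} (hv : ContDiff ℝ 2 v) (hω : ContDiff ℝ 2 ω)
    (hb : 0 < b)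
    (hRv : ODE2 b v (Ici 0)) (hRω : ODE2 b ω (Ici 0))
    (hvpos : ∀ x ≥ (0:ℝ), 0 < v x) (hωpos : ∀ x ≥ (0:ℝ), 0 < ω x)
    (hvle : ∀ x ≥ (0:ℝ), v x ≤ 1) (hωle : ∀ x ≥ (0:ℝ), ω x ≤ 1)
    (hdv : ∀ x ≥ (0:ℝ), |deriv v x| ≤ B) (hdω : ∀ x ≥ (0:ℝ), |deriv ω x| ≤ B)
    (h00 : v 0 = ω 0) : ∀ x ≥ (0:ℝ), v x = ω x := by
  intro x hx
  rcases lt_trichotomy (v x) (ω x) with h | h | h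
  · rcases lt_or_eq_of_le hx with h' | h'
    · exact absurd (lower_unique_aux hv hω hb hRv hRω hvpos hωpos hvle hωle hdv hdω h00 h' h) id
    · exact absurd (h' ▸ h) (by rw [h00]; exact lt_irrefl _)
  · exact h
  · rcases lt_or_eq_of_le hx with h' | h'
    · exact absurd (lower_unique_aux hω hv hb hRω hRv hωpos hvpos hωle hvle hdω hdv h00.symm h' h) id
    · exact absurd (h' ▸ h) (by rw [h00]; exact lt_irrefl _)

/-- Derivative of `g = e^{-bx} v'`. -/
lemma g_hasDeriv {v : ℝ → ℝ} {b : ℝ} (hv : ContDiff ℝ 2 v) {x : ℝ}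
    (hode : deriv (deriv v) x = b * deriv v x - v x + v x ^ 2) :
    HasDerivAt (fun t => Real.exp (-b*t) * deriv v t)
      (Real.exp (-b*x) * (v x ^ 2 - v x)) x := by
  have hexp : HasDerivAt (fun t : ℝ => Real.exp (-b * t)) (Real.exp (-b * x) * (-b)) x := by
    have h := ((hasDerivAt_id x).const_mul (-b)).exp
    have : Real.exp (-b * id x) * (-b * 1) = Real.exp (-b * x) * (-b) := by simp
    simpa [this] using h
  have hdv : HasDerivAt (deriv v) (deriv (deriv v) x) x := (cd2_diff_deriv hv x).hasDerivAt
  have := hexp.mul hdv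
  refine HasDerivAt.congr_deriv this ?_
  rw [hode]; ring

lemma g_anti {v : ℝ → ℝ} {b : ℝ} (hv : ContDiff ℝ 2 v) {s : Set ℝ}
    (hconv : Convex ℝ s) (hODE : ODE2 b v (interior s))
    (hv01 : ∀ x ∈ interior s, 0 < v x ∧ v x < 1) :
    StrictAntiOn (fun t => Real.exp (-b*t) * deriv v t) s := by
  refine strictAntiOn_of_deriv_neg hconv ?_ (fun x hx => ?_)
  · exact ((Real.continuous_exp.comp (continuous_const.mul continuous_id)).mul
      (cd2_diff_deriv hv).continuous).continuousOn
  · have h := g_hasDeriv hv (hODE x hx)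
    rw [h.deriv]
    have h1 := (hv01 x hx).1
    have h2 := (hv01 x hx).2
    have : v x ^ 2 - v x < 0 := by nlinarith
    have hexp := Real.exp_pos (-b*x)
    nlinarith

/-- FTC for `v` itself. -/
lemma ftc_v {v : ℝ → ℝ} (hv : ContDiff ℝ 2 v) {x₁ x₂ : ℝ} :
    v x₂ - v x₁ = ∫ t in x₁..x₂, deriv v t :=
  (intervalIntegral.integral_deriv_eq_sub (fun t _ => (cd2_diff hv t)) 
    ((cd2_diff_deriv hv).continuous.intervalIntegrable _ _)).symm

/-- On the lower branch the solution is strictly increasing. -/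
lemma lower_deriv_pos {v : ℝ → ℝ} {b : ℝ} (hb : 0 < b) (hv : ContDiff ℝ 2 v)
    (hODE : ODE2 b v (Ioi 0)) (hv01 : ∀ x > (0:ℝ), 0 < v x ∧ v x < 1) :
    ∀ x ≥ (0:ℝ), 0 < deriv v x := by
  have hanti : StrictAntiOn (fun t => Real.exp (-b*t) * deriv v t) (Ici 0) := by
    refine g_anti hv (convex_Ici 0) ?_ ?_ <;> rw [interior_Ici]
    · exact hODE
    · exact hv01
  have hpos : ∀ x > (0:ℝ), 0 < deriv v x := by
    intro x₀ hx₀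
    by_contra hcon
    push_neg at hcon
    have hg0 : Real.exp (-b*x₀) * deriv v x₀ ≤ 0 :=
      mul_nonpos_of_nonneg_of_nonpos (Real.exp_pos _).le hcon
    set γ := Real.exp (-b*(x₀+1)) * deriv v (x₀+1) with hγ
    have hγneg : γ < 0 := by
      have h1 := hanti (mem_Ici.mpr hx₀.le) (mem_Ici.mpr (by linarith : (0:ℝ) ≤ x₀+1))
        (by linarith : x₀ < x₀ + 1)
      simp only at h1
      rw [hγ]; linarith
    have hvub : ∀ x ≥ x₀+1, deriv v x ≤ γ * Real.exp (b*x) := by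
      intro x hx
      have h1 : Real.exp (-b*x) * deriv v x ≤ γ := by
        rcases eq_or_lt_of_le hx with h | h
        · rw [hγ, ← h]
        · exact (hanti (mem_Ici.mpr (by linarith)) (mem_Ici.mpr (by linarith)) h).le
      have h2 := mul_le_mul_of_nonneg_right h1 (Real.exp_pos (b*x)).le
      calc deriv v x = Real.exp (-b*x) * deriv v x * Real.exp (b*x) := by
            rw [mul_comm (Real.exp (-b*x)) _, mul_assoc, ← Real.exp_add]; simp
        _ ≤ γ * Real.exp (b*x) := h2
    have key : ∀ X ≥ x₀+1, v X ≤ v (x₀+1) + γ/b * (Real.exp (b*X) - Real.exp (b*(x₀+1))) := by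
      intro X hX
      have hftc := ftc_v hv (x₁ := x₀+1) (x₂ := X)
      have hcexp : Continuous (fun t : ℝ => γ * Real.exp (b*t)) :=
        continuous_const.mul (Real.continuous_exp.comp (continuous_const.mul continuous_id))
      have hmono : ∫ t in (x₀+1)..X, deriv v t ≤ ∫ t in (x₀+1)..X, γ * Real.exp (b*t) :=
        intervalIntegral.integral_mono_on hX
          ((cd2_diff_deriv hv).continuous.intervalIntegrable _ _)
          (hcexp.intervalIntegrable _ _)
          (fun t ht => hvub t ht.1)
      have hint : (∫ t in (x₀+1)..X, γ * Real.exp (b*t))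
          = γ/b * (Real.exp (b*X) - Real.exp (b*(x₀+1))) := by
        have hd : ∀ t ∈ uIcc (x₀+1) X,
            HasDerivAt (fun s => γ/b * Real.exp (b*s)) (γ * Real.exp (b*t)) t := by
          intro t _
          have h := (((hasDerivAt_id t).const_mul b).exp).const_mul (γ/b)
          have he : γ / b * (Real.exp (b * id t) * (b * 1)) = γ * Real.exp (b*t) := by
            simp only [id]; field_simp
          rw [he] at h
          exact h
        rw [intervalIntegral.integral_eq_sub_of_hasDerivAt hd (hcexp.intervalIntegrable _ _)]
        ring
      linarith [hftc, hmono, hint]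
    -- choose X large enough that v X < 0
    set E := Real.exp (b*(x₀+1)) with hE
    set M := E + b*(v (x₀+1) + 1)/(-γ) with hM
    have hMpos : 0 < M := by
      have h1 : 0 < E := Real.exp_pos _
      have h2 : 0 < v (x₀+1) := (hv01 (x₀+1) (by linarith)).1
      have h3 : 0 < b*(v (x₀+1) + 1)/(-γ) :=
        div_pos (mul_pos hb (by linarith)) (by linarith : (0:ℝ) < -γ)
      rw [hM]
      linarith
    set X := max (x₀+1) (Real.log M / b) with hX
    have hX1 : x₀+1 ≤ X := le_max_left _ _
    have hexpX : M ≤ Real.exp (b*X) := by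
      have h2 : Real.log M / b ≤ X := le_max_right _ _
      have h1 : Real.log M ≤ b * X := by
        rw [div_le_iff₀ hb] at h2; linarith
      calc M = Real.exp (Real.log M) := (Real.exp_log hMpos).symm
        _ ≤ Real.exp (b*X) := Real.exp_le_exp.mpr h1
    have hkey := key X hX1
    have hvX : 0 < v X := (hv01 X (by linarith)).1
    have hγb : γ/b ≤ 0 := (div_neg_of_neg_of_pos hγneg hb).le
    have hstep : γ/b * (Real.exp (b*X) - E) ≤ γ/b * (M - E) :=
      mul_le_mul_of_nonpos_left (by linarith) hγb
    have hME : γ/b * (M - E) = -(v (x₀+1) + 1) := by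
      rw [hM]
      have hγne : γ ≠ 0 := ne_of_lt hγneg
      have hbne : b ≠ 0 := ne_of_gt hb
      field_simp
      ring
    linarith
  intro x hx
  rcases lt_or_eq_of_le hx with h | h
  · exact hpos x h
  · have h01 := hanti (mem_Ici.mpr le_rfl) (mem_Ici.mpr zero_le_one) zero_lt_one
    simp only at h01
    have h1 : 0 < deriv v 1 := hpos 1 zero_lt_one
    have h2 : 0 < Real.exp (-b*1) * deriv v 1 := mul_pos (Real.exp_pos _) h1
    rw [← h]
    have h3 : Real.exp (-b*0) * deriv v 0 = deriv v 0 := by simp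
    linarith [h01, h2, h3.symm ▸ h01]

/-- On the upper branch, positivity of the derivative propagates leftwards from `0`. -/
lemma upper_deriv_pos {u : ℝ → ℝ} {b : ℝ} (hu : ContDiff ℝ 2 u)
    (hODE : ODE2 b u (Iio 0)) (hu01 : ∀ x < (0:ℝ), 0 < u x ∧ u x < 1)
    (hd0 : 0 < deriv u 0) : ∀ x ≤ (0:ℝ), 0 < deriv u x := by
  have hanti : StrictAntiOn (fun t => Real.exp (-b*t) * deriv u t) (Iic 0) := by
    refine g_anti hu (convex_Iic 0) ?_ ?_ <;> rw [interior_Iic]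
    · exact hODE
    · exact hu01
  intro x hx
  rcases lt_or_eq_of_le hx with h | h
  · have h1 := hanti (mem_Iic.mpr hx) (mem_Iic.mpr le_rfl) h
    simp only at h1
    have h2 : Real.exp (-b*0) * deriv u 0 = deriv u 0 := by simp
    rw [h2] at h1
    by_contra hcon
    push_neg at hcon
    have : Real.exp (-b*x) * deriv u x ≤ 0 :=
      mul_nonpos_of_nonneg_of_nonpos (Real.exp_pos _).le hcon
    linarith
  · rw [h]; exact hd0

/-- The derivative of a lower-branch solution is bounded on `[0,∞)`. -/
lemma lower_deriv_bound {v : ℝ → ℝ} {b : ℝ} (hb : 0 < b) (hv : ContDiff ℝ 2 v)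
    (hODE : ODE2 b v (Ioi 0)) (hv01 : ∀ x > (0:ℝ), 0 < v x ∧ v x < 1) :
    ∃ B > (0:ℝ), ∀ x ≥ (0:ℝ), |deriv v x| ≤ B := by
  have hanti : StrictAntiOn (fun t => Real.exp (-b*t) * deriv v t) (Ici 0) := by
    refine g_anti hv (convex_Ici 0) ?_ ?_ <;> rw [interior_Ici]
    · exact hODE
    · exact hv01
  have hdpos := lower_deriv_pos hb hv hODE hv01
  obtain ⟨B₀, hB₀⟩ := (isCompact_Icc (a := (0:ℝ)) (b := 2)).exists_bound_of_continuousOn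
    ((cd2_diff_deriv hv).continuous.continuousOn)
  refine ⟨max B₀ (Real.exp b) + 1, by positivity, fun x hx => ?_⟩
  rcases le_or_gt x 2 with h2 | h2
  · have := hB₀ x ⟨hx, h2⟩
    rw [Real.norm_eq_abs] at this
    have : B₀ ≤ max B₀ (Real.exp b) := le_max_left _ _
    linarith [hB₀ x ⟨hx, h2⟩, Real.norm_eq_abs (deriv v x) ▸ hB₀ x ⟨hx, h2⟩]
  · -- x > 2 : integral trick
    have hd := hdpos x (by linarith)
    rw [abs_of_pos hd]
    have hlb : ∀ t ∈ Icc (x-1) x, Real.exp (-b) * deriv v x ≤ deriv v t := by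
      intro t ht
      have hg : Real.exp (-b*x) * deriv v x ≤ Real.exp (-b*t) * deriv v t := by
        rcases eq_or_lt_of_le ht.2 with h | h
        · rw [h]
        · exact (hanti (mem_Ici.mpr (by linarith [ht.1])) (mem_Ici.mpr (by linarith)) h).le
      have := mul_le_mul_of_nonneg_right hg (Real.exp_pos (b*t)).le
      have heq : Real.exp (-b*t) * deriv v t * Real.exp (b*t) = deriv v t := by
        rw [mul_comm (Real.exp (-b*t)) _, mul_assoc, ← Real.exp_add]; simp
      rw [heq] at this
      calc Real.exp (-b) * deriv v x ≤ Real.exp (-b*x) * Real.exp (b*t) * deriv v x := by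
            rw [← Real.exp_add]
            refine mul_le_mul_of_nonneg_right (Real.exp_le_exp.mpr ?_) hd.le
            have := ht.1; nlinarith
        _ = Real.exp (-b*x) * deriv v x * Real.exp (b*t) := by ring
        _ ≤ deriv v t := this
    have hint : Real.exp (-b) * deriv v x ≤ v x - v (x-1) := by
      rw [ftc_v hv (x₁ := x-1) (x₂ := x)]
      have h1 : (∫ t in (x-1)..x, Real.exp (-b) * deriv v x) ≤ ∫ t in (x-1)..x, deriv v t :=
        intervalIntegral.integral_mono_on (by linarith)
          (intervalIntegrable_const)
          ((cd2_diff_deriv hv).continuous.intervalIntegrable _ _)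
          (fun t ht => hlb t ht)
      rw [intervalIntegral.integral_const] at h1
      have : (x - (x-1)) • (Real.exp (-b) * deriv v x) = Real.exp (-b) * deriv v x := by
        rw [smul_eq_mul]; ring_nf
      linarith [this ▸ h1]
    have hvx : v x < 1 := (hv01 x (by linarith)).2
    have hvx1 : 0 < v (x-1) := (hv01 (x-1) (by linarith)).1
    have h3 : Real.exp (-b) * deriv v x ≤ 1 := by linarith
    have h4 : deriv v x ≤ Real.exp b := by
      have := mul_le_mul_of_nonneg_right h3 (Real.exp_pos b).le
      have heq : Real.exp (-b) * deriv v x * Real.exp b = deriv v x := by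
        rw [mul_comm (Real.exp (-b)) _, mul_assoc, ← Real.exp_add]; simp
      rw [heq, one_mul] at this
      exact this
    have : Real.exp b ≤ max B₀ (Real.exp b) := le_max_right _ _
    linarith

lemma slope_pos_right {g : ℝ → ℝ} {g' x : ℝ} (h : HasDerivAt g g' x) (h0 : g x = 0)
    (hg' : 0 < g') : ∀ᶠ y in nhdsWithin x (Ioi x), 0 < g y := by
  have hs := hasDerivAt_iff_tendsto_slope.mp h
  have h1 : ∀ᶠ y in nhdsWithin x {x}ᶜ, 0 < slope g x y :=
    hs.eventually (eventually_gt_nhds hg')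
  have h2 : nhdsWithin x (Ioi x) ≤ nhdsWithin x {x}ᶜ :=
    nhdsWithin_mono _ (fun y hy => ne_of_gt hy)
  filter_upwards [h2 h1, self_mem_nhdsWithin] with y hy hy2
  have hyx : 0 < y - x := sub_pos.mpr hy2
  have : slope g x y = g y / (y - x) := by rw [slope_def_field, h0]; ring_nf
  rw [this] at hy
  by_contra hcon
  push_neg at hcon
  exact absurd hy (not_lt.mpr (div_nonpos_of_nonpos_of_nonneg hcon hyx.le))

lemma slope_neg_left {g : ℝ → ℝ} {g' x : ℝ} (h : HasDerivAt g g' x) (h0 : g x = 0)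
    (hg' : 0 < g') : ∀ᶠ y in nhdsWithin x (Iio x), g y < 0 := by
  have hs := hasDerivAt_iff_tendsto_slope.mp h
  have h1 : ∀ᶠ y in nhdsWithin x {x}ᶜ, 0 < slope g x y :=
    hs.eventually (eventually_gt_nhds hg')
  have h2 : nhdsWithin x (Iio x) ≤ nhdsWithin x {x}ᶜ :=
    nhdsWithin_mono _ (fun y hy => ne_of_lt hy)
  filter_upwards [h2 h1, self_mem_nhdsWithin] with y hy hy2
  have hyx : y - x < 0 := sub_neg.mpr hy2
  have : slope g x y = g y / (y - x) := by rw [slope_def_field, h0]; ring_nf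
  rw [this] at hy
  by_contra hcon
  push_neg at hcon
  exact absurd hy (not_lt.mpr (div_nonpos_of_nonneg_of_nonpos hcon hyx.le))

/-- If `g` vanishes at `0` and `d`, is continuous on `[0,d]`, and has strictly positive
derivative at each of its zeros, we get a contradiction. -/
lemma crossing {g : ℝ → ℝ} {d : ℝ} (hd : 0 < d) (hc : ContinuousOn g (Icc 0 d))
    (h0 : g 0 = 0) (hgd : g d = 0)
    (hz : ∀ x ∈ Icc 0 d, g x = 0 → ∃ g', HasDerivAt g g' x ∧ 0 < g') : False := by
  obtain ⟨g'0, hg'0, hg'0pos⟩ := hz 0 (left_mem_Icc.mpr hd.le) h0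
  obtain ⟨g'd, hg'd, hg'dpos⟩ := hz d (right_mem_Icc.mpr hd.le) hgd
  -- g > 0 on a right neighborhood of 0
  obtain ⟨ε₁, hε₁, hposr⟩ : ∃ ε > (0:ℝ), ∀ y ∈ Ioo 0 ε, 0 < g y := by
    have := slope_pos_right hg'0 h0 hg'0pos
    rw [eventually_nhdsWithin_iff] at this
    obtain ⟨ε, hε, hball⟩ := Metric.eventually_nhds_iff.mp this
    exact ⟨ε, hε, fun y hy => hball (by
      rw [Real.dist_eq, sub_zero, abs_of_pos hy.1]; exact hy.2) hy.1⟩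
  -- A : set where g < 0
  set A := {x ∈ Icc 0 d | g x < 0} with hA
  have hAne : A.Nonempty := by
    have h1 := slope_neg_left hg'd hgd hg'dpos
    have h2 : Ioo 0 d ∈ nhdsWithin d (Iio d) := Ioo_mem_nhdsLT_of_mem (right_mem_Ioc.mpr hd)
    have : (nhdsWithin d (Iio d)).NeBot := inferInstance
    obtain ⟨y, hy1, hy2⟩ := (h1.and (eventually_of_mem h2 (fun y hy => hy))).exists
    exact ⟨y, ⟨⟨hy2.1.le, hy2.2.le⟩, hy1⟩⟩
  have hAbdd : BddBelow A := ⟨0, fun x hx => hx.1.1⟩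
  set s := sInf A with hs
  have hsmem : s ∈ Icc 0 d := by
    constructor
    · exact le_csInf hAne (fun x hx => hx.1.1)
    · obtain ⟨a, ha⟩ := hAne
      exact (csInf_le hAbdd ha).trans ha.1.2
  have hsge : ∀ x ∈ A, s ≤ x := fun x hx => csInf_le hAbdd hx
  have hApos : ∀ x ∈ A, 0 < x := by
    intro x hx
    rcases lt_or_eq_of_le hx.1.1 with h | h
    · exact h
    · exact absurd (h ▸ hx.2) (by rw [← h, h0]; exact lt_irrefl 0)
  have hspos : 0 < s := by
    by_contra hcon
    push_neg at hcon
    have hs0 : s = 0 := le_antisymm hcon hsmem.1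
    obtain ⟨a, ha, halt⟩ := exists_lt_of_csInf_lt hAne (by rw [← hs] at *; linarith [hε₁] : sInf A < ε₁)
    exact absurd (hposr a ⟨hApos a ha, halt⟩) (not_lt.mpr ha.2.le)
  -- g ≥ 0 on [0, s)
  have hge : ∀ x ∈ Ico 0 s, 0 ≤ g x := by
    intro x hx
    by_contra hcon
    push_neg at hcon
    have : x ∈ A := ⟨⟨hx.1, hx.2.le.trans hsmem.2⟩, hcon⟩
    exact absurd (hsge x this) (not_le.mpr hx.2)
  -- g s ≤ 0
  have hgsle : g s ≤ 0 := by
    by_contra hcon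
    push_neg at hcon
    have hcw : ContinuousWithinAt g (Icc 0 d) s := hc s hsmem
    have hev : ∀ᶠ y in nhdsWithin s (Icc 0 d), 0 < g y :=
      hcw.eventually (eventually_gt_nhds hcon)
    rw [eventually_nhdsWithin_iff] at hev
    obtain ⟨ε, hε, hball⟩ := Metric.eventually_nhds_iff.mp hev
    obtain ⟨a, ha, halt⟩ := exists_lt_of_csInf_lt hAne (by linarith : sInf A < s + ε)
    have hdist : dist a s < ε := by
      rw [Real.dist_eq, abs_of_nonneg (by linarith [hsge a ha] : (0:ℝ) ≤ a - s)]
      linarith [hsge a ha]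
    exact absurd (hball hdist ha.1) (not_lt.mpr ha.2.le)
  -- g s ≥ 0 from the left
  have hgsge : 0 ≤ g s := by
    have hIoo : Ioo 0 s ⊆ Icc 0 d := fun y hy => ⟨hy.1.le, hy.2.le.trans hsmem.2⟩
    have hne : (nhdsWithin s (Ioo 0 s)).NeBot := by
      rw [← mem_closure_iff_nhdsWithin_neBot, closure_Ioo (ne_of_lt hspos)]
      exact right_mem_Icc.mpr hspos.le
    have htd : Filter.Tendsto g (nhdsWithin s (Ioo 0 s)) (nhds (g s)) :=
      (hc s hsmem).mono_left (nhdsWithin_mono _ hIoo)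
    refine ge_of_tendsto htd ?_
    filter_upwards [self_mem_nhdsWithin] with y hy
    exact hge y ⟨hy.1.le, hy.2⟩
  have hgs : g s = 0 := le_antisymm hgsle hgsge
  -- but then g < 0 just left of s, contradiction
  obtain ⟨g's, hg's, hg'spos⟩ := hz s hsmem hgs
  have h1 := slope_neg_left hg's hgs hg'spos
  have h2 : Ioo 0 s ∈ nhdsWithin s (Iio s) := Ioo_mem_nhdsLT_of_mem (right_mem_Ioc.mpr hspos)
  obtain ⟨y, hy1, hy2⟩ := (h1.and (eventually_of_mem h2 (fun y hy => hy))).exists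
  exact absurd (hge y ⟨hy2.1.le, hy2.2⟩) (not_le.mpr hy1)

/-- Local inverse of a function with positive derivative on a compact interval. -/
lemma inverse_exists {ψ : ℝ → ℝ} (hψ : ContDiff ℝ 2 ψ) {α β : ℝ} (hαβ : α < β)
    (hd : ∀ x ∈ Icc α β, 0 < deriv ψ x) :
    ∃ Y : ℝ → ℝ, ∀ s ∈ Ioo (ψ α) (ψ β),
      ψ (Y s) = s ∧ Y s ∈ Ioo α β ∧ HasDerivAt Y (deriv ψ (Y s))⁻¹ s := by
  have hmono : StrictMonoOn ψ (Icc α β) := by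
    refine strictMonoOn_of_deriv_pos (convex_Icc α β) (cd2_diff hψ).continuous.continuousOn ?_
    intro x hx
    rw [interior_Icc] at hx
    exact hd x ⟨hx.1.le, hx.2.le⟩
  have hIVT : Ioo (ψ α) (ψ β) ⊆ ψ '' Ioo α β :=
    intermediate_value_Ioo hαβ.le (cd2_diff hψ).continuous.continuousOn
  classical
  set Y : ℝ → ℝ := fun s => if h : s ∈ Ioo (ψ α) (ψ β) then (hIVT h).choose else 0 with hY
  have hYspec : ∀ s ∈ Ioo (ψ α) (ψ β), Y s ∈ Ioo α β ∧ ψ (Y s) = s := by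
    intro s hs
    rw [hY]; simp only [hs, dif_pos]
    exact ⟨(hIVT hs).choose_spec.1, (hIVT hs).choose_spec.2⟩
  -- order lemma: if ψ x ∈ (ψ a', ψ b') and x ∈ Icc α β then x ∈ (a',b')
  have horder : ∀ {a' b' x : ℝ}, a' ∈ Icc α β → b' ∈ Icc α β → x ∈ Icc α β →
      ψ a' < ψ x → ψ x < ψ b' → a' < x ∧ x < b' := by
    intro a' b' x ha' hb' hx h1 h2
    constructor
    · by_contra hcon
      push_neg at hcon
      rcases eq_or_lt_of_le hcon with h | h
      · rw [h] at h1; exact lt_irrefl _ h1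
      · exact absurd (hmono hx ha' h) (not_lt.mpr h1.le)
    · by_contra hcon
      push_neg at hcon
      rcases eq_or_lt_of_le hcon with h | h
      · rw [h] at h2; exact lt_irrefl _ h2
      · exact absurd (hmono hb' hx h) (not_lt.mpr h2.le)
  have hcont : ∀ s ∈ Ioo (ψ α) (ψ β), ContinuousAt Y s := by
    intro s₀ hs₀
    obtain ⟨hx₀mem, hx₀eq⟩ := hYspec s₀ hs₀
    set x₀ := Y s₀
    rw [Metric.continuousAt_iff]
    intro ε hε
    set a' := max α (x₀ - ε/2) with ha'
    set b' := min β (x₀ + ε/2) with hb'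
    have ha'1 : α ≤ a' := le_max_left _ _
    have hb'1 : b' ≤ β := min_le_left _ _
    have ha'2 : a' < x₀ := max_lt hx₀mem.1 (by linarith)
    have hb'2 : x₀ < b' := lt_min hx₀mem.2 (by linarith)
    have ha'm : a' ∈ Icc α β := ⟨ha'1, by linarith⟩
    have hb'm : b' ∈ Icc α β := ⟨by linarith, hb'1⟩
    have hx₀m : x₀ ∈ Icc α β := ⟨hx₀mem.1.le, hx₀mem.2.le⟩
    have h1 : ψ a' < ψ x₀ := hmono ha'm hx₀m ha'2
    have h2 : ψ x₀ < ψ b' := hmono hx₀m hb'm hb'2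
    refine ⟨min (ψ x₀ - ψ a') (ψ b' - ψ x₀), by simp; constructor <;> linarith, ?_⟩
    intro s hsd
    rw [Real.dist_eq] at hsd
    have habs := abs_lt.mp hsd
    have hs1 : ψ a' < s := by
      have hm := min_le_left (ψ x₀ - ψ a') (ψ b' - ψ x₀)
      linarith [habs.1, hx₀eq]
    have hs2 : s < ψ b' := by
      have hm := min_le_right (ψ x₀ - ψ a') (ψ b' - ψ x₀)
      linarith [habs.2, hx₀eq]
    have hsin : s ∈ Ioo (ψ α) (ψ β) := by
      constructor
      · exact lt_of_le_of_lt (hmono.monotoneOn (left_mem_Icc.mpr hαβ.le) ha'm ha'1) hs1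
      · exact lt_of_lt_of_le hs2 (hmono.monotoneOn hb'm (right_mem_Icc.mpr hαβ.le) hb'1)
    obtain ⟨hYsm, hYse⟩ := hYspec s hsin
    have := horder ha'm hb'm ⟨hYsm.1.le, hYsm.2.le⟩ (by rw [hYse]; exact hs1)
      (by rw [hYse]; exact hs2)
    rw [Real.dist_eq, abs_lt]
    constructor <;> [skip; skip]
    · have := this.1; rw [ha'] at this; have := (max_lt_iff.mp ‹max α (x₀ - ε/2) < Y s›).2; linarith
    · have := this.2; rw [hb'] at this; have := (lt_min_iff.mp ‹Y s < min β (x₀ + ε/2)›).2; linarith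
  refine ⟨Y, fun s hs => ?_⟩
  obtain ⟨hYm, hYe⟩ := hYspec s hs
  refine ⟨hYe, hYm, ?_⟩
  have hdpos : 0 < deriv ψ (Y s) := hd _ ⟨hYm.1.le, hYm.2.le⟩
  refine HasDerivAt.of_local_left_inverse (hcont s hs)
    ((cd2_diff hψ (Y s)).hasDerivAt) (ne_of_gt hdpos) ?_
  filter_upwards [isOpen_Ioo.mem_nhds hs] with y hy
  exact (hYspec y hy).2

section Shift
variable {f : ℝ → ℝ} {c : ℝ}

lemma shift_contDiff (hf : ContDiff ℝ 2 f) : ContDiff ℝ 2 (fun x => f (x + c)) :=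
  hf.comp (contDiff_id.add contDiff_const)

lemma shift_deriv (f : ℝ → ℝ) (c : ℝ) :
    deriv (fun x => f (x + c)) = fun x => deriv f (x + c) :=
  funext (fun x => deriv_comp_add_const f c x)

lemma shift_deriv2 (f : ℝ → ℝ) (c : ℝ) :
    deriv (deriv (fun x => f (x + c))) = fun x => deriv (deriv f) (x + c) := by
  rw [shift_deriv f c]
  exact funext (fun x => deriv_comp_add_const (deriv f) c x)

lemma shift_ODE2 {b : ℝ} {s : Set ℝ} (h : ODE2 b f s) :
    ODE2 b (fun x => f (x + c)) {x | x + c ∈ s} := by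
  intro x hx
  rw [shift_deriv2 f c, shift_deriv f c]
  exact h (x + c) hx

end Shift

/-- Two functions agreeing on `Iic 0` have the same derivative at `0`. -/
lemma deriv_eq_of_eqOn_Iic {f g : ℝ → ℝ} (hf : DifferentiableAt ℝ f 0)
    (hg : DifferentiableAt ℝ g 0) (h : ∀ x ≤ (0:ℝ), f x = g x) :
    deriv f 0 = deriv g 0 := by
  have h1 : HasDerivWithinAt f (deriv f 0) (Iic 0) 0 := hf.hasDerivAt.hasDerivWithinAt
  have h2 : HasDerivWithinAt g (deriv f 0) (Iic 0) 0 := by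
    refine h1.congr (fun x hx => (h x hx).symm) (h 0 le_rfl).symm
  have h3 : HasDerivWithinAt g (deriv g 0) (Iic 0) 0 := hg.hasDerivAt.hasDerivWithinAt
  have hu : UniqueDiffWithinAt ℝ (Iic (0:ℝ)) 0 := uniqueDiffOn_Iic 0 0 self_mem_Iic
  rw [← h2.derivWithin hu, ← h3.derivWithin hu]

lemma deriv_eq_of_eqOn_Ici {f g : ℝ → ℝ} (hf : DifferentiableAt ℝ f 0)
    (hg : DifferentiableAt ℝ g 0) (h : ∀ x ≥ (0:ℝ), f x = g x) :
    deriv f 0 = deriv g 0 := by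
  have h1 : HasDerivWithinAt f (deriv f 0) (Ici 0) 0 := hf.hasDerivAt.hasDerivWithinAt
  have h2 : HasDerivWithinAt g (deriv f 0) (Ici 0) 0 := by
    refine h1.congr (fun x hx => (h x hx).symm) (h 0 le_rfl).symm
  have h3 : HasDerivWithinAt g (deriv g 0) (Ici 0) 0 := hg.hasDerivAt.hasDerivWithinAt
  have hu : UniqueDiffWithinAt ℝ (Ici (0:ℝ)) 0 := uniqueDiffOn_Ici 0 0 self_mem_Ici
  rw [← h2.derivWithin hu, ← h3.derivWithin hu]

end Infra

set_option maxHeartbeats 1000000 in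
/-- The sliding argument: two fast-decaying solutions must have the same junction
value; the scaling infimum `M*` cannot exceed 1. -/
theorem two_branch_fast_decay_unique (bL bU aL aU a₁ a₂ : ℝ)
    (hbL0 : 0 < bL) (hbL : bL < 2) (hbU : 2 ≤ bU) (haL : 0 < aL) (haU : 0 < aU)
    (hcons : aL * bL = aU * bU)
    (ha₁ : 0 < a₁) (ha₂ : a₂ < 1) (hle : a₁ ≤ a₂)
    (φ₁ φ₂ ψ₁ ψ₂ : ℝ → ℝ)
    (h1 : IsTwoBranchStatSol bL bU aL aU a₁ φ₁ φ₂)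
    (h2 : IsTwoBranchStatSol bL bU aL aU a₂ ψ₁ ψ₂)
    (hlim1 : Tendsto φ₁ atTop (nhds 1)) (hlim1' : Tendsto ψ₁ atTop (nhds 1))
    (hlim2 : Tendsto φ₂ atBot (nhds 0)) (hlim2' : Tendsto ψ₂ atBot (nhds 0))
    (hfast1 : ∃ C > (0 : ℝ), ∀ x ≤ (0 : ℝ),
      φ₂ x ≤ C * Real.exp ((bU + Real.sqrt (bU ^ 2 - 4)) / 2 * x))
    (hfast2 : ∃ C > (0 : ℝ), ∀ x ≤ (0 : ℝ),
      ψ₂ x ≤ C * Real.exp ((bU + Real.sqrt (bU ^ 2 - 4)) / 2 * x)) :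
    sInf {M : ℝ | 0 < M ∧ (∀ x ≥ (0 : ℝ), ψ₁ x ≤ M * φ₁ x) ∧
        (∀ x ≤ (0 : ℝ), ψ₂ x ≤ M * φ₂ x)} ≤ 1 ∧ a₁ = a₂ := by
  obtain ⟨hφ₁C, hφ₂C, hODEφ₁', hφ₁01, hODEφ₂', hφ₂01, hφ₁0, hφ₂0, hKφ⟩ := h1
  obtain ⟨hψ₁C, hψ₂C, hODEψ₁', hψ₁01, hODEψ₂', hψ₂01, hψ₁0, hψ₂0, hKψ⟩ := h2
  obtain ⟨C₁, hC₁, hfastφ⟩ := hfast1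
  obtain ⟨C₂, hC₂, hfastψ⟩ := hfast2
  set k := (bU + Real.sqrt (bU ^ 2 - 4)) / 2 with hkdef
  have hsq := Real.sqrt_nonneg (bU ^ 2 - 4)
  have hk2 : bU ≤ 2 * k := by rw [hkdef]; linarith only [hsq]
  have hkpos : 0 < k := by rw [hkdef]; linarith only [hsq, hbU]
  have ha₂0 : 0 < a₂ := lt_of_lt_of_le ha₁ hle
  have ha₁1 : a₁ < 1 := lt_of_le_of_lt hle ha₂
  -- ODE2 forms
  have hOφ₁ : ODE2 bL φ₁ (Ioi 0) := fun x hx => by have := hODEφ₁' x hx; linarith only [this]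
  have hOψ₁ : ODE2 bL ψ₁ (Ioi 0) := fun x hx => by have := hODEψ₁' x hx; linarith only [this]
  have hOφ₂ : ODE2 bU φ₂ (Iio 0) := fun x hx => by have := hODEφ₂' x hx; linarith only [this]
  have hOψ₂ : ODE2 bU ψ₂ (Iio 0) := fun x hx => by have := hODEψ₂' x hx; linarith only [this]
  have hOφ₁c : ODE2 bL φ₁ (Ici 0) := by have := hOφ₁.closure hφ₁C; rwa [closure_Ioi] at this
  have hOψ₁c : ODE2 bL ψ₁ (Ici 0) := by have := hOψ₁.closure hψ₁C; rwa [closure_Ioi] at this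
  have hOφ₂c : ODE2 bU φ₂ (Iic 0) := by have := hOφ₂.closure hφ₂C; rwa [closure_Iio] at this
  have hOψ₂c : ODE2 bU ψ₂ (Iic 0) := by have := hOψ₂.closure hψ₂C; rwa [closure_Iio] at this
  -- derivative positivity
  have hφ₁d : ∀ x ≥ (0:ℝ), 0 < deriv φ₁ x := lower_deriv_pos hbL0 hφ₁C hOφ₁ hφ₁01
  have hψ₁d : ∀ x ≥ (0:ℝ), 0 < deriv ψ₁ x := lower_deriv_pos hbL0 hψ₁C hOψ₁ hψ₁01
  have hφ₂d0 : 0 < deriv φ₂ 0 := by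
    have h1 := mul_pos haL (hφ₁d 0 le_rfl)
    nlinarith only [hKφ, haU, h1]
  have hψ₂d0 : 0 < deriv ψ₂ 0 := by
    have h1 := mul_pos haL (hψ₁d 0 le_rfl)
    nlinarith only [hKψ, haU, h1]
  have hφ₂d : ∀ x ≤ (0:ℝ), 0 < deriv φ₂ x := upper_deriv_pos hφ₂C hOφ₂ hφ₂01 hφ₂d0
  have hψ₂d : ∀ x ≤ (0:ℝ), 0 < deriv ψ₂ x := upper_deriv_pos hψ₂C hOψ₂ hψ₂01 hψ₂d0
  have haLU : aU < aL := by
    have h1 : aU * bL < aU * bU := by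
      have := mul_lt_mul_of_pos_left (lt_of_lt_of_le hbL hbU) haU
      linarith only [this]
    nlinarith only [hcons, h1, hbL0]
  -- positivity on closed rays
  have hφ₂pos : ∀ x ≤ (0:ℝ), 0 < φ₂ x := by
    intro x hx
    rcases lt_or_eq_of_le hx with h | h
    · exact (hφ₂01 x h).1
    · rw [h, hφ₂0]; exact ha₁
  have hψ₂pos : ∀ x ≤ (0:ℝ), 0 < ψ₂ x := by
    intro x hx
    rcases lt_or_eq_of_le hx with h | h
    · exact (hψ₂01 x h).1
    · rw [h, hψ₂0]; exact ha₂0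
  have hφ₁pos : ∀ x ≥ (0:ℝ), 0 < φ₁ x := by
    intro x hx
    rcases lt_or_eq_of_le hx with h | h
    · exact (hφ₁01 x h).1
    · rw [← h, hφ₁0]; exact ha₁
  have hψ₁pos : ∀ x ≥ (0:ℝ), 0 < ψ₁ x := by
    intro x hx
    rcases lt_or_eq_of_le hx with h | h
    · exact (hψ₁01 x h).1
    · rw [← h, hψ₁0]; exact ha₂0
  have hφ₁le : ∀ x ≥ (0:ℝ), φ₁ x ≤ 1 := by
    intro x hx
    rcases lt_or_eq_of_le hx with h | h
    · exact (hφ₁01 x h).2.le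
    · rw [← h, hφ₁0]; linarith
  have hψ₁le : ∀ x ≥ (0:ℝ), ψ₁ x ≤ 1 := by
    intro x hx
    rcases lt_or_eq_of_le hx with h | h
    · exact (hψ₁01 x h).2.le
    · rw [← h, hψ₁0]; linarith
  -- common fast-decay constant
  set C := max C₁ C₂ with hCdef
  have hCpos : 0 < C := lt_of_lt_of_le hC₁ (le_max_left _ _)
  have hfastφ' : ∀ x ≤ (0:ℝ), φ₂ x ≤ C * Real.exp (k * x) := by
    intro x hx
    refine le_trans (hfastφ x hx) ?_
    exact mul_le_mul_of_nonneg_right (le_max_left _ _) (Real.exp_pos _).le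
  have hfastψ' : ∀ x ≤ (0:ℝ), ψ₂ x ≤ C * Real.exp (k * x) := by
    intro x hx
    refine le_trans (hfastψ x hx) ?_
    exact mul_le_mul_of_nonneg_right (le_max_right _ _) (Real.exp_pos _).le
  -- derivative bounds for lower branch
  obtain ⟨Bφ, hBφ0, hBφ⟩ := lower_deriv_bound hbL0 hφ₁C hOφ₁ hφ₁01
  obtain ⟨Bψ, hBψ0, hBψ⟩ := lower_deriv_bound hbL0 hψ₁C hOψ₁ hψ₁01
  -- THE KEY STEP
  have key : a₁ = a₂ := by
    rcases eq_or_lt_of_le hle with h | hlt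
    · exact h
    exfalso
    -- find c < 0 with ψ₂ c = a₁
    obtain ⟨x₃, hx₃⟩ : ∃ x₃, ψ₂ x₃ < a₁ ∧ x₃ < 0 := by
      have h1 : ∀ᶠ x in atBot, ψ₂ x < a₁ := hlim2'.eventually (eventually_lt_nhds ha₁)
      have h2 : ∀ᶠ x in (atBot : Filter ℝ), x < 0 := eventually_lt_atBot 0
      exact (h1.and h2).exists
    obtain ⟨c, hcmem, hc⟩ : ∃ c ∈ Icc x₃ 0, ψ₂ c = a₁ := by
      have := intermediate_value_Icc hx₃.2.le (cd2_diff hψ₂C).continuous.continuousOn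
      exact this ⟨hx₃.1.le, by rw [hψ₂0]; exact hle⟩
    have hcneg : c < 0 := by
      rcases lt_or_eq_of_le hcmem.2 with h | h
      · exact h
      · exfalso; rw [h, hψ₂0] at hc; exact absurd hc (ne_of_gt hlt)
    -- φ₂ coincides with the shift of ψ₂ on the upper branch
    have hwC : ContDiff ℝ 2 (fun x => ψ₂ (x + c)) := shift_contDiff hψ₂C
    have hOw : ODE2 bU (fun x => ψ₂ (x + c)) (Iic 0) := by
      intro x hx
      have hxc : x + c ∈ Iio 0 := by
        simp only [mem_Iio]; have : x ≤ 0 := hx; linarith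
      exact shift_ODE2 hOψ₂ x hxc
    have hwpos : ∀ x ≤ (0:ℝ), 0 < ψ₂ (x + c) := fun x hx => hψ₂pos (x+c) (by linarith)
    have hwb : ∀ x ≤ (0:ℝ), ψ₂ (x + c) ≤ C * Real.exp (k * x) := by
      intro x hx
      refine le_trans (hfastψ' (x+c) (by linarith)) ?_
      have hee : Real.exp (k * (x + c)) ≤ Real.exp (k * x) := by
        refine Real.exp_le_exp.mpr ?_
        have h1 : k * c < 0 := mul_neg_of_pos_of_neg hkpos hcneg
        have h2 : k * (x + c) = k * x + k * c := by ring
        linarith only [h1, h2]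
      exact mul_le_mul_of_nonneg_left hee hCpos.le
    have hw0 : φ₂ 0 = ψ₂ (0 + c) := by rw [hφ₂0, zero_add, hc]
    have hUeq : ∀ x ≤ (0:ℝ), φ₂ x = ψ₂ (x + c) :=
      upper_unique hφ₂C hwC hCpos hk2 hOφ₂c hOw hφ₂pos hwpos hfastφ' hwb hw0
    have hdφ₂c : deriv φ₂ 0 = deriv ψ₂ c := by
      have h := deriv_eq_of_eqOn_Iic (cd2_diff hφ₂C 0) (cd2_diff hwC 0) hUeq
      rw [h, shift_deriv ψ₂ c]
      norm_num
    -- find d > 0 with φ₁ d = a₂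
    obtain ⟨x₄, hx₄⟩ : ∃ x₄, a₂ < φ₁ x₄ ∧ 0 < x₄ := by
      have h1 : ∀ᶠ x in atTop, a₂ < φ₁ x := hlim1.eventually (eventually_gt_nhds ha₂)
      have h2 : ∀ᶠ x in (atTop : Filter ℝ), 0 < x := eventually_gt_atTop 0
      exact (h1.and h2).exists
    obtain ⟨d, hdmem, hφd⟩ : ∃ d ∈ Icc 0 x₄, φ₁ d = a₂ := by
      have := intermediate_value_Icc hx₄.2.le (cd2_diff hφ₁C).continuous.continuousOn
      exact this ⟨by rw [hφ₁0]; exact hle, hx₄.1.le⟩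
    have hdpos : 0 < d := by
      rcases lt_or_eq_of_le hdmem.1 with h | h
      · exact h
      · exfalso; rw [← h, hφ₁0] at hφd; exact absurd hφd (ne_of_lt hlt)
    -- ψ₁ coincides with the shift of φ₁ on the lower branch
    have hvC : ContDiff ℝ 2 (fun x => φ₁ (x + d)) := shift_contDiff hφ₁C
    have hOv : ODE2 bL (fun x => φ₁ (x + d)) (Ici 0) := by
      intro x hx
      have hxd : x + d ∈ Ioi 0 := by
        simp only [mem_Ioi]; have : (0:ℝ) ≤ x := hx; linarith
      exact shift_ODE2 hOφ₁ x hxd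
    have hvpos : ∀ x ≥ (0:ℝ), 0 < φ₁ (x + d) := fun x hx => (hφ₁01 (x+d) (by linarith)).1
    have hvle : ∀ x ≥ (0:ℝ), φ₁ (x + d) ≤ 1 := fun x hx => (hφ₁01 (x+d) (by linarith)).2.le
    have hdv : ∀ x ≥ (0:ℝ), |deriv (fun t => φ₁ (t + d)) x| ≤ max Bφ Bψ := by
      intro x hx
      rw [shift_deriv φ₁ d]
      exact le_trans (hBφ (x+d) (by linarith)) (le_max_left _ _)
    have hv0 : φ₁ (0 + d) = ψ₁ 0 := by rw [zero_add, hφd, hψ₁0]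
    have hLeq : ∀ x ≥ (0:ℝ), φ₁ (x + d) = ψ₁ x :=
      lower_unique hvC hψ₁C hbL0 hOv hOψ₁c hvpos hψ₁pos hvle hψ₁le hdv
        (fun x hx => le_trans (hBψ x hx) (le_max_right _ _)) hv0
    have hdψ₁d : deriv ψ₁ 0 = deriv φ₁ d := by
      have h := deriv_eq_of_eqOn_Ici (cd2_diff hvC 0) (cd2_diff hψ₁C 0) hLeq
      rw [← h, shift_deriv φ₁ d]
      norm_num
    -- build the inverse of ψ₂ on a suitable interval
    have hcontd : ContinuousAt (deriv ψ₂) 0 := (cd2_diff_deriv hψ₂C).continuous.continuousAt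
    obtain ⟨ε, hε, hball⟩ :=
      Metric.eventually_nhds_iff.mp (hcontd.eventually (eventually_gt_nhds hψ₂d0))
    have hβpos : 0 < ε/2 := by positivity
    have hdpos' : ∀ x ∈ Icc (c-1) (ε/2), 0 < deriv ψ₂ x := by
      intro x hx
      rcases le_or_gt x 0 with hle' | hgt
      · exact hψ₂d x hle'
      · exact hball (by rw [Real.dist_eq, sub_zero, abs_of_pos hgt]; linarith [hx.2])
    have hcβ : c - 1 < ε/2 := by linarith
    obtain ⟨Y, hY⟩ := inverse_exists hψ₂C hcβ hdpos'
    have hmono : StrictMonoOn ψ₂ (Icc (c-1) (ε/2)) := by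
      refine strictMonoOn_of_deriv_pos (convex_Icc _ _)
        (cd2_diff hψ₂C).continuous.continuousOn ?_
      intro x hx; rw [interior_Icc] at hx; exact hdpos' x ⟨hx.1.le, hx.2.le⟩
    have hcmem' : c ∈ Icc (c-1) (ε/2) := ⟨by linarith, by linarith⟩
    have h0mem' : (0:ℝ) ∈ Icc (c-1) (ε/2) := ⟨by linarith, by linarith⟩
    have hβmem' : (ε/2) ∈ Icc (c-1) (ε/2) := ⟨by linarith, le_rfl⟩
    have hrange : ∀ s ∈ Icc a₁ a₂, s ∈ Ioo (ψ₂ (c-1)) (ψ₂ (ε/2)) := by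
      intro s hs
      constructor
      · calc ψ₂ (c-1) < ψ₂ c := hmono ⟨le_rfl, by linarith⟩ hcmem' (by linarith)
          _ = a₁ := hc
          _ ≤ s := hs.1
      · calc s ≤ a₂ := hs.2
          _ = ψ₂ 0 := hψ₂0.symm
          _ < ψ₂ (ε/2) := hmono h0mem' hβmem' hβpos
    -- φ₁ maps [0,d] into [a₁,a₂]
    have hφ₁mono : StrictMonoOn φ₁ (Ici 0) := by
      refine strictMonoOn_of_deriv_pos (convex_Ici 0)
        (cd2_diff hφ₁C).continuous.continuousOn ?_
      intro x hx; rw [interior_Ici] at hx; exact hφ₁d x hx.le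
    have hmaps : ∀ x ∈ Icc 0 d, φ₁ x ∈ Icc a₁ a₂ := by
      intro x hx
      constructor
      · rw [← hφ₁0]
        exact hφ₁mono.monotoneOn self_mem_Ici (mem_Ici.mpr hx.1) hx.1
      · rw [← hφd]
        exact hφ₁mono.monotoneOn (mem_Ici.mpr hx.1) (mem_Ici.mpr (hx.1.trans hx.2)) hx.2
    -- junction values of Y
    have hY0 : Y a₁ = c := by
      have hsmem := hrange a₁ (left_mem_Icc.mpr hlt.le)
      obtain ⟨h1, h2, _⟩ := hY a₁ hsmem
      exact hmono.injOn ⟨h2.1.le, h2.2.le⟩ hcmem' (by rw [h1, hc])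
    have hYd2 : Y a₂ = 0 := by
      have hsmem := hrange a₂ (right_mem_Icc.mpr hlt.le)
      obtain ⟨h1, h2, _⟩ := hY a₂ hsmem
      exact hmono.injOn ⟨h2.1.le, h2.2.le⟩ h0mem' (by rw [h1, hψ₂0])
    -- the junction comparison function
    set G := fun x => aU * deriv ψ₂ (Y (φ₁ x)) - aL * deriv φ₁ x with hGdef
    have hGcont : ContinuousOn G (Icc 0 d) := by
      intro x hx
      have hsmem := hrange (φ₁ x) (hmaps x hx)
      have hYc : ContinuousAt Y (φ₁ x) := (hY (φ₁ x) hsmem).2.2.continuousAt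
      refine ContinuousAt.continuousWithinAt ?_
      refine ContinuousAt.sub ?_ ?_
      · exact continuousAt_const.mul
          (((cd2_diff_deriv hψ₂C).continuous.continuousAt).comp
            (hYc.comp ((cd2_diff hφ₁C).continuous.continuousAt)))
      · exact continuousAt_const.mul ((cd2_diff_deriv hφ₁C).continuous.continuousAt)
    have hG0 : G 0 = 0 := by
      show aU * deriv ψ₂ (Y (φ₁ 0)) - aL * deriv φ₁ 0 = 0
      rw [hφ₁0, hY0, ← hdφ₂c]
      linarith [hKφ]
    have hGd0 : G d = 0 := by
      show aU * deriv ψ₂ (Y (φ₁ d)) - aL * deriv φ₁ d = 0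
      rw [hφd, hYd2, ← hdψ₁d]
      linarith [hKψ]
    refine crossing hdpos hGcont hG0 hGd0 ?_
    intro x hx hGx
    have hsIcc := hmaps x hx
    have hsmem := hrange (φ₁ x) hsIcc
    obtain ⟨hYe, hYm, hYdd⟩ := hY (φ₁ x) hsmem
    have hyxle : Y (φ₁ x) ≤ 0 := by
      by_contra hcon
      push_neg at hcon
      have := hmono h0mem' ⟨hYm.1.le, hYm.2.le⟩ hcon
      rw [hψ₂0, hYe] at this
      linarith [hsIcc.2]
    have hQpos : 0 < deriv ψ₂ (Y (φ₁ x)) := hψ₂d _ hyxle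
    have hPpos : 0 < deriv φ₁ x := hφ₁d x hx.1
    have hφ₁x : HasDerivAt φ₁ (deriv φ₁ x) x := (cd2_diff hφ₁C x).hasDerivAt
    have hYcomp : HasDerivAt (fun t => Y (φ₁ t)) ((deriv ψ₂ (Y (φ₁ x)))⁻¹ * deriv φ₁ x) x :=
      HasDerivAt.comp x hYdd hφ₁x
    have hD2 : HasDerivAt (deriv ψ₂) (deriv (deriv ψ₂) (Y (φ₁ x))) (Y (φ₁ x)) :=
      (cd2_diff_deriv hψ₂C _).hasDerivAt
    have hQcomp : HasDerivAt (fun t => deriv ψ₂ (Y (φ₁ t)))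
        (deriv (deriv ψ₂) (Y (φ₁ x)) * ((deriv ψ₂ (Y (φ₁ x)))⁻¹ * deriv φ₁ x)) x :=
      by have h := hD2.comp x hYcomp; exact h
    have hP2 : HasDerivAt (deriv φ₁) (deriv (deriv φ₁) x) x := (cd2_diff_deriv hφ₁C x).hasDerivAt
    have hGder : HasDerivAt G
        (aU * (deriv (deriv ψ₂) (Y (φ₁ x)) * ((deriv ψ₂ (Y (φ₁ x)))⁻¹ * deriv φ₁ x))
          - aL * deriv (deriv φ₁) x) x :=
      (hQcomp.const_mul aU).sub (hP2.const_mul aL)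
    refine ⟨_, hGder, ?_⟩
    have hODEy : deriv (deriv ψ₂) (Y (φ₁ x))
        = bU * deriv ψ₂ (Y (φ₁ x)) - ψ₂ (Y (φ₁ x)) + ψ₂ (Y (φ₁ x)) ^ 2 := hOψ₂c _ hyxle
    have hODEx : deriv (deriv φ₁) x = bL * deriv φ₁ x - φ₁ x + φ₁ x ^ 2 := hOφ₁c x hx.1
    rw [hODEy, hODEx, hYe]
    have hGx' : aU * deriv ψ₂ (Y (φ₁ x)) = aL * deriv φ₁ x := by
      have : aU * deriv ψ₂ (Y (φ₁ x)) - aL * deriv φ₁ x = 0 := hGx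
      linarith
    have hs01 : 0 < φ₁ x ∧ φ₁ x < 1 :=
      ⟨lt_of_lt_of_le ha₁ hsIcc.1, lt_of_le_of_lt hsIcc.2 ha₂⟩
    set P := deriv φ₁ x with hPdef
    set Q := deriv ψ₂ (Y (φ₁ x)) with hQdef
    set s := φ₁ x with hsdef
    have hQne : Q ≠ 0 := ne_of_gt hQpos
    have h2 : 0 < aU * (bU*Q - s + s^2) * P - aL * (bL*P - s + s^2) * Q := by
      have e1 : aU * (bU*Q - s + s^2) * P - aL * (bL*P - s + s^2) * Q
          = (s - s^2) * (aL*Q - aU*P) + (aU*bU - aL*bL) * (Q*P) := by ring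
      have e2 : aU*bU - aL*bL = 0 := by linarith
      have e3 : 0 < aL*Q - aU*P := by
        have h1 : 0 < (aL - aU) * (aL + aU) * Q :=
          mul_pos (mul_pos (sub_pos.mpr haLU) (by linarith only [haL, haU])) hQpos
        nlinarith only [hGx', h1, haL, haU]
      have e4 : 0 < s - s^2 := by
        have h1 := mul_pos hs01.1 (sub_pos.mpr hs01.2)
        nlinarith only [h1]
      calc (0:ℝ) < (s - s^2) * (aL*Q - aU*P) := mul_pos e4 e3
        _ = (s - s^2) * (aL*Q - aU*P) + (aU*bU - aL*bL) * (Q*P) := by rw [e2]; ring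
        _ = _ := e1.symm
    have heq : aU * ((bU*Q - s + s^2) * (Q⁻¹ * P)) - aL * (bL*P - s + s^2)
        = (aU * (bU*Q - s + s^2) * P - aL * (bL*P - s + s^2) * Q) / Q := by
      field_simp
    rw [heq]
    exact div_pos h2 hQpos
  refine ⟨?_, key⟩
  have hψ₂eqφ₂ : ∀ x ≤ (0:ℝ), φ₂ x = ψ₂ x :=
    upper_unique hφ₂C hψ₂C hCpos hk2 hOφ₂c hOψ₂c hφ₂pos hψ₂pos hfastφ' hfastψ'
      (by rw [hφ₂0, hψ₂0, key])
  have hψ₁eqφ₁ : ∀ x ≥ (0:ℝ), φ₁ x = ψ₁ x :=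
    lower_unique hφ₁C hψ₁C hbL0 hOφ₁c hOψ₁c hφ₁pos hψ₁pos hφ₁le hψ₁le
      (fun x hx => le_trans (hBφ x hx) (le_max_left Bφ Bψ))
      (fun x hx => le_trans (hBψ x hx) (le_max_right Bφ Bψ))
      (by rw [hφ₁0, hψ₁0, key])
  refine csInf_le ⟨0, fun M hM => hM.1.le⟩ ?_
  refine ⟨one_pos, fun x hx => ?_, fun x hx => ?_⟩
  · rw [one_mul, ← hψ₁eqφ₁ x hx]
  · rw [one_mul, ← hψ₂eqφ₂ x hx]
end
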